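/- arXiv:1611.06942 — 6 statements merged into one kernel-verified Lean document; each statement's English description precedes it below -/
import Mathlib

section
/- Let α ∈ (0,1) and let w ∈ ℂ with w ∉ 2πℤ. Then the symmetric partial sums of the series ∑_{n∈ℤ} e^{2πiαn}/(w − 2πn) converge, and lim_{N→∞} ∑_{n=−N}^{N} e^{2πiαn}/(w − 2πn) = i e^{iαw}/(e^{iw} − 1). -/
open Filter

open Complex MeasureTheory Real FourierTransform intervalIntegral


lemma dirichlet_geom (u : ℂ) (hu : u ≠ 0) (N : ℕ) :
    (u - u⁻¹) * ∑ n ∈ Finset.Icc (-(N : ℤ)) (N : ℤ), u ^ (2 * n) =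
      u ^ (2 * (N : ℤ) + 1) - u ^ (-(2 * (N : ℤ) + 1)) := by
  induction N with
  | zero => simp [zpow_neg]
  | succ N ih =>
    have hins : Finset.Icc (-(N + 1 : ℤ)) ((N : ℤ) + 1) =
        insert (-(N + 1 : ℤ)) (insert ((N : ℤ) + 1) (Finset.Icc (-(N : ℤ)) (N : ℤ))) := by
      ext x; simp; omega
    push_cast
    rw [hins, Finset.sum_insert (by simp; omega), Finset.sum_insert (by simp)]
    rw [mul_add, mul_add, ih]
    rw [show (2 : ℤ) * (-(N + 1)) = -(2 * N + 1) + (-1) by ring,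
      show (2 : ℤ) * (N + 1) = (2 * N + 1) + 1 by ring,
      show -(2 * (N : ℤ) + 1 + 1 + 1) = -(2 * N + 1) + (-1) + (-1) by ring]
    simp only [zpow_add₀ hu, zpow_one, zpow_neg_one]
    field_simp
    ring

lemma sin_lb {s : ℝ} (hs : |s| ≤ 1) : 2 * min |s| (1 - |s|) ≤ |Real.sin (π * s)| := by
  have key : ∀ x : ℝ, 0 ≤ x → x ≤ 1 → 2 * min x (1 - x) ≤ Real.sin (π * x) := by
    intro x hx0 hx1
    rcases le_total x (1/2) with h | h
    · have h1 : 2 * min x (1-x) ≤ 2 * x := by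
        have : min x (1-x) ≤ x := min_le_left _ _
        linarith
      refine h1.trans ?_
      have := Real.mul_le_sin (x := π * x) (by positivity) (by nlinarith [Real.pi_pos])
      have hπ : (2 / π) * (π * x) = 2 * x := by field_simp
      linarith [this, hπ ▸ this]
    · have heq : Real.sin (π * x) = Real.sin (π * (1 - x)) := by
        rw [show π * (1-x) = π - π * x by ring, Real.sin_pi_sub]
      rw [heq]
      have h1 : 2 * min x (1-x) ≤ 2 * (1-x) := by
        have : min x (1-x) ≤ 1-x := min_le_right _ _
        linarith
      refine h1.trans ?_
      have := Real.mul_le_sin (x := π * (1-x)) (by nlinarith [Real.pi_pos]) (by nlinarith [Real.pi_pos])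
      have hπ : (2 / π) * (π * (1-x)) = 2 * (1-x) := by field_simp
      linarith [this]
  rcases le_total 0 s with h | h
  · rw [_root_.abs_of_nonneg h] at hs ⊢
    exact (key s h hs).trans (le_abs_self _)
  · rw [_root_.abs_of_nonpos h] at hs ⊢
    have := key (-s) (by linarith) hs
    have hmin : (0:ℝ) ≤ min (-s) (1 - -s) := le_min (by linarith) (by linarith)
    calc 2 * min (-s) (1 - -s) ≤ Real.sin (π * -s) := this
      _ = |Real.sin (π * -s)| := (_root_.abs_of_nonneg (by linarith)).symm
      _ = |Real.sin (π * s)| := by rw [mul_neg, Real.sin_neg, abs_neg]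

lemma core (α : ℝ) (hα0 : 0 < α) (hα1 : α < 1) (w : ℂ) :
    Tendsto (fun N : ℕ => ∫ t in (0:ℝ)..1,
      (Complex.exp (I*w*t) - Complex.exp (I*w*α)) *
        ∑ n ∈ Finset.Icc (-(N : ℤ)) (N : ℤ),
          Complex.exp (2*(Real.pi:ℂ)*I*(n:ℂ)*((α:ℂ) - (t:ℂ))))
      atTop (nhds 0) := by
  -- definitions
  set θ : ℝ → ℝ := fun t => π * (α - t) with hθ
  set u : ℝ → ℂ := fun t => Complex.exp ((θ t : ℂ) * I) with hu
  set num : ℝ → ℂ := fun t => Complex.exp (I*w*t) - Complex.exp (I*w*α) with hnum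
  set g : ℝ → ℂ := fun t => num t / (u t - (u t)⁻¹) with hg
  have hu0 : ∀ t, u t ≠ 0 := fun t => Complex.exp_ne_zero _
  have hden_eq : ∀ t, u t - (u t)⁻¹ = ((2 * Real.sin (θ t) : ℝ) : ℂ) * I := by
    intro t
    rw [hu]
    simp only
    rw [← Complex.exp_neg, ← neg_mul, Complex.exp_mul_I, Complex.exp_mul_I,
      Complex.cos_neg, Complex.sin_neg]
    push_cast [← Complex.ofReal_sin]
    ring
  have hsin_ne : ∀ t : ℝ, t ∈ Set.Ioc (0:ℝ) 1 → t ≠ α → Real.sin (θ t) ≠ 0 := by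
    intro t ht hne h
    rw [hθ] at h
    simp only at h
    rw [Real.sin_eq_zero_iff] at h
    obtain ⟨n, hn⟩ := h
    have hne' : π ≠ 0 := Real.pi_ne_zero
    have hnr : (n : ℝ) = α - t := by
      refine mul_right_cancel₀ hne' ?_
      linear_combination hn
    have h1 : (-1 : ℝ) < n := by rw [hnr]; linarith [ht.2]
    have h2 : (n : ℝ) < 1 := by rw [hnr]; linarith [ht.1]
    have hn0 : n = 0 := by
      have h1' : (-1 : ℤ) < n := by exact_mod_cast h1
      have h2' : n < 1 := by exact_mod_cast h2
      omega
    rw [hn0] at hnr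
    simp at hnr
    exact hne (by linarith)
  have hd_ne : ∀ t : ℝ, t ∈ Set.Ioc (0:ℝ) 1 → t ≠ α → u t - (u t)⁻¹ ≠ 0 := by
    intro t ht hne
    rw [hden_eq t]
    exact mul_ne_zero (by exact_mod_cast (by simpa using hsin_ne t ht hne : (2:ℝ) * Real.sin (θ t) ≠ 0)) I_ne_zero
  -- pointwise kernel identity
  have key : ∀ N : ℕ, ∀ t : ℝ, t ∈ Set.Ioc (0:ℝ) 1 → t ≠ α →
      num t * (∑ n ∈ Finset.Icc (-(N : ℤ)) (N : ℤ),
          Complex.exp (2*(Real.pi:ℂ)*I*(n:ℂ)*((α:ℂ) - (t:ℂ)))) =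
        g t * Complex.exp ((((2*(N:ℝ)+1) * θ t : ℝ) : ℂ) * I) -
        g t * Complex.exp (((-((2*(N:ℝ)+1) * θ t) : ℝ) : ℂ) * I) := by
    intro N t ht hne
    have hker : ∀ n : ℤ, Complex.exp (2*(Real.pi:ℂ)*I*(n:ℂ)*((α:ℂ) - (t:ℂ))) = u t ^ (2*n) := by
      intro n
      rw [hu]
      simp only [← Complex.exp_int_mul]
      congr 1
      simp only [hθ]
      push_cast
      ring
    simp only [hker]
    have hd := hd_ne t ht hne
    have hgeo := dirichlet_geom (u t) (hu0 t) N
    have hsum : (∑ n ∈ Finset.Icc (-(N : ℤ)) (N : ℤ), u t ^ (2*n)) =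
        (u t ^ (2*(N:ℤ)+1) - u t ^ (-(2*(N:ℤ)+1))) / (u t - (u t)⁻¹) := by
      rw [eq_div_iff hd]
      linear_combination hgeo
    rw [hsum]
    have hA : u t ^ (2*(N:ℤ)+1) = Complex.exp ((((2*(N:ℝ)+1) * θ t : ℝ) : ℂ) * I) := by
      rw [hu]
      simp only [← Complex.exp_int_mul]
      congr 1
      push_cast
      ring
    have hB : u t ^ (-(2*(N:ℤ)+1)) = Complex.exp (((-((2*(N:ℝ)+1) * θ t) : ℝ) : ℂ) * I) := by
      rw [hu]
      simp only [← Complex.exp_int_mul]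
      congr 1
      push_cast
      ring
    rw [hA, hB, hg]
    simp only
    field_simp
  -- measurability of g
  have hucont : Continuous u := by
    rw [hu]; simp only [hθ]; fun_prop
  have hnumcont : Continuous num := by
    rw [hnum]; fun_prop
  have hgmeas : Measurable g := by
    rw [hg]
    exact hnumcont.measurable.div (hucont.measurable.sub hucont.measurable.inv)
  -- bound on g
  set m : ℝ := max α (1 - α) with hm
  have hm1 : m < 1 := by
    rw [hm]; simp only [max_lt_iff]; constructor <;> linarith
  have hm0 : 0 < 1 - m := by linarith
  set L : ℝ := ‖w‖ * Real.exp ‖w‖ with hL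
  have hL0 : 0 ≤ L := by positivity
  set C : ℝ := L / (4 * (1 - m)) with hC
  have hC0 : 0 ≤ C := by positivity
  have hnumbdd : ∀ t ∈ Set.Icc (0:ℝ) 1, ‖num t‖ ≤ L * |α - t| := by
    intro t ht
    have hder : ∀ y ∈ Set.Icc (0:ℝ) 1, HasDerivWithinAt (fun s : ℝ => Complex.exp (I*w*s))
        (I*w*Complex.exp (I*w*y)) (Set.Icc 0 1) y := by
      intro y _
      have h1 : HasDerivAt (fun s : ℝ => I*w*(s:ℂ)) (I*w) y := by
        simpa using ((hasDerivAt_id (y:ℂ)).const_mul (I*w)).comp_ofReal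
      simpa [mul_comm, Function.comp_def] using ((Complex.hasDerivAt_exp (I*w*y)).comp y h1).hasDerivWithinAt
    have hbound : ∀ y ∈ Set.Icc (0:ℝ) 1, ‖I*w*Complex.exp (I*w*y)‖ ≤ L := by
      intro y hy
      rw [hL, norm_mul, norm_mul, Complex.norm_I, one_mul]
      refine mul_le_mul_of_nonneg_left ?_ (norm_nonneg w)
      rw [Complex.norm_exp]
      refine Real.exp_le_exp.2 ?_
      calc (I*w*y).re ≤ |(I*w*(y:ℂ)).re| := le_abs_self _
        _ ≤ ‖I*w*(y:ℂ)‖ := Complex.abs_re_le_norm _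
        _ = ‖w‖ * |y| := by simp
        _ ≤ ‖w‖ * 1 := by
            refine mul_le_mul_of_nonneg_left ?_ (norm_nonneg w)
            rw [abs_le]; constructor <;> [linarith [hy.1]; linarith [hy.2]]
        _ = ‖w‖ := mul_one _
    have := (convex_Icc (0:ℝ) 1).norm_image_sub_le_of_norm_hasDerivWithin_le hder hbound
      (Set.mem_Icc.2 ⟨le_of_lt hα0, le_of_lt hα1⟩) ht
    rw [hnum]
    simp only
    refine this.trans (le_of_eq ?_)
    rw [show ‖t - α‖ = |α - t| by rw [Real.norm_eq_abs, abs_sub_comm]]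
  have hgbdd : ∀ t ∈ Set.Ioc (0:ℝ) 1, ‖g t‖ ≤ C := by
    intro t ht
    by_cases hne : t = α
    · rw [hg]
      simp only
      rw [hnum]
      simp only [hne, sub_self, zero_div, norm_zero]
      exact hC0
    · set x : ℝ := |α - t| with hx
      have hx0 : 0 < x := by rw [hx]; rw [abs_pos]; intro h; exact hne (by linarith [sub_eq_zero.mp h])
      have hxm : x ≤ m := by
        rw [hx, abs_le']
        constructor
        · exact le_trans (by linarith [ht.1]) (le_max_left _ _)
        · exact le_trans (by linarith [ht.2]) (le_max_right _ _)
      have hx1 : x ≤ 1 := hxm.trans (le_of_lt hm1)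
      -- denominator lower bound
      have hminlb : (1 - m) * x ≤ min x (1 - x) := by
        rcases le_total x (1 - x) with h | h
        · rw [min_eq_left h]; nlinarith
        · rw [min_eq_right h]; nlinarith
      have hsin : 2 * ((1 - m) * x) ≤ |Real.sin (θ t)| := by
        have h1 : |α - t| ≤ 1 := hx1
        have := sin_lb (s := α - t) h1
        rw [hθ]
        simp only
        refine le_trans ?_ this
        have : (1 - m) * x ≤ min |α - t| (1 - |α - t|) := by rw [← hx]; exact hminlb
        linarith
      have hdenlb : 4 * (1 - m) * x ≤ ‖u t - (u t)⁻¹‖ := by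
        rw [hden_eq t, norm_mul, Complex.norm_I, mul_one, Complex.norm_real,
          Real.norm_eq_abs, abs_mul]
        rw [show |(2:ℝ)| = 2 by norm_num]
        linarith
      have hdenpos : 0 < ‖u t - (u t)⁻¹‖ := lt_of_lt_of_le (by positivity) hdenlb
      rw [hg]
      simp only [norm_div]
      rw [div_le_iff₀ hdenpos]
      calc ‖num t‖ ≤ L * x := hnumbdd t (Set.mem_Icc.2 ⟨le_of_lt ht.1, ht.2⟩)
        _ = C * (4 * (1 - m) * x) := by rw [hC]; field_simp
        _ ≤ C * ‖u t - (u t)⁻¹‖ := by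
            exact mul_le_mul_of_nonneg_left hdenlb hC0
  -- integrability
  have hint : ∀ h : ℝ → ℂ, Measurable h → (∀ t, ‖h t‖ ≤ 1) →
      IntervalIntegrable (fun t => g t * h t) volume 0 1 := by
    intro h hhm hh1
    rw [intervalIntegrable_iff_integrableOn_Ioc_of_le zero_le_one]
    refine Measure.integrableOn_of_bounded (M := C) measure_Ioc_lt_top.ne
      ((hgmeas.mul hhm).aestronglyMeasurable) ?_
    filter_upwards [ae_restrict_mem measurableSet_Ioc] with t ht
    rw [norm_mul]
    calc ‖g t‖ * ‖h t‖ ≤ C * 1 := mul_le_mul (hgbdd t ht) (hh1 t) (norm_nonneg _) hC0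
      _ = C := mul_one _
  -- the Fourier transform connection
  set G : ℝ → ℂ := (Set.Ioc (0:ℝ) 1).indicator g with hG
  have hFour : ∀ c : ℝ, (∫ t in (0:ℝ)..1, g t * Complex.exp (((-2*π*t*c : ℝ) : ℂ) * I)) = 𝓕 G c := by
    intro c
    rw [Real.fourier_real_eq_integral_exp_smul]
    rw [intervalIntegral.integral_of_le zero_le_one]
    rw [← MeasureTheory.integral_indicator measurableSet_Ioc]
    congr 1
    ext v
    by_cases hv : v ∈ Set.Ioc (0:ℝ) 1 <;>
      simp [hG, Set.indicator_of_mem, Set.indicator_of_notMem, hv, smul_eq_mul, mul_comm]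
  have hRL : Tendsto (𝓕 G) (cocompact ℝ) (nhds 0) := Real.zero_at_infty_fourier G
  have hleT : (atTop : Filter ℝ) ≤ cocompact ℝ := by
    rw [cocompact_eq_atBot_atTop]; exact le_sup_right
  have hleB : (atBot : Filter ℝ) ≤ cocompact ℝ := by
    rw [cocompact_eq_atBot_atTop]; exact le_sup_left
  have hmono : Tendsto (fun N : ℕ => ((2*(N:ℝ)+1)/2 : ℝ)) atTop atTop :=
    Filter.tendsto_atTop_mono (fun N => by push_cast; linarith) tendsto_natCast_atTop_atTop
  have hseqP : Tendsto (fun N : ℕ => ((2*(N:ℝ)+1)/2 : ℝ)) atTop (cocompact ℝ) :=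
    hmono.mono_right hleT
  have hseqQ : Tendsto (fun N : ℕ => (-((2*(N:ℝ)+1)/2) : ℝ)) atTop (cocompact ℝ) :=
    (Filter.tendsto_neg_atBot_iff.mpr hmono).mono_right hleB
  -- P and Q tend to zero
  have hPQ : ∀ (σ : ℝ) (hσ : σ = 1 ∨ σ = -1), ∀ N : ℕ,
      (∫ t in (0:ℝ)..1, g t * Complex.exp (((σ * ((2*(N:ℝ)+1) * θ t) : ℝ) : ℂ) * I)) =
        Complex.exp (((σ * (2*(N:ℝ)+1) * π * α : ℝ) : ℂ) * I) * 𝓕 G (σ * ((2*(N:ℝ)+1)/2)) := by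
    intro σ hσ N
    rw [← hFour]
    rw [← intervalIntegral.integral_const_mul]
    apply intervalIntegral.integral_congr
    intro t _
    simp only
    rw [hθ]
    simp only
    rw [show ((σ * ((2*(N:ℝ)+1) * (π * (α - t))) : ℝ) : ℂ) * I =
        ((σ * (2*(N:ℝ)+1) * π * α : ℝ) : ℂ) * I + ((-2*π*t*(σ * ((2*(N:ℝ)+1)/2)) : ℝ) : ℂ) * I by
      push_cast; ring]
    rw [Complex.exp_add]
    ring
  have hPtend : Tendsto (fun N : ℕ =>
      ∫ t in (0:ℝ)..1, g t * Complex.exp ((((2*(N:ℝ)+1) * θ t : ℝ) : ℂ) * I)) atTop (nhds 0) := by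
    refine squeeze_zero_norm (fun N => ?_) (by simpa using (hRL.comp hseqP).norm)
    have := hPQ 1 (Or.inl rfl) N
    simp only [one_mul] at this
    rw [this, norm_mul, Complex.norm_exp_ofReal_mul_I, one_mul]
  have hQtend : Tendsto (fun N : ℕ =>
      ∫ t in (0:ℝ)..1, g t * Complex.exp (((-((2*(N:ℝ)+1) * θ t) : ℝ) : ℂ) * I)) atTop (nhds 0) := by
    refine squeeze_zero_norm (fun N => ?_) (by simpa using (hRL.comp hseqQ).norm)
    have := hPQ (-1) (Or.inr rfl) N
    simp only [neg_one_mul, one_mul, neg_mul] at this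
    rw [this, norm_mul, Complex.norm_exp_ofReal_mul_I, one_mul]
  -- rewrite the integral via ae congruence
  have hae : ∀ᵐ t : ℝ, t ≠ α := by
    rw [MeasureTheory.ae_iff]
    convert Real.volume_singleton (a := α) using 2
    ext x; simp
  have hcongr : ∀ N : ℕ, (∫ t in (0:ℝ)..1,
      num t * (∑ n ∈ Finset.Icc (-(N : ℤ)) (N : ℤ),
          Complex.exp (2*(Real.pi:ℂ)*I*(n:ℂ)*((α:ℂ) - (t:ℂ))))) =
      (∫ t in (0:ℝ)..1, g t * Complex.exp ((((2*(N:ℝ)+1) * θ t : ℝ) : ℂ) * I)) -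
      (∫ t in (0:ℝ)..1, g t * Complex.exp (((-((2*(N:ℝ)+1) * θ t) : ℝ) : ℂ) * I)) := by
    intro N
    rw [← intervalIntegral.integral_sub
      (hint _ (by fun_prop) (fun t => le_of_eq (by rw [Complex.norm_exp_ofReal_mul_I])))
      (hint _ (by fun_prop) (fun t => le_of_eq (by rw [Complex.norm_exp_ofReal_mul_I])))]
    apply intervalIntegral.integral_congr_ae
    filter_upwards [hae] with t ht htm
    rw [Set.uIoc_of_le zero_le_one] at htm
    exact key N t htm ht
  refine Tendsto.congr (fun N => (hcongr N).symm) ?_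
  simpa using hPtend.sub hQtend

lemma termA (w : ℂ) (α : ℝ) (n : ℤ) (hn : w - 2*(Real.pi:ℂ)*n ≠ 0) :
    ∫ t in (0:ℝ)..1, Complex.exp (I*w*t) * Complex.exp (2*(Real.pi:ℂ)*I*n*((α:ℂ) - t)) =
      Complex.exp (2*(Real.pi:ℂ)*I*(α:ℂ)*n) * (Complex.exp (I*w) - 1) / (I*(w - 2*(Real.pi:ℂ)*n)) := by
  set c : ℂ := I*(w - 2*(Real.pi:ℂ)*n) with hc
  have hcne : c ≠ 0 := mul_ne_zero I_ne_zero hn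
  have h1 : ∀ t : ℝ, Complex.exp (I*w*t) * Complex.exp (2*(Real.pi:ℂ)*I*n*((α:ℂ) - t)) =
      Complex.exp (2*(Real.pi:ℂ)*I*(α:ℂ)*n) * Complex.exp (c * t) := by
    intro t
    rw [← Complex.exp_add, ← Complex.exp_add]
    congr 1
    rw [hc]; ring
  simp_rw [h1]
  rw [intervalIntegral.integral_const_mul, integral_exp_mul_complex hcne]
  have hec : Complex.exp (c * ((1:ℝ):ℂ)) = Complex.exp (I * w) := by
    rw [show ((1:ℝ):ℂ) = 1 by norm_num, mul_one, hc,
      show I*(w - 2*(Real.pi:ℂ)*n) = I*w + (-n : ℤ) * (2*(Real.pi:ℂ)*I) by push_cast; ring,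
      Complex.exp_add, Complex.exp_int_mul_two_pi_mul_I, mul_one]
  rw [show ((0:ℝ):ℂ) = 0 by norm_num, hec, mul_zero, Complex.exp_zero]
  ring

lemma intD (α : ℝ) (n : ℤ) (hn : n ≠ 0) :
    ∫ t in (0:ℝ)..1, Complex.exp (2*(Real.pi:ℂ)*I*n*((α:ℂ) - t)) = 0 := by
  set c : ℂ := -(2*(Real.pi:ℂ)*I*n) with hc
  have hcne : c ≠ 0 := by
    rw [hc, neg_ne_zero]
    refine mul_ne_zero (mul_ne_zero (mul_ne_zero two_ne_zero ?_) I_ne_zero) ?_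
    · exact_mod_cast Real.pi_ne_zero
    · exact_mod_cast hn
  have h1 : ∀ t : ℝ, Complex.exp (2*(Real.pi:ℂ)*I*n*((α:ℂ) - t)) =
      Complex.exp (2*(Real.pi:ℂ)*I*n*(α:ℂ)) * Complex.exp (c * t) := by
    intro t
    rw [← Complex.exp_add]
    congr 1
    rw [hc]; ring
  simp_rw [h1]
  rw [intervalIntegral.integral_const_mul, integral_exp_mul_complex hcne]
  have hec : Complex.exp (c * ((1:ℝ):ℂ)) = 1 := by
    rw [show ((1:ℝ):ℂ) = 1 by norm_num, mul_one, hc,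
      show -(2*(Real.pi:ℂ)*I*n) = (-n : ℤ) * (2*(Real.pi:ℂ)*I) by push_cast; ring,
      Complex.exp_int_mul_two_pi_mul_I]
  rw [show ((0:ℝ):ℂ) = 0 by norm_num, hec, mul_zero, Complex.exp_zero]
  simp

/-- For `α ∈ (0,1)` and `w ∈ ℂ` with `w ∉ 2πℤ`, the symmetric partial sums of
`∑_{n∈ℤ} e^{2πiαn}/(w − 2πn)` converge to `i e^{iαw}/(e^{iw} − 1)`. -/
theorem sum_exp_div_linear (α : ℝ) (hα0 : 0 < α) (hα1 : α < 1) (w : ℂ)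
    (hw : ∀ n : ℤ, w ≠ 2 * (Real.pi : ℂ) * (n : ℂ)) :
    Tendsto
      (fun N : ℕ => ∑ n ∈ Finset.Icc (-(N : ℤ)) (N : ℤ),
        Complex.exp (2 * (Real.pi : ℂ) * Complex.I * (α : ℂ) * (n : ℂ)) /
          (w - 2 * (Real.pi : ℂ) * (n : ℂ)))
      atTop
      (nhds (Complex.I * Complex.exp (Complex.I * (α : ℂ) * w) /
        (Complex.exp (Complex.I * w) - 1))) := by
  have hwn : ∀ n : ℤ, w - 2*(Real.pi:ℂ)*n ≠ 0 := fun n h => hw n (sub_eq_zero.mp h)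
  have hE1 : Complex.exp (I*w) - 1 ≠ 0 := by
    intro h
    obtain ⟨n, hn⟩ := Complex.exp_eq_one_iff.mp (sub_eq_zero.mp h)
    exact hw n (mul_left_cancel₀ I_ne_zero (by rw [hn]; push_cast; ring))
  set K : ℂ := I / (Complex.exp (I*w) - 1) with hK
  set D : ℕ → ℝ → ℂ := fun N t => ∑ n ∈ Finset.Icc (-(N:ℤ)) (N:ℤ),
    Complex.exp (2*(Real.pi:ℂ)*I*(n:ℂ)*((α:ℂ) - (t:ℂ))) with hD
  have hswap : ∀ (N : ℕ) (b : ℂ), (∫ t in (0:ℝ)..1, b * D N t) =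
      ∑ n ∈ Finset.Icc (-(N:ℤ)) (N:ℤ), ∫ t in (0:ℝ)..1,
        b * Complex.exp (2*(Real.pi:ℂ)*I*(n:ℂ)*((α:ℂ) - (t:ℂ))) := by
    intro N b
    rw [hD]
    simp only [Finset.mul_sum]
    exact intervalIntegral.integral_finset_sum
      (fun n _ => (by fun_prop : Continuous fun t : ℝ =>
        b * Complex.exp (2*(Real.pi:ℂ)*I*(n:ℂ)*((α:ℂ) - (t:ℂ)))).intervalIntegrable _ _)
  have hswap' : ∀ N : ℕ, (∫ t in (0:ℝ)..1, Complex.exp (I*w*t) * D N t) =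
      ∑ n ∈ Finset.Icc (-(N:ℤ)) (N:ℤ), ∫ t in (0:ℝ)..1,
        Complex.exp (I*w*t) * Complex.exp (2*(Real.pi:ℂ)*I*(n:ℂ)*((α:ℂ) - (t:ℂ))) := by
    intro N
    rw [hD]
    simp only [Finset.mul_sum]
    exact intervalIntegral.integral_finset_sum
      (fun n _ => (by fun_prop : Continuous fun t : ℝ =>
        Complex.exp (I*w*t) * Complex.exp (2*(Real.pi:ℂ)*I*(n:ℂ)*((α:ℂ) - (t:ℂ)))).intervalIntegrable _ _)
  have hSN : ∀ N : ℕ, (∑ n ∈ Finset.Icc (-(N : ℤ)) (N : ℤ),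
      Complex.exp (2 * (Real.pi : ℂ) * Complex.I * (α : ℂ) * (n : ℂ)) /
          (w - 2 * (Real.pi : ℂ) * (n : ℂ))) =
      K * ∫ t in (0:ℝ)..1, Complex.exp (I*w*t) * D N t := by
    intro N
    rw [hswap' N, Finset.mul_sum]
    refine Finset.sum_congr rfl fun n _ => ?_
    rw [termA w α n (hwn n), hK]
    field_simp [hwn n, hE1]
  have hC : ∀ N : ℕ, (∫ t in (0:ℝ)..1, Complex.exp (I*w*(α:ℂ)) * D N t) =
      Complex.exp (I*w*(α:ℂ)) := by
    intro N
    rw [hswap N (Complex.exp (I*w*(α:ℂ)))]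
    rw [Finset.sum_eq_single 0]
    · simp
    · intro n _ hn0
      rw [intervalIntegral.integral_const_mul, intD α n hn0, mul_zero]
    · intro h0
      simp at h0
  have hcore := core α hα0 hα1 w
  have hdiff : ∀ N : ℕ, (∫ t in (0:ℝ)..1, Complex.exp (I*w*t) * D N t) -
      Complex.exp (I*w*(α:ℂ)) =
      ∫ t in (0:ℝ)..1, (Complex.exp (I*w*t) - Complex.exp (I*w*(α:ℂ))) * D N t := by
    intro N
    nth_rewrite 1 [← hC N]
    rw [← intervalIntegral.integral_sub
      ((by rw [hD]; exact (Continuous.mul (by fun_prop) (continuous_finset_sum _ (fun n _ => by fun_prop))) :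
        Continuous fun t : ℝ => Complex.exp (I*w*t) * D N t).intervalIntegrable _ _)
      ((by rw [hD]; exact (Continuous.mul (by fun_prop) (continuous_finset_sum _ (fun n _ => by fun_prop))) :
        Continuous fun t : ℝ => Complex.exp (I*w*(α:ℂ)) * D N t).intervalIntegrable _ _)]
    simp only [sub_mul]
  have hFN : Tendsto (fun N : ℕ => ∫ t in (0:ℝ)..1, Complex.exp (I*w*t) * D N t) atTop
      (nhds (Complex.exp (I*w*(α:ℂ)))) := by
    have h2 : Tendsto (fun N : ℕ => (∫ t in (0:ℝ)..1, Complex.exp (I*w*t) * D N t) -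
        Complex.exp (I*w*(α:ℂ))) atTop (nhds 0) := by
      refine Tendsto.congr (fun N => ?_) hcore
      rw [hdiff N, hD]
    simpa using h2.add (tendsto_const_nhds (x := Complex.exp (I*w*(α:ℂ))))
  have hlim : K * Complex.exp (I*w*(α:ℂ)) =
      I * Complex.exp (I*(α:ℂ)*w) / (Complex.exp (I*w) - 1) := by
    rw [hK, show I*(α:ℂ)*w = I*w*(α:ℂ) by ring]
    ring
  exact hlim ▸ ((hFN.const_mul K).congr (fun N => (hSN N).symm))
end

section
/- Let α ∈ (0,1) and let z ∈ ℂ with e^z ≠ −1. Then the family k ↦ e^{−2πiαk} (1/(z + i(2k+1)π) − 1/(z + i(2k−1)π)), indexed by k ∈ ℤ, is summable and ∑_{k∈ℤ} e^{−2πiαk} (1/(z + i(2k+1)π) − 1/(z + i(2k−1)π)) = (2/i) sin(πα) e^{αz}/(1 + e^z). -/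
open Complex Real Filter

lemma sum_paired_fractions_aux (P u v J : ℂ) (hP : P ≠ 0) (hv : v ≠ 0) (h1v : 1 + v ≠ 0)
    (hJ : J ≠ 0) :
    -(P * u * v⁻¹) * (P⁻¹ * P⁻¹ - 1) / (-(1 + v) / v) = 2 / J * ((P⁻¹ - P) * J / 2) * u / (1 + v) := by
  rw [div_div_eq_mul_div, div_eq_div_iff (neg_ne_zero.mpr h1v) h1v]
  field_simp

set_option maxHeartbeats 1000000 in
/-- For `α ∈ (0,1)` and `z ∈ ℂ` with `e^z ≠ −1`,
`∑_{k∈ℤ} e^{−2πiαk} (1/(z + i(2k+1)π) − 1/(z + i(2k−1)π)) = (2/i) sin(πα) e^{αz}/(1 + e^z)`,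
the family being summable. -/
theorem sum_paired_fractions (α : ℝ) (hα0 : 0 < α) (hα1 : α < 1) (z : ℂ)
    (hz : Complex.exp z ≠ -1) :
    HasSum
      (fun k : ℤ => Complex.exp (-(2 * (Real.pi : ℂ) * Complex.I * (α : ℂ) * (k : ℂ))) *
        (1 / (z + Complex.I * (2 * (k : ℂ) + 1) * (Real.pi : ℂ)) -
          1 / (z + Complex.I * (2 * (k : ℂ) - 1) * (Real.pi : ℂ))))
      ((2 / Complex.I) * (Real.sin (Real.pi * α) : ℂ) * Complex.exp ((α : ℂ) * z) /
        (1 + Complex.exp z)) := by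
  haveI : Fact ((0:ℝ) < 1) := ⟨one_pos⟩
  -- the auxiliary point w and basic nonvanishing facts
  set w : ℂ := -z - (π:ℂ) * I with hw_def
  have hmI : Complex.exp (-((π:ℂ)*I)) = -1 := by
    rw [Complex.exp_neg, Complex.exp_pi_mul_I]; norm_num
  have hE3 : Complex.exp w = -Complex.exp (-z) := by
    rw [show w = -z + -((π:ℂ)*I) by rw [hw_def]; ring, Complex.exp_add, hmI]; ring
  have hw1 : Complex.exp w ≠ 1 := by
    rw [hE3]
    intro h
    apply hz
    have h2 : Complex.exp (-z) = -1 := by linear_combination -h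
    rw [← neg_neg z, Complex.exp_neg, h2]; norm_num
  have hE1 : Complex.exp w - 1 ≠ 0 := sub_ne_zero.mpr hw1
  have hden : ∀ n : ℤ, w - 2*(π:ℂ)*I*(n:ℂ) ≠ 0 := by
    intro n h
    apply hw1
    rw [show w = 2*(π:ℂ)*I*(n:ℂ) from sub_eq_zero.mp h,
      show 2*(π:ℂ)*I*(n:ℂ) = (n:ℂ) * (2*(π:ℂ)*I) by ring,
      Complex.exp_int_mul_two_pi_mul_I]
  have hden' : ∀ n : ℤ, w - 2*(π:ℂ)*I*((n:ℂ)-1) ≠ 0 := by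
    intro n
    have := hden (n-1); push_cast at this; convert this using 2
  -- the continuous function on the circle
  set G : ℝ → ℂ := fun x => Complex.exp ((x:ℂ) * w) * (Complex.exp (2*(π:ℂ)*I*(x:ℂ)) - 1)
    with hG_def
  have hG01 : G 0 = G 1 := by
    simp only [hG_def, Complex.ofReal_zero, Complex.ofReal_one, zero_mul, mul_zero, mul_one,
      Complex.exp_zero, Complex.exp_two_pi_mul_I]
    ring
  have hGcont : Continuous G := by
    apply Continuous.mul
    · exact Complex.continuous_exp.comp (Complex.continuous_ofReal.mul continuous_const)
    · exact (Complex.continuous_exp.comp (continuous_const.mul Complex.continuous_ofReal)).sub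
        continuous_const
  set g : C(AddCircle (1:ℝ), ℂ) :=
    ⟨AddCircle.liftIco 1 0 G, AddCircle.liftIco_zero_continuous hG01 hGcont.continuousOn⟩
    with hg_def
  -- Fourier coefficients of g
  have hcoeff : ∀ n : ℤ, fourierCoeff (⇑g) n
      = (Complex.exp w - 1) * (1/(w - 2*(π:ℂ)*I*((n:ℂ)-1)) - 1/(w - 2*(π:ℂ)*I*(n:ℂ))) := by
    intro n
    have : fourierCoeff (⇑g) n = fourierCoeff (AddCircle.liftIco 1 0 G) n := rfl
    rw [this, fourierCoeff_liftIco_eq, fourierCoeffOn_eq_integral]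
    have hint : ∀ x : ℝ, x ∈ Set.uIcc (0:ℝ) ((0:ℝ)+1) →
        (fourier (-n) ((x:ℝ) : AddCircle ((0:ℝ)+1-0)) • G x : ℂ)
        = Complex.exp ((w - 2*(π:ℂ)*I*((n:ℂ)-1)) * x) - Complex.exp ((w - 2*(π:ℂ)*I*(n:ℂ)) * x) := by
      intro x _
      rw [fourier_coe_apply, smul_eq_mul, hG_def]
      rw [show ((w - 2*(π:ℂ)*I*((n:ℂ)-1)) * x) = 2*(π:ℂ)*I*(-n)*x/(0+1-0) + ((x:ℂ)*w + 2*(π:ℂ)*I*(x:ℂ)) by push_cast; ring,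
        show ((w - 2*(π:ℂ)*I*(n:ℂ)) * x) = 2*(π:ℂ)*I*(-n)*x/(0+1-0) + (x:ℂ)*w by push_cast; ring,
        Complex.exp_add, Complex.exp_add, Complex.exp_add]
      push_cast
      ring
    rw [intervalIntegral.integral_congr hint,
      intervalIntegral.integral_sub
        (Continuous.intervalIntegrable (by continuity) _ _)
        (Continuous.intervalIntegrable (by continuity) _ _),
      integral_exp_mul_complex (hden' n), integral_exp_mul_complex (hden n)]
    have e1 : Complex.exp ((w - 2*(π:ℂ)*I*((n:ℂ)-1)) * (((0:ℝ)+1:ℝ):ℂ)) = Complex.exp w := by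
      rw [show (w - 2*(π:ℂ)*I*((n:ℂ)-1)) * (((0:ℝ)+1:ℝ):ℂ) = w + ((-(n-1) : ℤ):ℂ) * (2*(π:ℂ)*I) by push_cast; ring,
        Complex.exp_add, Complex.exp_int_mul_two_pi_mul_I, mul_one]
    have e2 : Complex.exp ((w - 2*(π:ℂ)*I*(n:ℂ)) * (((0:ℝ)+1:ℝ):ℂ)) = Complex.exp w := by
      rw [show (w - 2*(π:ℂ)*I*(n:ℂ)) * (((0:ℝ)+1:ℝ):ℂ) = w + ((-n : ℤ):ℂ) * (2*(π:ℂ)*I) by push_cast; ring,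
        Complex.exp_add, Complex.exp_int_mul_two_pi_mul_I, mul_one]
    rw [e1, e2]
    push_cast
    norm_num
    simp only [div_eq_mul_inv, mul_sub]
  -- summability of the Fourier coefficients
  have hsummable : Summable (fourierCoeff (⇑g)) := by
    set C : ℝ := ‖Complex.exp w - 1‖ * 8 with hC
    apply Summable.of_norm_bounded_eventually (g := fun n : ℤ => C * (1/(n:ℝ)^2))
      (Summable.mul_left C (summable_one_div_int_pow.mpr one_lt_two))
    have hfin : {n : ℤ | ¬ ‖w‖ + 2 ≤ |(n:ℝ)|}.Finite := by
      apply Set.Finite.subset (Set.finite_Icc (-(⌈‖w‖ + 2⌉)) ⌈‖w‖ + 2⌉)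
      intro n hn
      simp only [Set.mem_setOf_eq, not_le] at hn
      have h1 : (|n| : ℝ) ≤ ⌈‖w‖ + 2⌉ := by
        push_cast
        calc (|(n:ℝ)|) ≤ ‖w‖ + 2 := hn.le
        _ ≤ ⌈‖w‖ + 2⌉ := Int.le_ceil _
      rw [show (|n| : ℝ) = ((|n| : ℤ) : ℝ) by push_cast; ring] at h1
      have h2 : |n| ≤ ⌈‖w‖ + 2⌉ := by exact_mod_cast h1
      simp only [Set.mem_Icc]
      constructor
      · linarith [neg_abs_le n]
      · linarith [le_abs_self n]
    filter_upwards [hfin.eventually_cofinite_notMem] with n hn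
    simp only [Set.mem_setOf_eq, not_not] at hn
    rw [hcoeff n]
    have habs : ∀ m : ℤ, ‖2*(π:ℂ)*I*(m:ℂ)‖ = 2*π*|(m:ℝ)| := fun m => by
      simp [abs_of_pos Real.pi_pos]
    have key1 : |(n:ℝ)| ≤ ‖w - 2*(π:ℂ)*I*(n:ℂ)‖ := by
      have h1 : ‖2*(π:ℂ)*I*(n:ℂ)‖ - ‖w‖ ≤ ‖2*(π:ℂ)*I*(n:ℂ) - w‖ := norm_sub_norm_le _ _
      rw [norm_sub_rev (2*(π:ℂ)*I*(n:ℂ)) w, habs] at h1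
      nlinarith [Real.pi_gt_three, abs_nonneg (n:ℝ), norm_nonneg w]
    have key2 : |(n:ℝ)| ≤ ‖w - 2*(π:ℂ)*I*((n:ℂ)-1)‖ := by
      have h1 : ‖2*(π:ℂ)*I*((n:ℂ)-1)‖ - ‖w‖ ≤ ‖2*(π:ℂ)*I*((n:ℂ)-1) - w‖ := norm_sub_norm_le _ _
      rw [norm_sub_rev (2*(π:ℂ)*I*((n:ℂ)-1)) w] at h1
      have h2 : ‖2*(π:ℂ)*I*((n:ℂ)-1)‖ = 2*π*|(n:ℝ)-1| := by
        have := habs (n-1); push_cast at this ⊢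
        convert this using 3 <;> ring
      have h3 : |(n:ℝ)| - 1 ≤ |(n:ℝ)-1| := by
        have := abs_sub_abs_le_abs_sub (n:ℝ) 1
        simp at this; linarith
      nlinarith [Real.pi_gt_three, abs_nonneg ((n:ℝ)-1), norm_nonneg w]
    have heq : (Complex.exp w - 1) * (1/(w - 2*(π:ℂ)*I*((n:ℂ)-1)) - 1/(w - 2*(π:ℂ)*I*(n:ℂ)))
        = (Complex.exp w - 1) * (-(2*(π:ℂ)*I)) / ((w - 2*(π:ℂ)*I*((n:ℂ)-1)) * (w - 2*(π:ℂ)*I*(n:ℂ))) := by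
      field_simp [hden n, hden' n]
      ring
    rw [heq]
    have hnorm : ‖(Complex.exp w - 1) * (-(2*(π:ℂ)*I)) / ((w - 2*(π:ℂ)*I*((n:ℂ)-1)) * (w - 2*(π:ℂ)*I*(n:ℂ)))‖
        = ‖Complex.exp w - 1‖*(2*π)/(‖w - 2*(π:ℂ)*I*((n:ℂ)-1)‖*‖w - 2*(π:ℂ)*I*(n:ℂ)‖) := by
      simp [abs_of_pos Real.pi_pos, mul_assoc]
    rw [hnorm, mul_one_div]
    have hsq : (n:ℝ)^2 ≤ ‖w - 2*(π:ℂ)*I*((n:ℂ)-1)‖*‖w - 2*(π:ℂ)*I*(n:ℂ)‖ := by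
      nlinarith [_root_.sq_abs (n:ℝ), norm_nonneg w]
    apply div_le_div₀ (by positivity) _ (by nlinarith [_root_.sq_abs (n:ℝ), norm_nonneg w]) hsq
    nlinarith [Real.pi_le_four, norm_nonneg (Complex.exp w - 1)]
  -- the pointwise Fourier series at 1 - α
  have hsum := (has_pointwise_sum_fourier_series_of_summable hsummable
    (((1-α : ℝ) : AddCircle (1:ℝ)))).div_const (Complex.exp w - 1)
  have hmem : (1-α : ℝ) ∈ Set.Ico (0:ℝ) 1 := ⟨by linarith, by linarith⟩
  have hgval : g (((1-α : ℝ) : AddCircle (1:ℝ))) = G (1-α) :=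
    AddCircle.liftIco_zero_coe_apply (f := G) hmem
  rw [hgval] at hsum
  -- convert the function
  have hfun : (fun k : ℤ => Complex.exp (-(2 * (Real.pi : ℂ) * Complex.I * (α : ℂ) * (k : ℂ))) *
        (1 / (z + Complex.I * (2 * (k : ℂ) + 1) * (Real.pi : ℂ)) -
          1 / (z + Complex.I * (2 * (k : ℂ) - 1) * (Real.pi : ℂ))))
      = (fun k : ℤ => (fourierCoeff (⇑g) k • fourier k (((1-α : ℝ) : AddCircle (1:ℝ)))) / (Complex.exp w - 1)) := by
    funext k
    rw [hcoeff k, smul_eq_mul, fourier_coe_apply]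
    have hexp : Complex.exp (2*(π:ℂ)*I*(k:ℂ)*(((1-α:ℝ)):ℂ)/(1:ℝ))
        = Complex.exp (-(2 * (Real.pi : ℂ) * Complex.I * (α : ℂ) * (k : ℂ))) := by
      rw [show (2*(π:ℂ)*I*(k:ℂ)*(((1-α:ℝ)):ℂ)/(1:ℝ)) = (k:ℂ)*(2*(π:ℂ)*I) + -(2 * (Real.pi : ℂ) * Complex.I * (α : ℂ) * (k : ℂ)) by push_cast; ring,
        Complex.exp_add, Complex.exp_int_mul_two_pi_mul_I, one_mul]
    rw [hexp]
    have e1 : w - 2*(π:ℂ)*I*((k:ℂ)-1) = -(z + Complex.I * (2 * (k : ℂ) - 1) * (Real.pi : ℂ)) := by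
      rw [hw_def]; ring
    have e2 : w - 2*(π:ℂ)*I*(k:ℂ) = -(z + Complex.I * (2 * (k : ℂ) + 1) * (Real.pi : ℂ)) := by
      rw [hw_def]; ring
    rw [e1, e2]
    rw [show ∀ X P : ℂ, (Complex.exp w - 1) * X * P / (Complex.exp w - 1) = X * P by
      intro X P; rw [mul_comm (Complex.exp w - 1) X, mul_assoc, mul_div_assoc,
        mul_div_cancel_left₀ _ hE1]]
    rw [div_neg, div_neg]
    ring
  rw [hfun]
  -- convert the value
  have hval : G (1-α) / (Complex.exp w - 1)
      = (2 / Complex.I) * (Real.sin (Real.pi * α) : ℂ) * Complex.exp ((α : ℂ) * z) /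
        (1 + Complex.exp z) := by
    have hsin : (Real.sin (Real.pi * α) : ℂ)
        = (Complex.exp (-((π:ℂ)*(α:ℂ)) * I) - Complex.exp (((π:ℂ)*(α:ℂ)) * I)) * I / 2 := by
      rw [Complex.ofReal_sin]; push_cast; rfl
    have hE4 : Complex.exp ((((1-α:ℝ)):ℂ) * w)
        = -(Complex.exp ((π:ℂ)*(α:ℂ)*I) * Complex.exp ((α:ℂ)*z) * Complex.exp (-z)) := by
      rw [show (((1-α:ℝ)):ℂ) * w = (π:ℂ)*(α:ℂ)*I + ((α:ℂ)*z + (-z + -((π:ℂ)*I))) by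
        rw [hw_def]; push_cast; ring,
        Complex.exp_add, Complex.exp_add, Complex.exp_add, hmI]
      ring
    have hE5 : Complex.exp (2*(π:ℂ)*I*(((1-α:ℝ)):ℂ))
        = Complex.exp (-((π:ℂ)*(α:ℂ))*I) * Complex.exp (-((π:ℂ)*(α:ℂ))*I) := by
      rw [show 2*(π:ℂ)*I*(((1-α:ℝ)):ℂ) = ((1:ℤ):ℂ)*(2*(π:ℂ)*I) + (-((π:ℂ)*(α:ℂ))*I + -((π:ℂ)*(α:ℂ))*I) by push_cast; ring,
        Complex.exp_add, Complex.exp_add, Complex.exp_int_mul_two_pi_mul_I, one_mul]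
    have hinv1 : Complex.exp (-((π:ℂ)*(α:ℂ))*I) = (Complex.exp ((π:ℂ)*(α:ℂ)*I))⁻¹ := by
      rw [← Complex.exp_neg]; congr 1; ring
    have hinv2 : Complex.exp (-z) = (Complex.exp z)⁻¹ := Complex.exp_neg z
    have h1z : 1 + Complex.exp z ≠ 0 := by
      intro h; apply hz; linear_combination h
    have hEw1 : Complex.exp w - 1 = -(1 + Complex.exp z)/Complex.exp z := by
      rw [hE3, hinv2]
      field_simp
      ring
    simp only [hG_def]
    rw [hE4, hE5, hEw1, hsin, hinv1, hinv2]
    exact sum_paired_fractions_aux _ _ _ _ (Complex.exp_ne_zero _) (Complex.exp_ne_zero _)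
      h1z Complex.I_ne_zero
  rw [hval] at hsum
  exact hsum
end

section
/- Let 0 < α < 1 and let F : [0,∞) → ℂ be measurable, locally integrable, and satisfy F(u) = e^{−αu}(1 + O(e^{−u})) as u → +∞ (i.e. |F(u) − e^{−αu}| ≤ C e^{−(1+α)u} for some constant C and all sufficiently large u). Then, as ε → 0+, ∫₀^{∞} exp(−2ε cosh u) F(u) du = ∫₀^{∞} F(u) du + Γ(−α) ε^{α} + O(ε). -/
open MeasureTheory Set

lemma one_sub_exp_neg_le (x : ℝ) : 1 - Real.exp (-x) ≤ x := by
  nlinarith [Real.add_one_le_exp (-x)]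

lemma exp_neg_le_one {x : ℝ} (hx : 0 ≤ x) : Real.exp (-x) ≤ 1 :=
  Real.exp_le_one_iff.mpr (by linarith)

-- integrability of the FTC integrand pieces
lemma int_k (α : ℝ) (hα1 : α < 1) :
    IntegrableOn (fun t : ℝ => Real.exp (-t) * t ^ (-α)) (Ioi 0) := by
  have := Real.GammaIntegral_convergent (s := 1 - α) (by linarith)
  refine this.congr_fun (fun t ht => ?_) measurableSet_Ioi
  norm_num

lemma int_g (α ε : ℝ) (hα0 : 0 < α) (hε : 0 < ε) :
    IntegrableOn (fun t : ℝ => (Real.exp (-t) - 1) * t ^ (-α - 1)) (Ioi ε) := by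
  refine Integrable.mono' (integrableOn_Ioi_rpow_of_lt (a := -α-1) (by linarith) hε) ?_ ?_
  · refine (ContinuousOn.aestronglyMeasurable ?_ measurableSet_Ioi)
    exact ((Real.continuous_exp.comp continuous_neg).continuousOn.sub continuousOn_const).mul
      (fun t ht => (Real.continuousAt_rpow_const t _ (Or.inl (hε.trans ht).ne')).continuousWithinAt)
  · filter_upwards [ae_restrict_mem measurableSet_Ioi] with t ht
    have ht0 : (0:ℝ) < t := hε.trans ht
    rw [norm_mul]
    have h1 : ‖Real.exp (-t) - 1‖ ≤ 1 := by
      rw [Real.norm_eq_abs, abs_le]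
      constructor <;> nlinarith [Real.exp_pos (-t), exp_neg_le_one ht0.le]
    have h2 : ‖t ^ (-α - 1)‖ = t ^ (-α - 1) := by
      rw [Real.norm_eq_abs, abs_of_nonneg (Real.rpow_nonneg ht0.le _)]
    calc ‖Real.exp (-t) - 1‖ * ‖t ^ (-α-1)‖ ≤ 1 * ‖t ^ (-α-1)‖ := by
          exact mul_le_mul_of_nonneg_right h1 (norm_nonneg _)
      _ = t ^ (-α - 1) := by rw [one_mul, h2]

lemma ftc_J (α ε : ℝ) (hα0 : 0 < α) (hα1 : α < 1) (hε : 0 < ε) :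
    ∫ t in Ioi ε, (Real.exp (-t) - 1) * t ^ (-α - 1)
      = (1/α) * (Real.exp (-ε) - 1) * ε ^ (-α)
        - (1/α) * ∫ t in Ioi ε, Real.exp (-t) * t ^ (-α) := by
  set H : ℝ → ℝ := fun t => -(1/α) * ((Real.exp (-t) - 1) * t ^ (-α)) with hH
  set Hd : ℝ → ℝ := fun t =>
    (Real.exp (-t) - 1) * t ^ (-α - 1) + (1/α) * (Real.exp (-t) * t ^ (-α)) with hHd
  have hK : IntegrableOn (fun t : ℝ => Real.exp (-t) * t ^ (-α)) (Ioi ε) :=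
    (int_k α hα1).mono_set (Ioi_subset_Ioi hε.le)
  have hG := int_g α ε hα0 hε
  have hHdint : IntegrableOn Hd (Ioi ε) := hG.add (hK.const_mul _)
  have hderiv : ∀ t ∈ Ici ε, HasDerivAt H (Hd t) t := by
    intro t ht
    have ht0 : (0:ℝ) < t := lt_of_lt_of_le hε ht
    have h1 : HasDerivAt (fun t : ℝ => Real.exp (-t) - 1) (-Real.exp (-t)) t := by
      simpa using ((hasDerivAt_neg t).exp.sub_const 1)
    have h2 : HasDerivAt (fun t : ℝ => t ^ (-α)) (-α * t ^ (-α - 1)) t :=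
      Real.hasDerivAt_rpow_const (Or.inl ht0.ne')
    have : HasDerivAt H (-(1 / α) * (-Real.exp (-t) * t ^ (-α)
        + (Real.exp (-t) - 1) * (-α * t ^ (-α - 1)))) t := (h1.mul h2).const_mul (-(1/α))
    convert this using 1
    have hαne : α ≠ 0 := hα0.ne'
    simp only [hHd]
    field_simp
    ring
  have htend : Filter.Tendsto H Filter.atTop (nhds 0) := by
    have l1 : Filter.Tendsto (fun t : ℝ => Real.exp (-t) - 1) Filter.atTop (nhds (0 - 1)) :=
      (Real.tendsto_exp_neg_atTop_nhds_zero).sub_const 1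
    have l2 : Filter.Tendsto (fun t : ℝ => t ^ (-α)) Filter.atTop (nhds 0) :=
      tendsto_rpow_neg_atTop hα0
    have h := (l1.mul l2).const_mul (-(1/α))
    rw [hH]
    convert h using 2 <;> ring
  have key := integral_Ioi_of_hasDerivAt_of_tendsto' hderiv hHdint htend
  have hfun : (fun t : ℝ => (Real.exp (-t) - 1) * t ^ (-α - 1))
      = fun t => Hd t - (1/α) * (Real.exp (-t) * t ^ (-α)) := by
    funext t; simp only [hHd]; ring
  rw [hfun, integral_sub hHdint (hK.const_mul _), key, MeasureTheory.integral_const_mul]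
  simp only [hH]
  ring

lemma gamma_K (α : ℝ) (hα0 : 0 < α) (hα1 : α < 1) :
    ∫ t in Ioi (0:ℝ), Real.exp (-t) * t ^ (-α) = -α * Real.Gamma (-α) := by
  have h1 := Real.Gamma_eq_integral (s := 1 - α) (by linarith)
  rw [show (1:ℝ) - α - 1 = -α by ring] at h1
  rw [← h1, show (1:ℝ) - α = -α + 1 by ring,
    Real.Gamma_add_one (neg_ne_zero.mpr hα0.ne')]

lemma main_est (α ε : ℝ) (hα0 : 0 < α) (hα1 : α < 1) (hε : 0 < ε) :
    |ε ^ α * (∫ t in Ioi ε, (Real.exp (-t) - 1) * t ^ (-α - 1))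
        - Real.Gamma (-α) * ε ^ α| ≤ (1/α + 1/(α*(1-α))) * ε := by
  set Kε := ∫ t in Ioi ε, Real.exp (-t) * t ^ (-α) with hKε
  set Iε := ∫ t in Ioc 0 ε, Real.exp (-t) * t ^ (-α) with hIε
  have hKIoc : IntegrableOn (fun t : ℝ => Real.exp (-t) * t ^ (-α)) (Ioc 0 ε) :=
    (int_k α hα1).mono_set Ioc_subset_Ioi_self
  have hKIoi : IntegrableOn (fun t : ℝ => Real.exp (-t) * t ^ (-α)) (Ioi ε) :=
    (int_k α hα1).mono_set (Ioi_subset_Ioi hε.le)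
  have hsplit : (∫ t in Ioi (0:ℝ), Real.exp (-t) * t ^ (-α)) = Iε + Kε := by
    rw [← Ioc_union_Ioi_eq_Ioi hε.le,
      setIntegral_union (Ioc_disjoint_Ioi le_rfl) measurableSet_Ioi hKIoc hKIoi]
  have hGamma : -α * Real.Gamma (-α) = Iε + Kε := by rw [← gamma_K α hα0 hα1, hsplit]
  have hee : ε ^ α * ε ^ (-α) = 1 := by
    rw [← Real.rpow_add hε]; simp
  have expand : ε ^ α * (∫ t in Ioi ε, (Real.exp (-t) - 1) * t ^ (-α - 1))
      - Real.Gamma (-α) * ε ^ α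
      = (1/α) * (Real.exp (-ε) - 1) + (1/α) * ε ^ α * Iε := by
    rw [ftc_J α ε hα0 hα1 hε]
    have hαne : α ≠ 0 := hα0.ne'
    have hg : Real.Gamma (-α) = -(1/α) * (Iε + Kε) := by
      rw [← hGamma]; field_simp
    rw [hg]
    linear_combination (1/α * (Real.exp (-ε) - 1)) * hee
  rw [expand]
  -- bound Iε
  have hrpowInt : IntegrableOn (fun t : ℝ => t ^ (-α)) (Ioc 0 ε) := by
    have := intervalIntegral.intervalIntegrable_rpow' (a := 0) (b := ε) (r := -α)
      (by linarith)
    rwa [intervalIntegrable_iff_integrableOn_Ioc_of_le hε.le] at this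
  have hIεnn : 0 ≤ Iε := by
    refine setIntegral_nonneg measurableSet_Ioc fun t ht => ?_
    have := ht.1
    positivity
  have hIεle : Iε ≤ ε ^ (1 - α) / (1 - α) := by
    have h1 : Iε ≤ ∫ t in Ioc 0 ε, t ^ (-α) := by
      refine setIntegral_mono_on hKIoc hrpowInt measurableSet_Ioc fun t ht => ?_
      have h0t : (0:ℝ) < t := ht.1
      have : Real.exp (-t) ≤ 1 := Real.exp_le_one_iff.mpr (by linarith)
      nlinarith [Real.rpow_nonneg h0t.le (-α)]
    have h2 : (∫ t in Ioc 0 ε, t ^ (-α)) = ε ^ (1 - α) / (1 - α) := by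
      rw [← intervalIntegral.integral_of_le hε.le,
        integral_rpow (Or.inl (by linarith : (-1:ℝ) < -α))]
      rw [Real.zero_rpow (by intro h; linarith [h] : -α + 1 ≠ 0), show -α + 1 = 1 - α by ring]
      ring
    linarith
  have hmul : ε ^ α * ε ^ (1 - α) = ε := by
    rw [← Real.rpow_add hε]; norm_num
  have b1 : |(1/α) * (Real.exp (-ε) - 1)| ≤ (1/α) * ε := by
    rw [abs_mul, abs_of_nonneg (by positivity : (0:ℝ) ≤ 1/α)]
    have h1 : Real.exp (-ε) ≤ 1 := Real.exp_le_one_iff.mpr (by linarith)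
    have h2 : |Real.exp (-ε) - 1| ≤ ε := by
      rw [abs_sub_comm, abs_of_nonneg (by linarith)]
      have := one_sub_exp_neg_le ε; linarith
    exact mul_le_mul_of_nonneg_left h2 (by positivity)
  have b2 : |(1/α) * ε ^ α * Iε| ≤ 1/(α*(1-α)) * ε := by
    have hεα : (0:ℝ) ≤ ε ^ α := Real.rpow_nonneg hε.le α
    have hnn : 0 ≤ (1/α) * ε ^ α * Iε := by positivity
    rw [abs_of_nonneg hnn]
    calc (1/α) * ε ^ α * Iε ≤ (1/α) * ε ^ α * (ε ^ (1-α) / (1-α)) := by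
          apply mul_le_mul_of_nonneg_left hIεle (by positivity)
      _ = (ε ^ α * ε ^ (1-α)) / (α * (1-α)) := by
          have h1 : α ≠ 0 := hα0.ne'
          have h2 : (1:ℝ) - α ≠ 0 := by intro h; linarith
          field_simp
      _ = ε / (α * (1-α)) := by rw [hmul]
      _ = 1/(α*(1-α)) * ε := by ring
  calc |(1/α) * (Real.exp (-ε) - 1) + (1/α) * ε ^ α * Iε|
      ≤ |(1/α) * (Real.exp (-ε) - 1)| + |(1/α) * ε ^ α * Iε| := abs_add_le _ _
    _ ≤ (1/α) * ε + 1/(α*(1-α)) * ε := add_le_add b1 b2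
    _ = (1/α + 1/(α*(1-α))) * ε := by ring


lemma subst_int (α ε : ℝ) (hε : 0 < ε) :
    ∫ t in Ioi ε, (Real.exp (-t) - 1) * t ^ (-α - 1)
      = ε ^ (-α) * ∫ u in Ioi (0:ℝ),
          (Real.exp (-(ε * Real.exp u)) - 1) * Real.exp (-(α * u)) := by
  set f : ℝ → ℝ := fun u => ε * Real.exp u with hf
  set g : ℝ → ℝ := fun t => (Real.exp (-t) - 1) * t ^ (-α - 1) with hg
  have himg : f '' Ioi 0 = Ioi ε := by
    ext t
    simp only [mem_image, mem_Ioi, hf]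
    constructor
    · rintro ⟨u, hu, rfl⟩
      nlinarith [Real.add_one_le_exp u]
    · intro ht
      refine ⟨Real.log (t / ε), Real.log_pos ((one_lt_div hε).mpr ht), ?_⟩
      rw [Real.exp_log (div_pos (hε.trans ht) hε)]
      field_simp
  have hderiv : ∀ u ∈ Ioi (0:ℝ), HasDerivWithinAt f (ε * Real.exp u) (Ioi 0) u :=
    fun u _ => ((Real.hasDerivAt_exp u).const_mul ε).hasDerivWithinAt
  have hinj : InjOn f (Ioi 0) := by
    intro a _ b _ hab
    simp only [hf] at hab
    exact Real.exp_injective (mul_left_cancel₀ hε.ne' hab)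
  have key := integral_image_eq_integral_abs_deriv_smul measurableSet_Ioi hderiv hinj g
  rw [himg] at key
  rw [key, ← integral_const_mul]
  refine setIntegral_congr_fun measurableSet_Ioi fun u hu => ?_
  have hx : (0:ℝ) < ε * Real.exp u := by positivity
  have hrw : (ε * Real.exp u) ^ (-α - 1) = ε ^ (-α - 1) * Real.exp (u * (-α - 1)) := by
    rw [Real.mul_rpow hε.le (Real.exp_pos u).le,
      Real.rpow_def_of_pos (Real.exp_pos u), Real.log_exp]
  have h1 : ε * ε ^ (-α - 1) = ε ^ (-α) := by
    nth_rewrite 1 [← Real.rpow_one ε]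
    rw [← Real.rpow_add hε]; norm_num
  simp only [hg, hf, smul_eq_mul, abs_of_pos hx, hrw]
  have h2 : Real.exp u * Real.exp (u * (-α - 1)) = Real.exp (-(α * u)) := by
    rw [← Real.exp_add]; ring_nf
  calc ε * Real.exp u * ((Real.exp (-(ε * Real.exp u)) - 1)
        * (ε ^ (-α - 1) * Real.exp (u * (-α - 1))))
      = (ε * ε ^ (-α - 1)) * (Real.exp u * Real.exp (u * (-α - 1)))
          * (Real.exp (-(ε * Real.exp u)) - 1) := by ring
    _ = ε ^ (-α) * Real.exp (-(α * u)) * (Real.exp (-(ε * Real.exp u)) - 1) := by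
          rw [h1, h2]
    _ = ε ^ (-α) * ((Real.exp (-(ε * Real.exp u)) - 1) * Real.exp (-(α * u))) := by ring


lemma main_term (α ε : ℝ) (hα0 : 0 < α) (hα1 : α < 1) (hε : 0 < ε) :
    |(∫ u in Ioi (0:ℝ), (Real.exp (-(ε * Real.exp u)) - 1) * Real.exp (-(α * u)))
        - Real.Gamma (-α) * ε ^ α| ≤ (1/α + 1/(α*(1-α))) * ε := by
  have hee : ε ^ α * ε ^ (-α) = 1 := by rw [← Real.rpow_add hε]; simp
  have hM : (∫ u in Ioi (0:ℝ), (Real.exp (-(ε * Real.exp u)) - 1) * Real.exp (-(α * u)))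
      = ε ^ α * ∫ t in Ioi ε, (Real.exp (-t) - 1) * t ^ (-α - 1) := by
    rw [subst_int α ε hε, ← mul_assoc, hee, one_mul]
  rw [hM]
  exact main_est α ε hα0 hα1 hε

/-- Step 1 of Appendix B, first part: if `0 < α < 1` and
`F(u) = e^{−αu}(1 + O(e^{−u}))` as `u → +∞`, then as `ε → 0+`,
`∫₀^∞ exp(−2ε cosh u) F(u) du = ∫₀^∞ F(u) du + Γ(−α) ε^α + O(ε)`. -/
theorem asympt_single_general (α : ℝ) (hα0 : 0 < α) (hα1 : α < 1) (F : ℝ → ℂ)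
    (hFmeas : Measurable F)
    (hFloc : MeasureTheory.LocallyIntegrableOn F (Set.Ici 0))
    (C₁ u₀ : ℝ) (hF : ∀ u : ℝ, u₀ ≤ u →
      ‖F u - (Real.exp (-(α * u)) : ℂ)‖ ≤ C₁ * Real.exp (-((1 + α) * u))) :
    ∃ C ε₀ : ℝ, 0 < ε₀ ∧ ∀ ε : ℝ, 0 < ε → ε ≤ ε₀ →
      ‖(∫ u in Set.Ioi (0:ℝ), (Real.exp (-(2 * ε * Real.cosh u)) : ℂ) * F u)
          - (∫ u in Set.Ioi (0:ℝ), F u)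
          - ((Real.Gamma (-α) * ε ^ α : ℝ) : ℂ)‖ ≤ C * ε := by
  set u₁ := max u₀ 0 with hu₁
  have hu₁0 : (0:ℝ) ≤ u₁ := le_max_right _ _
  have hu₁u₀ : u₀ ≤ u₁ := le_max_left _ _
  have hC₁ : 0 ≤ C₁ := by
    have h := hF u₁ hu₁u₀
    nlinarith [norm_nonneg (F u₁ - (Real.exp (-(α * u₁)) : ℂ)),
      Real.exp_pos (-((1 + α) * u₁))]
  -- exp integrability
  have hexp : ∀ a : ℝ, IntegrableOn (fun u : ℝ => Real.exp (-(α * u))) (Ioi a) := by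
    intro a
    have := exp_neg_integrableOn_Ioi a hα0
    refine this.congr_fun (fun u _ => ?_) measurableSet_Ioi
    simp only [neg_mul]
  -- integrability of F
  have hF1 : IntegrableOn F (Ioc 0 u₁) := by
    have : IntegrableOn F (Icc 0 u₁) :=
      hFloc.integrableOn_compact_subset Icc_subset_Ici_self isCompact_Icc
    exact this.mono_set Ioc_subset_Icc_self
  have hF2 : IntegrableOn F (Ioi u₁) := by
    refine Integrable.mono' ((hexp u₁).const_mul (1 + C₁))
      (hFmeas.aestronglyMeasurable.restrict) ?_
    filter_upwards [ae_restrict_mem measurableSet_Ioi] with u hu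
    have hu0 : (0:ℝ) ≤ u := le_of_lt (lt_of_le_of_lt hu₁0 hu)
    have h1 := hF u (hu₁u₀.trans (le_of_lt hu))
    have h2 : ‖F u‖ ≤ ‖F u - (Real.exp (-(α * u)) : ℂ)‖ + ‖(Real.exp (-(α * u)) : ℂ)‖ := by
      simpa using norm_add_le (F u - (Real.exp (-(α * u)) : ℂ)) ((Real.exp (-(α * u)) : ℂ))
    have h3 : ‖(Real.exp (-(α * u)) : ℂ)‖ = Real.exp (-(α * u)) := by
      rw [Complex.norm_real, Real.norm_eq_abs, abs_of_pos (Real.exp_pos _)]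
    have h4 : Real.exp (-((1 + α) * u)) ≤ Real.exp (-(α * u)) := by
      apply Real.exp_le_exp.mpr; nlinarith
    calc ‖F u‖ ≤ C₁ * Real.exp (-((1 + α) * u)) + Real.exp (-(α * u)) := by
          rw [h3] at h2; linarith
      _ ≤ (1 + C₁) * Real.exp (-(α * u)) := by nlinarith [Real.exp_pos (-(α * u))]
  have hIF : IntegrableOn F (Ioi 0) := by
    rw [← Ioc_union_Ioi_eq_Ioi hu₁0]; exact hF1.union hF2
  -- constants
  set CF := ∫ u in Ioi (0:ℝ), ‖F u‖ with hCF
  set C₂ := ∫ u in Ioc (0:ℝ) u₁, (‖F u‖ + 1) with hC₂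
  set C₃ := ∫ u in Ioi u₁, Real.exp (-(α * u)) with hC₃
  refine ⟨CF + Real.exp u₁ * C₂ + C₁ * C₃ + (1/α + 1/(α*(1-α))), 1, one_pos, ?_⟩
  intro ε hε hε1
  -- abbreviations
  set A : ℝ → ℝ := fun u => Real.exp (-(2 * ε * Real.cosh u)) with hA
  set B : ℝ → ℝ := fun u => Real.exp (-(ε * Real.exp u)) with hB
  set E : ℝ → ℝ := fun u => Real.exp (-(α * u)) with hE
  have mA : Measurable A := (Real.continuous_exp.comp
    ((continuous_const.mul Real.continuous_cosh).neg)).measurable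
  have mB : Measurable B := (Real.continuous_exp.comp
    ((continuous_const.mul Real.continuous_exp).neg)).measurable
  have mE : Measurable E := (Real.continuous_exp.comp
    ((continuous_const.mul continuous_id).neg)).measurable
  set T1 : ℝ → ℂ := fun u => ((A u - B u : ℝ) : ℂ) * F u with hT1
  set T2 : ℝ → ℂ := fun u => ((B u - 1 : ℝ) : ℂ) * (F u - (E u : ℂ)) with hT2
  set m : ℝ → ℝ := fun u => (B u - 1) * E u with hm
  -- basic pointwise facts
  have hB1 : ∀ u : ℝ, 0 ≤ u → 1 - B u ≤ ε * Real.exp u := fun u _ =>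
    one_sub_exp_neg_le _
  have hB01 : ∀ u : ℝ, 0 < B u ∧ B u ≤ 1 := by
    intro u
    refine ⟨Real.exp_pos _, Real.exp_le_one_iff.mpr ?_⟩
    have := Real.exp_pos u; nlinarith
  have hE1 : ∀ u : ℝ, 0 ≤ u → E u ≤ 1 := by
    intro u hu
    apply Real.exp_le_one_iff.mpr; nlinarith
  have hAB : ∀ u : ℝ, 0 ≤ u → |A u - B u| ≤ ε := by
    intro u hu
    have hABrw : A u = B u * Real.exp (-(ε * Real.exp (-u))) := by
      simp only [hA, hB, ← Real.exp_add]
      congr 1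
      rw [Real.cosh_eq]; ring
    have e1 := (hB01 u).1
    have e2 := (hB01 u).2
    have e3 : 0 < Real.exp (-(ε * Real.exp (-u))) := Real.exp_pos _
    have e4 : Real.exp (-(ε * Real.exp (-u))) ≤ 1 := by
      apply Real.exp_le_one_iff.mpr
      have := Real.exp_pos (-u); nlinarith
    have e5 : 1 - Real.exp (-(ε * Real.exp (-u))) ≤ ε * Real.exp (-u) :=
      one_sub_exp_neg_le _
    have e6 : Real.exp (-u) ≤ 1 := Real.exp_le_one_iff.mpr (by linarith)
    rw [hABrw, abs_le]
    constructor <;> nlinarith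
  -- integrability for this ε
  have hInt1 : IntegrableOn (fun u => (A u : ℂ) * F u) (Ioi 0) := by
    refine Integrable.mono' hIF.norm
      ((Complex.measurable_ofReal.comp mA).mul hFmeas).aestronglyMeasurable.restrict ?_
    filter_upwards [ae_restrict_mem measurableSet_Ioi] with u _
    rw [norm_mul, Complex.norm_real, Real.norm_eq_abs, abs_of_pos (Real.exp_pos _)]
    have : A u ≤ 1 := by
      apply Real.exp_le_one_iff.mpr
      nlinarith [Real.cosh_pos (x := u)]
    nlinarith [norm_nonneg (F u), Real.exp_pos (-(2 * ε * Real.cosh u))]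
  have hT1int : IntegrableOn T1 (Ioi 0) := by
    refine Integrable.mono' (hIF.norm.const_mul ε)
      ((Complex.measurable_ofReal.comp (mA.sub mB)).mul hFmeas).aestronglyMeasurable.restrict ?_
    filter_upwards [ae_restrict_mem measurableSet_Ioi] with u hu
    rw [hT1]
    simp only
    rw [norm_mul, Complex.norm_real, Real.norm_eq_abs]
    exact mul_le_mul_of_nonneg_right (hAB u (le_of_lt hu)) (norm_nonneg _)
  have hT2int : IntegrableOn T2 (Ioi 0) := by
    refine Integrable.mono' (hIF.norm.add (hexp 0))
      ((Complex.measurable_ofReal.comp (mB.sub measurable_const)).mul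
        (hFmeas.sub (Complex.measurable_ofReal.comp mE))).aestronglyMeasurable.restrict ?_
    filter_upwards [ae_restrict_mem measurableSet_Ioi] with u _
    rw [hT2]
    simp only
    rw [norm_mul, Complex.norm_real, Real.norm_eq_abs]
    have e1 := (hB01 u).1
    have e2 := (hB01 u).2
    have h5 : |B u - 1| ≤ 1 := by rw [abs_le]; constructor <;> linarith
    have h6 : ‖F u - (E u : ℂ)‖ ≤ ‖F u‖ + E u := by
      calc ‖F u - (E u : ℂ)‖ ≤ ‖F u‖ + ‖(E u : ℂ)‖ := norm_sub_le _ _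
        _ = ‖F u‖ + E u := by
            rw [Complex.norm_real, Real.norm_eq_abs, abs_of_pos (Real.exp_pos _)]
    calc |B u - 1| * ‖F u - (E u : ℂ)‖ ≤ 1 * (‖F u‖ + E u) := by
          apply mul_le_mul h5 h6 (norm_nonneg _) zero_le_one
      _ = ‖F u‖ + E u := one_mul _
  have hmint : IntegrableOn m (Ioi 0) := by
    refine Integrable.mono' (hexp 0)
      ((mB.sub measurable_const).mul mE).aestronglyMeasurable.restrict ?_
    filter_upwards [ae_restrict_mem measurableSet_Ioi] with u _
    have e1 := (hB01 u).1
    have e2 := (hB01 u).2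
    have e3 := Real.exp_pos (-(α * u))
    rw [hm]
    simp only
    rw [Real.norm_eq_abs, abs_mul, abs_of_pos e3]
    have h5 : |B u - 1| ≤ 1 := by rw [abs_le]; constructor <;> linarith
    nlinarith
  have hmintC : IntegrableOn (fun u => ((m u : ℝ) : ℂ)) (Ioi 0) := hmint.ofReal
  -- decomposition of the integral
  have hpt : ∀ u : ℝ, (A u : ℂ) * F u - F u = T1 u + T2 u + ((m u : ℝ) : ℂ) := by
    intro u
    simp only [hT1, hT2, hm]
    push_cast
    ring
  have hdecomp : (∫ u in Ioi (0:ℝ), (A u : ℂ) * F u) - (∫ u in Ioi (0:ℝ), F u)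
      = (∫ u in Ioi (0:ℝ), T1 u) + (∫ u in Ioi (0:ℝ), T2 u)
        + (((∫ u in Ioi (0:ℝ), m u) : ℝ) : ℂ) := by
    rw [← integral_sub hInt1 hIF]
    have : (fun u => (A u : ℂ) * F u - F u)
        = fun u => T1 u + T2 u + ((m u : ℝ) : ℂ) := funext hpt
    rw [this]
    have h1 : (∫ u in Ioi (0:ℝ), (T1 u + T2 u + ((m u : ℝ) : ℂ)))
        = (∫ u in Ioi (0:ℝ), (T1 u + T2 u)) + ∫ u in Ioi (0:ℝ), ((m u : ℝ) : ℂ) :=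
      integral_add (hT1int.add hT2int) hmintC
    have h2 : (∫ u in Ioi (0:ℝ), (T1 u + T2 u))
        = (∫ u in Ioi (0:ℝ), T1 u) + ∫ u in Ioi (0:ℝ), T2 u :=
      integral_add hT1int hT2int
    rw [h1, h2]
    congr 1
    exact integral_ofReal
  -- bounds
  have bnd1 : ‖∫ u in Ioi (0:ℝ), T1 u‖ ≤ CF * ε := by
    calc ‖∫ u in Ioi (0:ℝ), T1 u‖ ≤ ∫ u in Ioi (0:ℝ), ‖T1 u‖ :=
        norm_integral_le_integral_norm _
      _ ≤ ∫ u in Ioi (0:ℝ), ε * ‖F u‖ := by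
          refine setIntegral_mono_on hT1int.norm (hIF.norm.const_mul ε)
            measurableSet_Ioi fun u hu => ?_
          rw [hT1]
          simp only
          rw [norm_mul, Complex.norm_real, Real.norm_eq_abs]
          exact mul_le_mul_of_nonneg_right (hAB u (le_of_lt hu)) (norm_nonneg _)
      _ = ε * CF := by rw [integral_const_mul]
      _ = CF * ε := mul_comm _ _
  have hT2norm : IntegrableOn (fun u => ‖T2 u‖) (Ioi 0) := hT2int.norm
  have hT2Ioc : IntegrableOn (fun u => ‖T2 u‖) (Ioc 0 u₁) :=
    hT2norm.mono_set Ioc_subset_Ioi_self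
  have hT2Ioi2 : IntegrableOn (fun u => ‖T2 u‖) (Ioi u₁) :=
    hT2norm.mono_set (Ioi_subset_Ioi hu₁0)
  have bnd2 : ‖∫ u in Ioi (0:ℝ), T2 u‖ ≤ (Real.exp u₁ * C₂ + C₁ * C₃) * ε := by
    have hsplitT2 : (∫ u in Ioi (0:ℝ), ‖T2 u‖)
        = (∫ u in Ioc (0:ℝ) u₁, ‖T2 u‖) + ∫ u in Ioi u₁, ‖T2 u‖ := by
      rw [← setIntegral_union (Ioc_disjoint_Ioi le_rfl) measurableSet_Ioi hT2Ioc hT2Ioi2,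
        Ioc_union_Ioi_eq_Ioi hu₁0]
    have p1 : (∫ u in Ioc (0:ℝ) u₁, ‖T2 u‖) ≤ ε * Real.exp u₁ * C₂ := by
      have hmaj1 : IntegrableOn (fun u => ε * Real.exp u₁ * (‖F u‖ + 1)) (Ioc 0 u₁) :=
        ((hF1.norm.add (integrableOn_const measure_Ioc_lt_top.ne)).const_mul _)
      calc (∫ u in Ioc (0:ℝ) u₁, ‖T2 u‖)
          ≤ ∫ u in Ioc (0:ℝ) u₁, ε * Real.exp u₁ * (‖F u‖ + 1) := by
            refine setIntegral_mono_on hT2Ioc hmaj1 measurableSet_Ioc fun u hu => ?_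
            rw [hT2]
            simp only
            rw [norm_mul, Complex.norm_real, Real.norm_eq_abs]
            have e1 := (hB01 u).1
            have e2 := (hB01 u).2
            have h5 : |B u - 1| ≤ ε * Real.exp u₁ := by
              rw [abs_sub_comm, abs_of_nonneg (by linarith)]
              have := hB1 u (le_of_lt hu.1)
              have hmono : Real.exp u ≤ Real.exp u₁ := Real.exp_le_exp.mpr hu.2
              nlinarith
            have h6 : ‖F u - (E u : ℂ)‖ ≤ ‖F u‖ + 1 := by
              calc ‖F u - (E u : ℂ)‖ ≤ ‖F u‖ + ‖(E u : ℂ)‖ := norm_sub_le _ _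
                _ ≤ ‖F u‖ + 1 := by
                    rw [Complex.norm_real, Real.norm_eq_abs, abs_of_pos (Real.exp_pos _)]
                    have := hE1 u (le_of_lt hu.1); linarith
            apply mul_le_mul h5 h6 (norm_nonneg _) (by positivity)
        _ = ε * Real.exp u₁ * C₂ := by rw [integral_const_mul]
    have p2 : (∫ u in Ioi u₁, ‖T2 u‖) ≤ ε * C₁ * C₃ := by
      have hmaj2 : IntegrableOn (fun u => ε * C₁ * E u) (Ioi u₁) := (hexp u₁).const_mul _
      calc (∫ u in Ioi u₁, ‖T2 u‖) ≤ ∫ u in Ioi u₁, ε * C₁ * E u := by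
            refine setIntegral_mono_on hT2Ioi2 hmaj2 measurableSet_Ioi fun u hu => ?_
            rw [hT2]
            simp only
            rw [norm_mul, Complex.norm_real, Real.norm_eq_abs]
            have hu0 : (0:ℝ) ≤ u := hu₁0.trans (le_of_lt hu)
            have e2 := (hB01 u).2
            have h5 : |B u - 1| ≤ ε * Real.exp u := by
              rw [abs_sub_comm, abs_of_nonneg (by linarith)]
              exact hB1 u hu0
            have h6 : ‖F u - (E u : ℂ)‖ ≤ C₁ * Real.exp (-((1 + α) * u)) := by
              rw [hE]; exact hF u (hu₁u₀.trans (le_of_lt hu))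
            have hee : Real.exp u * Real.exp (-((1 + α) * u)) = Real.exp (-(α * u)) := by
              rw [← Real.exp_add]; ring_nf
            have key : ε * Real.exp u * (C₁ * Real.exp (-((1 + α) * u))) = ε * C₁ * E u := by
              calc ε * Real.exp u * (C₁ * Real.exp (-((1 + α) * u)))
                  = ε * C₁ * (Real.exp u * Real.exp (-((1 + α) * u))) := by ring
                _ = ε * C₁ * Real.exp (-(α * u)) := by rw [hee]
                _ = ε * C₁ * E u := rfl
            rw [← key]
            apply mul_le_mul h5 h6 (norm_nonneg _) (by positivity)
        _ = ε * C₁ * C₃ := by rw [integral_const_mul]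
    calc ‖∫ u in Ioi (0:ℝ), T2 u‖ ≤ ∫ u in Ioi (0:ℝ), ‖T2 u‖ :=
        norm_integral_le_integral_norm _
      _ = (∫ u in Ioc (0:ℝ) u₁, ‖T2 u‖) + ∫ u in Ioi u₁, ‖T2 u‖ := hsplitT2
      _ ≤ ε * Real.exp u₁ * C₂ + ε * C₁ * C₃ := add_le_add p1 p2
      _ = (Real.exp u₁ * C₂ + C₁ * C₃) * ε := by ring
  have bnd3 : |(∫ u in Ioi (0:ℝ), m u) - Real.Gamma (-α) * ε ^ α|
      ≤ (1/α + 1/(α*(1-α))) * ε := by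
    have := main_term α ε hα0 hα1 hε
    simpa only [hm, hB, hE] using this
  rw [hdecomp]
  have hcast : (∫ u in Ioi (0:ℝ), T1 u) + (∫ u in Ioi (0:ℝ), T2 u)
        + (((∫ u in Ioi (0:ℝ), m u) : ℝ) : ℂ) - ((Real.Gamma (-α) * ε ^ α : ℝ) : ℂ)
      = (∫ u in Ioi (0:ℝ), T1 u) + (∫ u in Ioi (0:ℝ), T2 u)
        + ((((∫ u in Ioi (0:ℝ), m u) - Real.Gamma (-α) * ε ^ α : ℝ)) : ℂ) := by
    push_cast
    ring
  rw [hcast]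
  calc ‖(∫ u in Ioi (0:ℝ), T1 u) + (∫ u in Ioi (0:ℝ), T2 u)
        + ((((∫ u in Ioi (0:ℝ), m u) - Real.Gamma (-α) * ε ^ α : ℝ)) : ℂ)‖
      ≤ ‖(∫ u in Ioi (0:ℝ), T1 u) + (∫ u in Ioi (0:ℝ), T2 u)‖
        + ‖((((∫ u in Ioi (0:ℝ), m u) - Real.Gamma (-α) * ε ^ α : ℝ)) : ℂ)‖ :=
        norm_add_le _ _
    _ ≤ ‖∫ u in Ioi (0:ℝ), T1 u‖ + ‖∫ u in Ioi (0:ℝ), T2 u‖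
        + |(∫ u in Ioi (0:ℝ), m u) - Real.Gamma (-α) * ε ^ α| := by
        rw [Complex.norm_real, Real.norm_eq_abs]
        exact add_le_add (norm_add_le _ _) le_rfl
    _ ≤ CF * ε + (Real.exp u₁ * C₂ + C₁ * C₃) * ε + (1/α + 1/(α*(1-α))) * ε := by
        exact add_le_add (add_le_add bnd1 bnd2) bnd3
    _ = (CF + Real.exp u₁ * C₂ + C₁ * C₃ + (1/α + 1/(α*(1-α)))) * ε := by ring
end

section
/- Let X > 0, 0 < α < 1 and φ ∈ (−π, π). Then, as ε → 0+, ∫_{−∞}^{∞} exp(−X e^{u} − 2εX cosh u) · e^{αu}/(1 + e^{u + iφ}) du = ∫_{−∞}^{∞} exp(−X e^{u}) · e^{αu}/(1 + e^{u + iφ}) du + Γ(−α) X^{α} ε^{α} + O(ε). -/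
open MeasureTheory Set Filter Topology

namespace AsymptAux




/-- The dominating function `min (e^{αu}, e^{(α-1)u})`. -/
noncomputable def Bnd (α u : ℝ) : ℝ := min (Real.exp (α * u)) (Real.exp ((α - 1) * u))

lemma Bnd_nonneg (α u : ℝ) : 0 ≤ Bnd α u :=
  le_min (Real.exp_pos _).le (Real.exp_pos _).le

lemma Bnd_cont (α : ℝ) : Continuous (Bnd α) := by
  unfold Bnd; fun_prop

lemma Bnd_eq1 (α u : ℝ) : Real.exp (α * u) * min 1 (Real.exp (-u)) = Bnd α u := by
  rw [mul_min_of_nonneg _ _ (Real.exp_pos (α * u)).le, mul_one, ← Real.exp_add]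
  unfold Bnd
  ring_nf

lemma Bnd_eq2 (α u : ℝ) : Real.exp ((α - 1) * u) * min 1 (Real.exp u) = Bnd α u := by
  rw [mul_min_of_nonneg _ _ (Real.exp_pos ((α - 1) * u)).le, mul_one, ← Real.exp_add, min_comm]
  unfold Bnd
  ring_nf

lemma min_one_mul (a b : ℝ) (ha : 0 ≤ a) (hb : 0 ≤ b) :
    min 1 (a * b) ≤ (1 + a) * min 1 b := by
  rcases le_total b 1 with h | h
  · rw [min_eq_right h]
    calc min 1 (a * b) ≤ a * b := min_le_right _ _
    _ ≤ (1 + a) * b := by nlinarith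
  · rw [min_eq_left h]
    calc min 1 (a * b) ≤ 1 := min_le_left _ _
    _ ≤ (1 + a) * 1 := by nlinarith

lemma one_sub_exp_neg_le_min (x : ℝ) (hx : 0 ≤ x) : 1 - Real.exp (-x) ≤ min 1 x := by
  refine le_min (by have := Real.exp_pos (-x); linarith) ?_
  have := Real.add_one_le_exp (-x)
  linarith

lemma exp_neg_le_inv {x : ℝ} (hx : 0 < x) : Real.exp (-x) ≤ x⁻¹ := by
  rw [Real.exp_neg]
  have hx2 : x ≤ Real.exp x := by have := Real.add_one_le_exp x; linarith
  exact inv_anti₀ hx hx2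

lemma Bnd_integrable {α : ℝ} (hα0 : 0 < α) (hα1 : α < 1) : Integrable (Bnd α) := by
  rw [← integrableOn_univ, ← Set.Iic_union_Ioi (a := (0:ℝ))]
  apply IntegrableOn.union
  · -- on Iic 0, dominated by exp (α * u)
    have hmaj : IntegrableOn (fun u : ℝ => Real.exp (α * u)) (Iic 0) := by
      have h := integrableOn_exp_Iic 0
      rw [← integrable_indicator_iff measurableSet_Iic] at h
      have h2 := h.comp_mul_left' (R := α) (ne_of_gt hα0)
      rw [← integrable_indicator_iff measurableSet_Iic]
      refine h2.congr (ae_of_all _ fun x => ?_)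
      rcases le_or_gt x 0 with hx | hx
      · have hax : α * x ≤ 0 := mul_nonpos_of_nonneg_of_nonpos hα0.le hx
        simp [Set.indicator_of_mem, hx, hax, Set.mem_Iic]
      · have hax : ¬ (α * x ≤ 0) := by nlinarith
        simp [Set.indicator_of_notMem, Set.mem_Iic, not_le.mpr hx, hax]
    refine hmaj.mono' ((Bnd_cont α).aestronglyMeasurable.restrict) ?_
    filter_upwards with u
    rw [Real.norm_eq_abs, abs_of_nonneg (Bnd_nonneg α u)]
    exact min_le_left _ _
  · -- on Ioi 0, dominated by exp (-(1-α) * u)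
    have hmaj : IntegrableOn (fun u : ℝ => Real.exp (-(1 - α) * u)) (Ioi 0) :=
      exp_neg_integrableOn_Ioi 0 (by linarith)
    refine hmaj.mono' ((Bnd_cont α).aestronglyMeasurable.restrict) ?_
    filter_upwards with u
    rw [Real.norm_eq_abs, abs_of_nonneg (Bnd_nonneg α u)]
    have : (α - 1) * u = -(1 - α) * u := by ring
    rw [← this]
    exact min_le_right _ _

lemma integrable_of_le_Bnd {α : ℝ} (hα0 : 0 < α) (hα1 : α < 1) {E : Type*}
    [NormedAddCommGroup E] {f : ℝ → E} (hc : AEStronglyMeasurable f volume) (c' : ℝ)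
    (h : ∀ u, ‖f u‖ ≤ c' * Bnd α u) : Integrable f :=
  (((Bnd_integrable hα0 hα1).const_mul c').mono' hc (ae_of_all _ h))






lemma norm_one_add_exp_sq (u φ : ℝ) :
    ‖1 + Complex.exp ((u : ℂ) + Complex.I * (φ : ℂ))‖ ^ 2 =
      (1 + Real.exp u * Real.cos φ) ^ 2 + (Real.exp u * Real.sin φ) ^ 2 := by
  rw [Complex.sq_norm, Complex.normSq_apply]
  have hre : (1 + Complex.exp ((u : ℂ) + Complex.I * (φ : ℂ))).re
      = 1 + Real.exp u * Real.cos φ := by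
    simp [Complex.exp_re]
  have him : (1 + Complex.exp ((u : ℂ) + Complex.I * (φ : ℂ))).im
      = Real.exp u * Real.sin φ := by
    simp [Complex.exp_im]
  rw [hre, him]; ring

lemma denom_lower (φ : ℝ) (hφ : φ ∈ Set.Ioo (-Real.pi) Real.pi) :
    ∃ c : ℝ, 0 < c ∧ ∀ u : ℝ,
      c * max 1 (Real.exp u) ≤ ‖1 + Complex.exp ((u : ℂ) + Complex.I * (φ : ℂ))‖ := by
  have hpyth : Real.sin φ ^ 2 + Real.cos φ ^ 2 = 1 := Real.sin_sq_add_cos_sq φ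
  rcases le_or_gt 0 (Real.cos φ) with hcos | hcos
  · refine ⟨1, one_pos, fun u => ?_⟩
    set w := ‖1 + Complex.exp ((u : ℂ) + Complex.I * (φ : ℂ))‖ with hw
    have hw0 : 0 ≤ w := norm_nonneg _
    have hsq := norm_one_add_exp_sq u φ
    have hr : 0 < Real.exp u := Real.exp_pos u
    have hM : (1 : ℝ) * max 1 (Real.exp u) ^ 2 ≤ w ^ 2 := by
      rw [hsq]
      rcases le_total (Real.exp u) 1 with h | h
      · rw [max_eq_left h]
        nlinarith [mul_nonneg hr.le hcos, sq_nonneg (Real.exp u * Real.sin φ)]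
      · rw [max_eq_right h]
        nlinarith [mul_nonneg hr.le hcos, sq_nonneg (Real.exp u * Real.sin φ)]
    have hM0 : (0:ℝ) ≤ 1 * max 1 (Real.exp u) := by positivity
    nlinarith [sq_nonneg (w - 1 * max 1 (Real.exp u))]
  · have hsin : Real.sin φ ≠ 0 := by
      intro h
      have := (Real.sin_eq_zero_iff_of_lt_of_lt hφ.1 hφ.2).mp h
      rw [this] at hcos
      norm_num [Real.cos_zero] at hcos
    refine ⟨|Real.sin φ|, abs_pos.mpr hsin, fun u => ?_⟩
    set w := ‖1 + Complex.exp ((u : ℂ) + Complex.I * (φ : ℂ))‖ with hw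
    have hw0 : 0 ≤ w := norm_nonneg _
    have hsq := norm_one_add_exp_sq u φ
    have hr : 0 < Real.exp u := Real.exp_pos u
    have habs : |Real.sin φ| ^ 2 = Real.sin φ ^ 2 := sq_abs _
    have hM : (|Real.sin φ| * max 1 (Real.exp u)) ^ 2 ≤ w ^ 2 := by
      rw [hsq, mul_pow, habs]
      rcases le_total (Real.exp u) 1 with h | h
      · rw [max_eq_left h]
        nlinarith [sq_nonneg (Real.exp u + Real.cos φ)]
      · rw [max_eq_right h]
        nlinarith [sq_nonneg (1 + Real.exp u * Real.cos φ)]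
    have hM0 : (0:ℝ) ≤ |Real.sin φ| * max 1 (Real.exp u) := by positivity
    nlinarith [sq_nonneg (w - |Real.sin φ| * max 1 (Real.exp u))]






-- change of variables t = exp (-u)
private theorem rexp_neg_deriv_aux :
    ∀ x ∈ (univ : Set ℝ), HasDerivWithinAt (Real.exp ∘ Neg.neg) (-Real.exp (-x)) univ x :=
  fun x _ ↦ mul_neg_one (Real.exp (-x)) ▸
    ((Real.hasDerivAt_exp (-x)).comp x (hasDerivAt_neg x)).hasDerivWithinAt

private theorem rexp_neg_image_aux : Real.exp ∘ Neg.neg '' univ = Ioi 0 := by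
  rw [Set.image_comp, Set.image_univ_of_surjective neg_surjective, Set.image_univ, Real.range_exp]

private theorem rexp_neg_injOn_aux : (univ : Set ℝ).InjOn (Real.exp ∘ Neg.neg) :=
  Real.exp_injective.injOn.comp neg_injective.injOn (univ.mapsTo_univ _)

lemma J_eq {α : ℝ} (hα0 : 0 < α) (hα1 : α < 1) {s : ℝ} (hs : 0 < s) :
    ∫ u : ℝ, Real.exp ((α - 1) * u) * Real.exp (-(s * Real.exp (-u)))
      = s ^ (α - 1) * Real.Gamma (1 - α) := by
  have key := integral_image_eq_integral_abs_deriv_smul MeasurableSet.univ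
    rexp_neg_deriv_aux rexp_neg_injOn_aux
    (fun t : ℝ => t ^ (-α) * Real.exp (-(s * t)))
  rw [rexp_neg_image_aux, setIntegral_univ] at key
  have hptw : ∀ u : ℝ, |(-Real.exp (-u))| •
      ((Real.exp ∘ Neg.neg) u ^ (-α) * Real.exp (-(s * (Real.exp ∘ Neg.neg) u)))
      = Real.exp ((α - 1) * u) * Real.exp (-(s * Real.exp (-u))) := by
    intro u
    have h1 : (Real.exp ∘ Neg.neg) u = Real.exp (-u) := rfl
    rw [h1, abs_neg, abs_of_pos (Real.exp_pos _), smul_eq_mul,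
      Real.rpow_def_of_pos (Real.exp_pos _), Real.log_exp]
    rw [← mul_assoc, ← Real.exp_add]
    ring_nf
  rw [funext hptw] at key
  rw [← key]
  have := Real.integral_rpow_mul_exp_neg_mul_Ioi (a := 1 - α) (r := s)
    (by linarith) hs
  have h2 : ∀ t : ℝ, t ^ (1 - α - 1) = t ^ (-α) := by
    intro t; norm_num
  simp_rw [h2] at this
  rw [this]
  congr 1
  rw [one_div, ← Real.rpow_neg_one s, ← Real.rpow_mul hs.le]
  congr 1
  ring



lemma abs_exp_neg_sub_one_le {x : ℝ} (hx : 0 ≤ x) : |Real.exp (-x) - 1| ≤ min 1 x := by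
  have h1 : Real.exp (-x) ≤ 1 := by
    have : Real.exp (-x) ≤ Real.exp 0 := Real.exp_le_exp.mpr (neg_nonpos.mpr hx)
    simpa using this
  rw [abs_sub_comm, abs_of_nonneg (by linarith)]
  exact one_sub_exp_neg_le_min x hx

lemma gamma_main {α : ℝ} (hα0 : 0 < α) (hα1 : α < 1) {s : ℝ} (hs : 0 < s) :
    ∫ u : ℝ, Real.exp (α * u) * (Real.exp (-(s * Real.exp (-u))) - 1)
      = Real.Gamma (-α) * s ^ α := by
  set f1 : ℝ → ℝ := fun u => Real.exp (α * u) * (Real.exp (-(s * Real.exp (-u))) - 1)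
    with hf1def
  set f2 : ℝ → ℝ := fun u => Real.exp ((α - 1) * u) * Real.exp (-(s * Real.exp (-u)))
    with hf2def
  have hb1 : ∀ u, ‖f1 u‖ ≤ (1 + s) * Bnd α u := by
    intro u
    have hx : (0:ℝ) ≤ s * Real.exp (-u) := by positivity
    have h1 := abs_exp_neg_sub_one_le hx
    have h2 : min 1 (s * Real.exp (-u)) ≤ (1 + s) * min 1 (Real.exp (-u)) :=
      min_one_mul s (Real.exp (-u)) hs.le (Real.exp_pos _).le
    have h3 : ‖f1 u‖ = Real.exp (α * u) * |Real.exp (-(s * Real.exp (-u))) - 1| := by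
      simp only [hf1def]
      rw [Real.norm_eq_abs, abs_mul, abs_of_pos (Real.exp_pos _)]
    rw [h3, ← Bnd_eq1 α u]
    calc Real.exp (α * u) * |Real.exp (-(s * Real.exp (-u))) - 1|
        ≤ Real.exp (α * u) * ((1 + s) * min 1 (Real.exp (-u))) :=
          mul_le_mul_of_nonneg_left (le_trans h1 h2) (Real.exp_pos _).le
      _ = (1 + s) * (Real.exp (α * u) * min 1 (Real.exp (-u))) := by ring
  have hb2 : ∀ u, ‖f2 u‖ ≤ (1 + s⁻¹) * Bnd α u := by
    intro u
    have hx : (0:ℝ) < s * Real.exp (-u) := by positivity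
    have h1 : Real.exp (-(s * Real.exp (-u))) ≤ min 1 (s⁻¹ * Real.exp u) := by
      refine le_min ?_ ?_
      · have : Real.exp (-(s * Real.exp (-u))) ≤ Real.exp 0 :=
          Real.exp_le_exp.mpr (by linarith)
        simpa using this
      · have := exp_neg_le_inv hx
        rwa [mul_inv, ← Real.exp_neg, neg_neg] at this
    have h2 : min 1 (s⁻¹ * Real.exp u) ≤ (1 + s⁻¹) * min 1 (Real.exp u) :=
      min_one_mul s⁻¹ (Real.exp u) (by positivity) (Real.exp_pos _).le
    have h3 : ‖f2 u‖ = Real.exp ((α - 1) * u) * Real.exp (-(s * Real.exp (-u))) := by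
      simp only [hf2def]
      rw [Real.norm_eq_abs, abs_mul, abs_of_pos (Real.exp_pos _), abs_of_pos (Real.exp_pos _)]
    rw [h3, ← Bnd_eq2 α u]
    calc Real.exp ((α - 1) * u) * Real.exp (-(s * Real.exp (-u)))
        ≤ Real.exp ((α - 1) * u) * ((1 + s⁻¹) * min 1 (Real.exp u)) :=
          mul_le_mul_of_nonneg_left (le_trans h1 h2) (Real.exp_pos _).le
      _ = (1 + s⁻¹) * (Real.exp ((α - 1) * u) * min 1 (Real.exp u)) := by ring
  have hif1 : Integrable f1 := by
    refine integrable_of_le_Bnd hα0 hα1 ?_ (1 + s) hb1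
    apply Continuous.aestronglyMeasurable
    simp only [hf1def]; fun_prop
  have hif2 : Integrable f2 := by
    refine integrable_of_le_Bnd hα0 hα1 ?_ (1 + s⁻¹) hb2
    apply Continuous.aestronglyMeasurable
    simp only [hf2def]; fun_prop
  have hderiv : ∀ u : ℝ, HasDerivAt
      (fun v => α⁻¹ * (Real.exp (α * v) * (Real.exp (-(s * Real.exp (-v))) - 1)))
      (f1 u + s * α⁻¹ * f2 u) u := by
    intro u
    have h1 : HasDerivAt (fun v : ℝ => α * v) α u := by
      simpa using (hasDerivAt_id u).const_mul α
    have hg : HasDerivAt (fun v => Real.exp (α * v)) (Real.exp (α * u) * α) u :=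
      (Real.hasDerivAt_exp (α * u)).comp u h1
    have hneg : HasDerivAt (fun v : ℝ => -v) (-1 : ℝ) u := by
      exact hasDerivAt_neg u
    have hexpneg : HasDerivAt (fun v : ℝ => Real.exp (-v)) (Real.exp (-u) * (-1)) u :=
      (Real.hasDerivAt_exp (-u)).comp u hneg
    have hin : HasDerivAt (fun v : ℝ => -(s * Real.exp (-v))) (s * Real.exp (-u)) u := by
      have := (hexpneg.const_mul s).neg
      refine this.congr_deriv (Eq.symm ?_)
      ring
    have hh : HasDerivAt (fun v => Real.exp (-(s * Real.exp (-v))) - 1)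
        (Real.exp (-(s * Real.exp (-u))) * (s * Real.exp (-u))) u :=
      ((Real.hasDerivAt_exp _).comp u hin).sub_const 1
    have hmain := (hg.mul hh).const_mul α⁻¹
    refine hmain.congr_deriv (Eq.symm ?_)
    simp only [hf1def, hf2def]
    rw [show (α - 1) * u = α * u + -u from by ring, Real.exp_add]
    field_simp
  have hbot : Tendsto
      (fun v => α⁻¹ * (Real.exp (α * v) * (Real.exp (-(s * Real.exp (-v))) - 1)))
      atBot (𝓝 0) := by
    have h0 : Tendsto (fun u : ℝ => α⁻¹ * Real.exp (α * u)) atBot (𝓝 (α⁻¹ * 0)) :=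
      (Real.tendsto_exp_atBot.comp (tendsto_id.const_mul_atBot hα0)).const_mul α⁻¹
    rw [mul_zero] at h0
    refine squeeze_zero_norm (fun u => ?_) h0
    have hx : (0:ℝ) ≤ s * Real.exp (-u) := by positivity
    have h1 := abs_exp_neg_sub_one_le hx
    rw [norm_mul, norm_mul, Real.norm_eq_abs (Real.exp _), abs_of_pos (Real.exp_pos _),
      Real.norm_eq_abs, abs_of_pos (by positivity : (0:ℝ) < α⁻¹)]
    have hle : |Real.exp (-(s * Real.exp (-u))) - 1| ≤ 1 := le_trans h1 (min_le_left _ _)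
    rw [Real.norm_eq_abs]
    have h2 := mul_le_mul_of_nonneg_left hle (Real.exp_pos (α * u)).le
    have h3 : (0:ℝ) ≤ α⁻¹ := by positivity
    calc α⁻¹ * (Real.exp (α * u) * |Real.exp (-(s * Real.exp (-u))) - 1|)
        ≤ α⁻¹ * (Real.exp (α * u) * 1) := mul_le_mul_of_nonneg_left h2 h3
      _ = α⁻¹ * Real.exp (α * u) := by ring
  have htop : Tendsto
      (fun v => α⁻¹ * (Real.exp (α * v) * (Real.exp (-(s * Real.exp (-v))) - 1)))
      atTop (𝓝 0) := by
    have h0 : Tendsto (fun u : ℝ => (α⁻¹ * s) * Real.exp (-((1 - α) * u))) atTop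
        (𝓝 ((α⁻¹ * s) * 0)) := by
      refine Tendsto.const_mul _ ?_
      exact Real.tendsto_exp_atBot.comp
        (tendsto_neg_atTop_atBot.comp (tendsto_id.const_mul_atTop (by linarith : (0:ℝ) < 1 - α)))
    rw [mul_zero] at h0
    refine squeeze_zero_norm (fun u => ?_) h0
    have hx : (0:ℝ) ≤ s * Real.exp (-u) := by positivity
    have h1 : |Real.exp (-(s * Real.exp (-u))) - 1| ≤ s * Real.exp (-u) :=
      le_trans (abs_exp_neg_sub_one_le hx) (min_le_right _ _)
    rw [norm_mul, norm_mul, Real.norm_eq_abs (Real.exp _), abs_of_pos (Real.exp_pos _),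
      Real.norm_eq_abs, abs_of_pos (by positivity : (0:ℝ) < α⁻¹), Real.norm_eq_abs]
    have key : Real.exp (α * u) * (s * Real.exp (-u)) = s * Real.exp (-((1 - α) * u)) := by
      rw [show -((1 - α) * u) = α * u + -u from by ring, Real.exp_add]
      ring
    have h2 := mul_le_mul_of_nonneg_left h1 (Real.exp_pos (α * u)).le
    have h3 : (0:ℝ) ≤ α⁻¹ := by positivity
    calc α⁻¹ * (Real.exp (α * u) * |Real.exp (-(s * Real.exp (-u))) - 1|)
        ≤ α⁻¹ * (Real.exp (α * u) * (s * Real.exp (-u))) := mul_le_mul_of_nonneg_left h2 h3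
      _ = α⁻¹ * s * Real.exp (-((1 - α) * u)) := by rw [key]; ring
  have hFTC := integral_of_hasDerivAt_of_tendsto hderiv
    (hif1.add (hif2.const_mul (s * α⁻¹))) hbot htop
  rw [sub_zero] at hFTC
  rw [integral_add hif1 (hif2.const_mul (s * α⁻¹)), integral_const_mul] at hFTC
  have hJ : ∫ u, f2 u = s ^ (α - 1) * Real.Gamma (1 - α) := J_eq hα0 hα1 hs
  rw [hJ] at hFTC
  have hG : Real.Gamma (1 - α) = -α * Real.Gamma (-α) := by
    have h := Real.Gamma_add_one (s := -α) (by simpa using hα0.ne')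
    rw [show -α + 1 = 1 - α by ring] at h
    rw [h]
  have hpow : s * s ^ (α - 1) = s ^ α := by
    have : s ^ α = s ^ ((α - 1) + 1) := by norm_num
    rw [this, Real.rpow_add hs, Real.rpow_one]
    ring
  have hint : ∫ u, f1 u = -(s * α⁻¹ * (s ^ (α - 1) * Real.Gamma (1 - α))) := by
    linarith [hFTC]
  rw [hint, hG]
  have hαne : α ≠ 0 := hα0.ne'
  field_simp
  linear_combination Real.Gamma (-α) * hpow

lemma inv_max_exp (u : ℝ) : (max 1 (Real.exp u))⁻¹ = min 1 (Real.exp (-u)) := by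
  have hmul : Real.exp (-u) * Real.exp u = 1 := by
    rw [← Real.exp_add]; simp
  have hpos := Real.exp_pos u
  have hnpos := Real.exp_pos (-u)
  rcases le_total (Real.exp u) 1 with h | h
  · rw [max_eq_left h, inv_one, min_eq_left]
    nlinarith
  · rw [max_eq_right h, min_eq_right]
    · rw [Real.exp_neg]
    · nlinarith

lemma exp_neg_mul_min (u : ℝ) : Real.exp (-u) * min 1 (Real.exp u) = min 1 (Real.exp (-u)) := by
  rw [mul_min_of_nonneg _ _ (Real.exp_pos (-u)).le, mul_one, ← Real.exp_add]
  have : -u + u = 0 := by ring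
  rw [this, Real.exp_zero, min_comm]

lemma exp_decay_bound {X : ℝ} (hX : 0 < X) (u : ℝ) :
    Real.exp (-(X * Real.exp u)) * (Real.exp u * (max 1 (Real.exp u))⁻¹)
      ≤ max 1 X⁻¹ * min 1 (Real.exp (-u)) := by
  have hpos := Real.exp_pos u
  have hnpos := Real.exp_pos (-u)
  have hmul : Real.exp (-u) * Real.exp u = 1 := by rw [← Real.exp_add]; simp
  have hp1 : Real.exp (-(X * Real.exp u)) ≤ 1 := by
    have : Real.exp (-(X * Real.exp u)) ≤ Real.exp 0 := by
      apply Real.exp_le_exp.mpr; nlinarith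
    simpa using this
  have hppos := Real.exp_pos (-(X * Real.exp u))
  rcases le_total (Real.exp u) 1 with h | h
  · rw [max_eq_left h, inv_one, min_eq_left (by nlinarith : (1:ℝ) ≤ Real.exp (-u))]
    have h1 : (1:ℝ) ≤ max 1 X⁻¹ := le_max_left _ _
    nlinarith
  · rw [max_eq_right h, min_eq_right (by nlinarith : Real.exp (-u) ≤ (1:ℝ))]
    have h1 : X⁻¹ ≤ max 1 X⁻¹ := le_max_right _ _
    have h2 : Real.exp (-(X * Real.exp u)) ≤ (X * Real.exp u)⁻¹ :=
      exp_neg_le_inv (by positivity)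
    have h3 : Real.exp u * (Real.exp u)⁻¹ = 1 := mul_inv_cancel₀ (ne_of_gt hpos)
    have h4 : (X * Real.exp u)⁻¹ = X⁻¹ * Real.exp (-u) := by
      rw [mul_inv, Real.exp_neg]
    calc Real.exp (-(X * Real.exp u)) * (Real.exp u * (Real.exp u)⁻¹)
        = Real.exp (-(X * Real.exp u)) := by rw [h3, mul_one]
      _ ≤ X⁻¹ * Real.exp (-u) := by rw [← h4]; exact h2
      _ ≤ max 1 X⁻¹ * Real.exp (-u) := by nlinarith

end AsymptAux

set_option maxHeartbeats 1000000 in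
/-- Step 1 of Appendix B, second part: for `X > 0`, `0 < α < 1` and
`φ ∈ (−π,π)`, as `ε → 0+`,
`∫_ℝ exp(−Xe^u − 2εX cosh u) e^{αu}/(1+e^{u+iφ}) du
  = ∫_ℝ exp(−Xe^u) e^{αu}/(1+e^{u+iφ}) du + Γ(−α) X^α ε^α + O(ε)`. -/
theorem asympt_single (X : ℝ) (hX : 0 < X) (α : ℝ) (hα0 : 0 < α) (hα1 : α < 1)
    (φ : ℝ) (hφ : φ ∈ Set.Ioo (-Real.pi) Real.pi) :
    ∃ C ε₀ : ℝ, 0 < ε₀ ∧ ∀ ε : ℝ, 0 < ε → ε ≤ ε₀ →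
      ‖(∫ u : ℝ, (Real.exp (-(X * Real.exp u) - 2 * ε * X * Real.cosh u) : ℂ) *
            Complex.exp ((α : ℂ) * (u : ℂ)) /
              (1 + Complex.exp ((u : ℂ) + Complex.I * (φ : ℂ))))
          - (∫ u : ℝ, (Real.exp (-(X * Real.exp u)) : ℂ) *
              Complex.exp ((α : ℂ) * (u : ℂ)) /
                (1 + Complex.exp ((u : ℂ) + Complex.I * (φ : ℂ))))
          - ((Real.Gamma (-α) * X ^ α * ε ^ α : ℝ) : ℂ)‖ ≤ C * ε := by
  classical
  obtain ⟨c, hc, hlow⟩ := AsymptAux.denom_lower φ hφ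
  set K : ℝ := (X * (X + 1) + X * max 1 X⁻¹) / c with hK
  refine ⟨K * (∫ u : ℝ, AsymptAux.Bnd α u), 1, one_pos, fun ε hε hε1 => ?_⟩
  have hεX : (0:ℝ) < ε * X := by positivity
  have hd0 : ∀ u : ℝ, (1 + Complex.exp ((u:ℂ) + Complex.I * (φ:ℂ))) ≠ 0 := by
    intro u h
    have h1 := hlow u
    rw [h, norm_zero] at h1
    have h2 : (1:ℝ) ≤ max 1 (Real.exp u) := le_max_left _ _
    nlinarith
  have hdpos : ∀ u : ℝ, 0 < ‖1 + Complex.exp ((u:ℂ) + Complex.I * (φ:ℂ))‖ := by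
    intro u
    have h2 : (1:ℝ) ≤ max 1 (Real.exp u) := le_max_left _ _
    have := hlow u
    nlinarith
  have hEnorm : ∀ u : ℝ, ‖Complex.exp ((α:ℂ) * (u:ℂ))‖ = Real.exp (α * u) := by
    intro u
    rw [Complex.norm_exp]
    congr 1
    simp
  -- pointwise key estimate
  have key : ∀ u : ℝ,
      ‖(Real.exp (-(X * Real.exp u) - 2 * ε * X * Real.cosh u) : ℂ) *
          Complex.exp ((α : ℂ) * (u : ℂ)) /
            (1 + Complex.exp ((u : ℂ) + Complex.I * (φ : ℂ)))
        - (Real.exp (-(X * Real.exp u)) : ℂ) *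
            Complex.exp ((α : ℂ) * (u : ℂ)) /
              (1 + Complex.exp ((u : ℂ) + Complex.I * (φ : ℂ)))
        - (((Real.exp (-(ε * X * Real.exp (-u))) - 1) * Real.exp (α * u) : ℝ) : ℂ)‖
        ≤ K * ε * AsymptAux.Bnd α u := by
    intro u
    set r := Real.exp u with hr
    set rn := Real.exp (-u) with hrn
    set eR := Real.exp (α * u) with heR
    set pR := Real.exp (-(X * r)) with hpR
    set aR := Real.exp (-(ε * X * r)) with haR
    set bR := Real.exp (-(ε * X * rn)) with hbR
    set D := 1 + Complex.exp ((u : ℂ) + Complex.I * (φ : ℂ)) with hD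
    have hrpos : 0 < r := Real.exp_pos u
    have hrnpos : 0 < rn := Real.exp_pos (-u)
    have heRpos : 0 < eR := Real.exp_pos _
    have hpRpos : 0 < pR := Real.exp_pos _
    have hbRpos : 0 < bR := Real.exp_pos _
    have hDnorm : c * max 1 r ≤ ‖D‖ := hlow u
    have hDpos : 0 < ‖D‖ := hdpos u
    have hDne : D ≠ 0 := hd0 u
    have hsplit : (Real.exp (-(X * r) - 2 * ε * X * Real.cosh u) : ℂ)
        = (pR : ℂ) * (aR : ℂ) * (bR : ℂ) := by
      rw [show -(X * r) - 2 * ε * X * Real.cosh u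
          = -(X * r) + (-(ε * X * r) + -(ε * X * rn)) from by
        rw [Real.cosh_eq, hr, hrn]; ring]
      rw [Real.exp_add, Real.exp_add, hpR, haR, hbR]
      push_cast
      ring
    have hEeq : Complex.exp ((α:ℂ) * (u:ℂ)) = ((eR : ℝ) : ℂ) := by
      rw [heR, Complex.ofReal_exp, Complex.ofReal_mul]
    rw [hsplit, hEeq]
    have hMcast : (((bR - 1) * eR : ℝ) : ℂ) = ((bR:ℂ) - 1) * ((eR:ℝ) : ℂ) := by
      push_cast; ring
    rw [hMcast]
    have hiden : (pR:ℂ) * (aR:ℂ) * (bR:ℂ) * (eR:ℂ) / D - (pR:ℂ) * (eR:ℂ) / D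
          - ((bR:ℂ) - 1) * ((eR:ℝ) : ℂ)
        = ((bR:ℂ) - 1) * ((pR:ℂ) * (eR:ℂ) / D - (eR:ℂ))
          + (pR:ℂ) * (bR:ℂ) * ((aR:ℂ) - 1) * (eR:ℂ) / D := by
      field_simp
      ring
    rw [hiden]
    have hb1 : ‖((bR:ℂ) - 1)‖ ≤ min 1 (ε * X * rn) := by
      rw [show ((bR:ℂ) - 1) = (((bR - 1 : ℝ)) : ℂ) from by push_cast; ring,
        Complex.norm_real, Real.norm_eq_abs, hbR]
      exact AsymptAux.abs_exp_neg_sub_one_le (by positivity)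
    have hw : ‖Complex.exp ((u:ℂ) + Complex.I * (φ:ℂ))‖ = r := by
      rw [Complex.norm_exp, hr]
      congr 1
      simp
    have hb2 : ‖(pR:ℂ) * (eR:ℂ) / D - (eR:ℂ)‖ ≤ (X + 1) * r * eR / (c * max 1 r) := by
      have hnum : (pR:ℂ) * (eR:ℂ) / D - (eR:ℂ) = ((pR:ℂ) - D) * (eR:ℂ) / D := by
        field_simp
      rw [hnum, norm_div, norm_mul]
      have hnum2 : ‖(pR:ℂ) - D‖ ≤ (X + 1) * r := by
        have hrw : (pR:ℂ) - D
            = ((pR - 1 : ℝ) : ℂ) - Complex.exp ((u:ℂ) + Complex.I * (φ:ℂ)) := by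
          rw [hD]; push_cast; ring
        rw [hrw]
        refine le_trans (norm_sub_le _ _) ?_
        rw [hw, Complex.norm_real, Real.norm_eq_abs]
        have h1 : |pR - 1| ≤ X * r := by
          refine le_trans ?_ (min_le_right 1 (X * r))
          rw [hpR]
          exact AsymptAux.abs_exp_neg_sub_one_le (by positivity)
        nlinarith
      rw [Complex.norm_real, Real.norm_eq_abs, abs_of_pos heRpos]
      have hmx : (1:ℝ) ≤ max 1 r := le_max_left _ _
      refine div_le_div₀ (by positivity) ?_ (by nlinarith) hDnorm
      nlinarith [heRpos]
    have hb3 : ‖(pR:ℂ) * (bR:ℂ) * ((aR:ℂ) - 1) * (eR:ℂ) / D‖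
        ≤ pR * (ε * X * r) * eR / (c * max 1 r) := by
      rw [norm_div, norm_mul, norm_mul, norm_mul]
      have ha1 : ‖(aR:ℂ) - 1‖ ≤ ε * X * r := by
        rw [show ((aR:ℂ) - 1) = ((aR - 1 : ℝ):ℂ) from by push_cast; ring,
          Complex.norm_real, Real.norm_eq_abs, haR]
        exact le_trans (AsymptAux.abs_exp_neg_sub_one_le (by positivity))
          (min_le_right _ _)
      have hbR1 : bR ≤ 1 := by
        rw [hbR]
        have : Real.exp (-(ε * X * rn)) ≤ Real.exp 0 := by
          apply Real.exp_le_exp.mpr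
          nlinarith
        simpa using this
      rw [Complex.norm_real, Complex.norm_real, Complex.norm_real,
        Real.norm_eq_abs, Real.norm_eq_abs, Real.norm_eq_abs,
        abs_of_pos hpRpos, abs_of_pos hbRpos, abs_of_pos heRpos]
      have hmx : (1:ℝ) ≤ max 1 r := le_max_left _ _
      refine div_le_div₀ (by positivity) ?_ (by nlinarith) hDnorm
      calc pR * bR * ‖(aR:ℂ) - 1‖ * eR
          ≤ pR * 1 * (ε * X * r) * eR := by gcongr
        _ = pR * (ε * X * r) * eR := by ring
    refine le_trans (norm_add_le _ _) ?_
    rw [norm_mul]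
    have combine1 : ‖(bR:ℂ) - 1‖ * ‖(pR:ℂ) * (eR:ℂ) / D - (eR:ℂ)‖
        ≤ min 1 (ε * X * rn) * ((X + 1) * r * eR / (c * max 1 r)) := by
      refine mul_le_mul hb1 hb2 (norm_nonneg _) (by positivity)
    refine le_trans (add_le_add combine1 hb3) ?_
    -- arithmetic
    have hmx : (1:ℝ) ≤ max 1 r := le_max_left _ _
    have hmxpos : (0:ℝ) < max 1 r := by linarith
    have hinv : (max 1 r)⁻¹ = min 1 rn := by
      rw [hr, hrn]; exact AsymptAux.inv_max_exp u
    have hq : rn * min 1 r = min 1 rn := by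
      rw [hr, hrn]; exact AsymptAux.exp_neg_mul_min u
    have hrq : r * (max 1 r)⁻¹ ≤ min 1 r := by
      rw [hinv, mul_min_of_nonneg _ _ hrpos.le, mul_one]
      have hone : r * rn = 1 := by rw [hr, hrn, ← Real.exp_add]; simp
      rw [hone]
      exact (min_comm r 1).le
    have hA : min 1 (ε * X * rn) * (r * (max 1 r)⁻¹) ≤ ε * X * min 1 rn := by
      calc min 1 (ε * X * rn) * (r * (max 1 r)⁻¹) ≤ (ε * X * rn) * min 1 r := by
            refine mul_le_mul (min_le_right _ _) hrq (by positivity) (by positivity)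
        _ = ε * X * (rn * min 1 r) := by ring
        _ = ε * X * min 1 rn := by rw [hq]
    have hB : pR * (r * (max 1 r)⁻¹) ≤ max 1 X⁻¹ * min 1 rn := by
      rw [hpR, hr, hrn]
      exact AsymptAux.exp_decay_bound hX u
    have hcne : c ≠ 0 := hc.ne'
    have hmxne : max 1 r ≠ 0 := hmxpos.ne'
    calc min 1 (ε * X * rn) * ((X + 1) * r * eR / (c * max 1 r))
          + pR * (ε * X * r) * eR / (c * max 1 r)
        = ((X + 1) * eR / c) * (min 1 (ε * X * rn) * (r * (max 1 r)⁻¹))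
          + (ε * X * eR / c) * (pR * (r * (max 1 r)⁻¹)) := by
          field_simp
      _ ≤ ((X + 1) * eR / c) * (ε * X * min 1 rn)
          + (ε * X * eR / c) * (max 1 X⁻¹ * min 1 rn) := by
          refine add_le_add (mul_le_mul_of_nonneg_left hA (by positivity))
            (mul_le_mul_of_nonneg_left hB (by positivity))
      _ = K * ε * (eR * min 1 rn) := by
          rw [hK]
          field_simp
      _ = K * ε * AsymptAux.Bnd α u := by
          rw [heR, hrn, AsymptAux.Bnd_eq1]
  -- integrability
  have hint1 : Integrable (fun u : ℝ =>
      (Real.exp (-(X * Real.exp u) - 2 * ε * X * Real.cosh u) : ℂ) *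
        Complex.exp ((α:ℂ) * (u:ℂ)) /
          (1 + Complex.exp ((u:ℂ) + Complex.I * (φ:ℂ)))) := by
    refine AsymptAux.integrable_of_le_Bnd hα0 hα1 ?_ c⁻¹ ?_
    · apply Continuous.aestronglyMeasurable
      apply Continuous.div
      · fun_prop
      · fun_prop
      · exact hd0
    · intro u
      rw [norm_div, norm_mul, Complex.norm_real, Real.norm_eq_abs,
        abs_of_pos (Real.exp_pos _), hEnorm u]
      have hmx : (1:ℝ) ≤ max 1 (Real.exp u) := le_max_left _ _
      have h1 : Real.exp (-(X * Real.exp u) - 2 * ε * X * Real.cosh u) ≤ 1 := by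
        have h2 : Real.exp (-(X * Real.exp u) - 2 * ε * X * Real.cosh u) ≤ Real.exp 0 := by
          apply Real.exp_le_exp.mpr
          nlinarith [Real.exp_pos u, Real.cosh_pos u,
            mul_pos (mul_pos (mul_pos (by norm_num : (0:ℝ) < 2) hε) hX) (Real.cosh_pos u),
            mul_pos hX (Real.exp_pos u)]
        simpa using h2
      calc Real.exp (-(X * Real.exp u) - 2 * ε * X * Real.cosh u) * Real.exp (α * u) /
            ‖1 + Complex.exp ((u:ℂ) + Complex.I * (φ:ℂ))‖
          ≤ Real.exp (α * u) / (c * max 1 (Real.exp u)) := by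
            refine div_le_div₀ (Real.exp_pos _).le ?_ (by nlinarith) (hlow u)
            nlinarith [Real.exp_pos (α * u), Real.exp_pos (-(X * Real.exp u) - 2 * ε * X * Real.cosh u)]
        _ = c⁻¹ * (Real.exp (α * u) * (max 1 (Real.exp u))⁻¹) := by
            rw [div_eq_mul_inv, mul_inv]
            ring
        _ = c⁻¹ * AsymptAux.Bnd α u := by
            rw [AsymptAux.inv_max_exp u, AsymptAux.Bnd_eq1]
  have hint2 : Integrable (fun u : ℝ =>
      (Real.exp (-(X * Real.exp u)) : ℂ) * Complex.exp ((α:ℂ) * (u:ℂ)) /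
        (1 + Complex.exp ((u:ℂ) + Complex.I * (φ:ℂ)))) := by
    refine AsymptAux.integrable_of_le_Bnd hα0 hα1 ?_ c⁻¹ ?_
    · apply Continuous.aestronglyMeasurable
      apply Continuous.div
      · fun_prop
      · fun_prop
      · exact hd0
    · intro u
      rw [norm_div, norm_mul, Complex.norm_real, Real.norm_eq_abs,
        abs_of_pos (Real.exp_pos _), hEnorm u]
      have hmx : (1:ℝ) ≤ max 1 (Real.exp u) := le_max_left _ _
      have h1 : Real.exp (-(X * Real.exp u)) ≤ 1 := by
        have h2 : Real.exp (-(X * Real.exp u)) ≤ Real.exp 0 := by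
          apply Real.exp_le_exp.mpr
          nlinarith [mul_pos hX (Real.exp_pos u)]
        simpa using h2
      calc Real.exp (-(X * Real.exp u)) * Real.exp (α * u) /
            ‖1 + Complex.exp ((u:ℂ) + Complex.I * (φ:ℂ))‖
          ≤ Real.exp (α * u) / (c * max 1 (Real.exp u)) := by
            refine div_le_div₀ (Real.exp_pos _).le ?_ (by nlinarith) (hlow u)
            nlinarith [Real.exp_pos (α * u), Real.exp_pos (-(X * Real.exp u))]
        _ = c⁻¹ * (Real.exp (α * u) * (max 1 (Real.exp u))⁻¹) := by
            rw [div_eq_mul_inv, mul_inv]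
            ring
        _ = c⁻¹ * AsymptAux.Bnd α u := by
            rw [AsymptAux.inv_max_exp u, AsymptAux.Bnd_eq1]
  have hintMr : Integrable (fun u : ℝ =>
      (Real.exp (-(ε * X * Real.exp (-u))) - 1) * Real.exp (α * u)) := by
    refine AsymptAux.integrable_of_le_Bnd hα0 hα1
      (Continuous.aestronglyMeasurable (by fun_prop)) (1 + ε * X) ?_
    intro u
    rw [Real.norm_eq_abs, abs_mul, abs_of_pos (Real.exp_pos _)]
    have h1 : |Real.exp (-(ε * X * Real.exp (-u))) - 1| ≤ min 1 (ε * X * Real.exp (-u)) :=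
      AsymptAux.abs_exp_neg_sub_one_le (by positivity)
    have h2 : min 1 (ε * X * Real.exp (-u)) ≤ (1 + ε * X) * min 1 (Real.exp (-u)) :=
      AsymptAux.min_one_mul (ε * X) (Real.exp (-u)) hεX.le (Real.exp_pos _).le
    calc |Real.exp (-(ε * X * Real.exp (-u))) - 1| * Real.exp (α * u)
        ≤ ((1 + ε * X) * min 1 (Real.exp (-u))) * Real.exp (α * u) := by
          refine mul_le_mul_of_nonneg_right (le_trans h1 h2) (Real.exp_pos _).le
      _ = (1 + ε * X) * (Real.exp (α * u) * min 1 (Real.exp (-u))) := by ring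
      _ = (1 + ε * X) * AsymptAux.Bnd α u := by rw [AsymptAux.Bnd_eq1]
  have hintM : Integrable (fun u : ℝ =>
      (((Real.exp (-(ε * X * Real.exp (-u))) - 1) * Real.exp (α * u) : ℝ) : ℂ)) :=
    hintMr.ofReal
  have hMeq : (∫ u : ℝ, (((Real.exp (-(ε * X * Real.exp (-u))) - 1) *
        Real.exp (α * u) : ℝ) : ℂ))
      = ((Real.Gamma (-α) * X ^ α * ε ^ α : ℝ) : ℂ) := by
    have hcomm := ContinuousLinearMap.integral_comp_comm Complex.ofRealCLM hintMr
    simp only [Complex.ofRealCLM_apply] at hcomm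
    rw [hcomm]
    congr 1
    have hgm := AsymptAux.gamma_main hα0 hα1 (s := ε * X) hεX
    calc (∫ u : ℝ, (Real.exp (-(ε * X * Real.exp (-u))) - 1) * Real.exp (α * u))
        = ∫ u : ℝ, Real.exp (α * u) * (Real.exp (-(ε * X * Real.exp (-u))) - 1) := by
          congr 1
          funext u
          ring
      _ = Real.Gamma (-α) * (ε * X) ^ α := hgm
      _ = Real.Gamma (-α) * X ^ α * ε ^ α := by
          rw [Real.mul_rpow hε.le hX.le]
          ring
  have hsub : Integrable (fun u : ℝ =>
      (Real.exp (-(X * Real.exp u) - 2 * ε * X * Real.cosh u) : ℂ) *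
        Complex.exp ((α:ℂ) * (u:ℂ)) /
          (1 + Complex.exp ((u:ℂ) + Complex.I * (φ:ℂ)))
      - (Real.exp (-(X * Real.exp u)) : ℂ) * Complex.exp ((α:ℂ) * (u:ℂ)) /
          (1 + Complex.exp ((u:ℂ) + Complex.I * (φ:ℂ)))) := hint1.sub hint2
  rw [← hMeq, ← MeasureTheory.integral_sub hint1 hint2,
    ← MeasureTheory.integral_sub hsub hintM]
  refine le_trans (MeasureTheory.norm_integral_le_of_norm_le
    ((AsymptAux.Bnd_integrable hα0 hα1).const_mul (K * ε)) (ae_of_all _ fun u => key u)) ?_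
  rw [MeasureTheory.integral_const_mul]
  exact le_of_eq (by ring)
end

section
/- Let ε, σ, ν, a, b > 0 with σ ≠ ν and with neither σ nor ν a positive integer. Then ∫_{a}^{∞}∫_{b}^{∞} e^{−ε t₁ t₂} t₁^{−1−σ} t₂^{−1−ν} dt₁ dt₂ = (1/(σ − ν)) ( a^{−σ+ν} Γ(−ν) ε^{ν} − b^{σ−ν} Γ(−σ) ε^{σ} ) + a^{−σ} b^{−ν} ∑_{k=0}^{∞} (−1)^{k} (abε)^{k} / (k! (k − σ)(k − ν)), the series on the right being absolutely convergent. -/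
open MeasureTheory Set Real Filter


noncomputable def Phi (s x : ℝ) : ℝ := ∫ u in Set.Ioi x, Real.exp (-u) * u ^ (s - 1)

noncomputable def Gs (s x : ℝ) : ℝ :=
  ∑' k : ℕ, (-1 : ℝ) ^ k * x ^ (s + k) / (k.factorial * (s + k))

lemma integrableOn_phi (s : ℝ) {x : ℝ} (hx : 0 < x) :
    IntegrableOn (fun u : ℝ => Real.exp (-u) * u ^ (s - 1)) (Set.Ioi x) := by
  obtain ⟨n, hn⟩ : ∃ n : ℕ, s ≤ n + 1 := exists_nat_ge s |>.imp fun n h => by linarith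
  have hmeas : AEStronglyMeasurable (fun u : ℝ => Real.exp (-u) * u ^ (s - 1))
      (volume.restrict (Set.Ioi x)) := by
    apply ContinuousOn.aestronglyMeasurable _ measurableSet_Ioi
    intro u hu
    exact ((Real.continuous_exp.comp continuous_neg).continuousWithinAt).mul
      ((Real.continuousAt_rpow_const u _ (Or.inl (ne_of_gt (hx.trans hu)))).continuousWithinAt)
  have hint : IntegrableOn (fun u : ℝ => x ^ (s - 1 - n) * (Real.exp (-u) * u ^ ((n : ℝ) + 1 - 1)))
      (Set.Ioi x) := by
    exact (((Real.GammaIntegral_convergent (by positivity : (0:ℝ) < n + 1)).mono_set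
      (Set.Ioi_subset_Ioi hx.le)).const_mul _)
  refine hint.integrable.mono' hmeas ?_
  filter_upwards [ae_restrict_mem measurableSet_Ioi] with u hu
  have hu0 : 0 < u := hx.trans hu
  rw [Real.norm_eq_abs, abs_of_nonneg (by positivity)]
  have h1 : u ^ (s - 1) ≤ x ^ (s - 1 - n) * u ^ ((n : ℝ) + 1 - 1) := by
    have : u ^ (s - 1) = u ^ (s - 1 - n) * u ^ ((n : ℝ) + 1 - 1) := by
      rw [← Real.rpow_add hu0]; ring_nf
    rw [this]
    exact mul_le_mul_of_nonneg_right
      (Real.rpow_le_rpow_of_nonpos hx hu.le (by linarith)) (by positivity)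
  calc Real.exp (-u) * u ^ (s - 1) ≤ Real.exp (-u) * (x ^ (s - 1 - n) * u ^ ((n:ℝ) + 1 - 1)) := by
        gcongr
    _ = x ^ (s - 1 - n) * (Real.exp (-u) * u ^ ((n:ℝ) + 1 - 1)) := by ring

lemma phi_nonneg (s : ℝ) {x : ℝ} (hx : 0 < x) : 0 ≤ Phi s x := by
  apply setIntegral_nonneg measurableSet_Ioi
  intro u hu
  have : 0 < u := hx.trans hu
  positivity

lemma phi_le (s : ℝ) (hs : s ≤ 1) {x : ℝ} (hx : 0 < x) :
    Phi s x ≤ x ^ (s - 1) * Real.exp (-x) := by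
  have h1 : Phi s x ≤ ∫ u in Set.Ioi x, x ^ (s - 1) * Real.exp (-u) := by
    apply setIntegral_mono_on (integrableOn_phi s hx)
      (((exp_neg_integrableOn_Ioi x one_pos).congr_fun (fun u _ => by simp)
        measurableSet_Ioi).const_mul _) measurableSet_Ioi
    intro u hu
    have hu0 : 0 < u := hx.trans hu
    rw [mul_comm]
    exact mul_le_mul_of_nonneg_right
      (Real.rpow_le_rpow_of_nonpos hx (le_of_lt hu) (by linarith)) (Real.exp_pos _).le
  rw [MeasureTheory.integral_const_mul, integral_exp_neg_Ioi] at h1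
  exact h1

lemma phi_split (s : ℝ) {c y : ℝ} (hc : 0 < c) (hcy : c ≤ y) :
    Phi s c = (∫ u in Set.Ioc c y, Real.exp (-u) * u ^ (s - 1)) + Phi s y := by
  rw [Phi, Phi, ← Set.Ioc_union_Ioi_eq_Ioi hcy]
  exact setIntegral_union (Set.Ioc_disjoint_Ioi le_rfl) measurableSet_Ioi
    ((integrableOn_phi s hc).mono_set (fun u hu => hu.1))
    ((integrableOn_phi s hc).mono_set (Set.Ioi_subset_Ioi hcy))

lemma hasDerivAt_phi (s : ℝ) {x : ℝ} (hx : 0 < x) :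
    HasDerivAt (Phi s) (-(Real.exp (-x) * x ^ (s - 1))) x := by
  set c := x / 2 with hc
  have hc0 : 0 < c := by positivity
  have hcx : c < x := by rw [hc]; linarith
  have hF : HasDerivAt (fun y => Phi s c - ∫ u in c..y, Real.exp (-u) * u ^ (s - 1))
      (-(Real.exp (-x) * x ^ (s - 1))) x := by
    have : HasDerivAt (fun y => ∫ u in c..y, Real.exp (-u) * u ^ (s - 1))
        (Real.exp (-x) * x ^ (s - 1)) x := by
      apply intervalIntegral.integral_hasDerivAt_right
      · rw [intervalIntegrable_iff_integrableOn_Ioc_of_le hcx.le]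
        exact (integrableOn_phi s hc0).mono_set (fun u hu => hu.1)
      · exact ⟨Set.Ioi c, Ioi_mem_nhds hcx, (integrableOn_phi s hc0).aestronglyMeasurable⟩
      · exact ((Real.continuous_exp.comp continuous_neg).continuousAt).mul
          (Real.continuousAt_rpow_const x _ (Or.inl hx.ne'))
    have h := (hasDerivAt_const x (Phi s c)).sub this
    rw [zero_sub] at h
    exact h
  apply hF.congr_of_eventuallyEq
  filter_upwards [Ioi_mem_nhds hcx] with y hy
  have : Phi s c = (∫ u in Set.Ioc c y, Real.exp (-u) * u ^ (s - 1)) + Phi s y :=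
    phi_split s hc0 (le_of_lt hy)
  rw [intervalIntegral.integral_of_le (le_of_lt hy)]
  linarith [this]

lemma phi_rec (s : ℝ) {x : ℝ} (hx : 0 < x) :
    s * Phi s x = Phi (s + 1) x - Real.exp (-x) * x ^ s := by
  have hderiv : ∀ u ∈ Set.Ioi x, HasDerivAt (fun u : ℝ => Real.exp (-u) * u ^ s)
      (s * (Real.exp (-u) * u ^ (s - 1)) - Real.exp (-u) * u ^ (s + 1 - 1)) u := by
    intro u hu
    have hu0 : 0 < u := hx.trans hu
    have h1 : HasDerivAt (fun u : ℝ => Real.exp (-u)) (-Real.exp (-u)) u := by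
      have h := (Real.hasDerivAt_exp (-u)).comp u (hasDerivAt_neg u)
      rw [mul_neg, mul_one] at h
      exact h
    have h2 : HasDerivAt (fun u : ℝ => u ^ s) (s * u ^ (s - 1)) u :=
      Real.hasDerivAt_rpow_const (Or.inl hu0.ne')
    have := h1.mul h2
    refine this.congr_deriv ?_
    have h3 : s + 1 - 1 = s := by ring
    rw [h3]
    ring
  have hint : IntegrableOn (fun u : ℝ =>
      s * (Real.exp (-u) * u ^ (s - 1)) - Real.exp (-u) * u ^ (s + 1 - 1)) (Set.Ioi x) :=
    ((integrableOn_phi s hx).const_mul s).sub (integrableOn_phi (s + 1) hx)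
  have htend : Tendsto (fun u : ℝ => Real.exp (-u) * u ^ s) atTop (nhds 0) := by
    have := tendsto_rpow_mul_exp_neg_mul_atTop_nhds_zero s 1 one_pos
    refine this.congr' ?_
    filter_upwards [eventually_gt_atTop 0] with u hu
    rw [neg_one_mul, mul_comm]
  have hcont : ContinuousWithinAt (fun u : ℝ => Real.exp (-u) * u ^ s) (Set.Ici x) x :=
    (((Real.continuous_exp.comp continuous_neg).continuousAt).mul
      (Real.continuousAt_rpow_const x _ (Or.inl hx.ne'))).continuousWithinAt
  have := integral_Ioi_of_hasDerivAt_of_tendsto hcont hderiv hint htend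
  rw [integral_sub (((integrableOn_phi s hx).const_mul s)) (integrableOn_phi (s + 1) hx),
    MeasureTheory.integral_const_mul] at this
  have hPhi : Phi s x = ∫ u in Set.Ioi x, Real.exp (-u) * u ^ (s - 1) := rfl
  have hPhi1 : Phi (s + 1) x = ∫ u in Set.Ioi x, Real.exp (-u) * u ^ (s + 1 - 1) := rfl
  rw [← hPhi, ← hPhi1] at this
  linarith [this]

lemma hasSum_exp_neg (x : ℝ) :
    HasSum (fun k : ℕ => (-1 : ℝ) ^ k * x ^ k / k.factorial) (Real.exp (-x)) := by
  have := NormedSpace.expSeries_div_hasSum_exp (-x)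
  rw [← Real.exp_eq_exp_ℝ] at this
  refine this.congr_fun fun k => ?_
  rw [neg_pow]
  ring

lemma summable_gterm (s : ℝ) {x : ℝ} (hx : 0 < x) :
    Summable (fun k : ℕ => (-1 : ℝ) ^ k * x ^ (s + k) / (k.factorial * (s + k))) := by
  apply Summable.of_norm_bounded_eventually_nat (g := fun k => x ^ s * (x ^ k / k.factorial))
    ((Real.summable_pow_div_factorial x).mul_left _)
  filter_upwards [eventually_ge_atTop (Nat.ceil (|s| + 1))] with k hk
  have hthis : (|s| + 1 : ℝ) ≤ k := Nat.ceil_le.mp hk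
  have hks : 1 ≤ |s + (k : ℝ)| := by
    have h2 : |(k:ℝ)| - |(-s)| ≤ |(k:ℝ) - (-s)| := abs_sub_abs_le_abs_sub _ _
    rw [abs_neg, abs_of_nonneg (Nat.cast_nonneg k)] at h2
    have h3 : |s + (k:ℝ)| = |(k:ℝ) - (-s)| := congrArg abs (by ring)
    rw [h3]
    linarith
  have hxk : x ^ (s + (k : ℝ)) = x ^ s * x ^ k := by
    rw [Real.rpow_add hx, Real.rpow_natCast]
  have hfac : (0:ℝ) < k.factorial := by positivity
  rw [Real.norm_eq_abs, abs_div, abs_mul, abs_pow, abs_neg, abs_one, one_pow, one_mul,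
    abs_of_nonneg (Real.rpow_pos_of_pos hx _).le, abs_mul, Nat.abs_cast, hxk, mul_div_assoc]
  apply mul_le_mul_of_nonneg_left _ (Real.rpow_pos_of_pos hx s).le
  apply div_le_div_of_nonneg_left (by positivity) hfac
  exact le_mul_of_one_le_right hfac.le hks

lemma hasSum_Gs (s : ℝ) {x : ℝ} (hx : 0 < x) :
    HasSum (fun k : ℕ => (-1 : ℝ) ^ k * x ^ (s + k) / (k.factorial * (s + k))) (Gs s x) :=
  (summable_gterm s hx).hasSum

lemma Gs_rec (s : ℝ) {x : ℝ} (hx : 0 < x) (hs : ∀ k : ℕ, s + k ≠ 0) :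
    s * Gs s x = Real.exp (-x) * x ^ s + Gs (s + 1) x := by
  have h1 : HasSum (fun k : ℕ => (-1 : ℝ) ^ k * x ^ (s + k) / k.factorial)
      (x ^ s * Real.exp (-x)) := by
    have := (hasSum_exp_neg x).mul_left (x ^ s)
    refine this.congr_fun fun k => ?_
    rw [Real.rpow_add hx, Real.rpow_natCast]
    ring
  have h2 : HasSum (fun k : ℕ => (-1 : ℝ) ^ k * (k : ℝ) * x ^ (s + k) / (k.factorial * (s + k)))
      (-Gs (s + 1) x) := by
    have hshift : HasSum (fun j : ℕ =>
        (-1 : ℝ) ^ (j + 1) * ((j : ℝ) + 1) * x ^ (s + (j + 1 : ℕ)) /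
          ((j + 1).factorial * (s + (j + 1 : ℕ)))) (-Gs (s + 1) x) := by
      have := (hasSum_Gs (s + 1) hx).neg
      refine this.congr_fun fun j => ?_
      have hfac : ((j + 1).factorial : ℝ) = (j + 1) * j.factorial := by
        rw [Nat.factorial_succ]; push_cast; ring
      have hj1 : ((j:ℝ) + 1) ≠ 0 := by positivity
      have hexp : s + ((j + 1 : ℕ) : ℝ) = s + 1 + j := by push_cast; ring
      rw [hexp, hfac, pow_succ]
      have hfj : (j.factorial : ℝ) ≠ 0 := by positivity
      have hs1 : s + 1 + (j : ℝ) ≠ 0 := by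
        have := hs (j + 1); push_cast at this; intro h; exact this (by linarith)
      field_simp
    have := (hasSum_nat_add_iff (f := fun k : ℕ =>
        (-1 : ℝ) ^ k * (k : ℝ) * x ^ (s + k) / (k.factorial * (s + k))) 1).mp
      (hshift.congr_fun fun j => by norm_num)
    simpa using this
  have h3 : HasSum (fun k : ℕ => s * ((-1 : ℝ) ^ k * x ^ (s + k) / (k.factorial * (s + k))))
      (x ^ s * Real.exp (-x) - -Gs (s + 1) x) := by
    refine (h1.sub h2).congr_fun fun k => ?_
    have hsk : s + (k : ℝ) ≠ 0 := hs k
    have hfk : (k.factorial : ℝ) ≠ 0 := by positivity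
    field_simp
    ring
  have h4 := (hasSum_Gs s hx).mul_left s
  have := h4.unique h3
  rw [this]
  ring

lemma lower_integral_eq (s : ℝ) (hs : 0 < s) {x : ℝ} (hx : 0 < x) :
    (∫ u in Set.Ioc 0 x, Real.exp (-u) * u ^ (s - 1)) = Gs s x := by
  set F : ℕ → ℝ → ℝ := fun k u => (-1 : ℝ) ^ k * u ^ (s + k - 1) / k.factorial with hF
  have hFint : ∀ k : ℕ, Integrable (F k) (volume.restrict (Set.Ioc 0 x)) := by
    intro k
    have : IntervalIntegrable (fun u : ℝ => u ^ (s + k - 1)) volume 0 x :=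
      intervalIntegral.intervalIntegrable_rpow' (by push_cast; linarith [Nat.cast_nonneg (α := ℝ) k])
    have h2 : IntegrableOn (fun u : ℝ => u ^ (s + k - 1)) (Set.Ioc 0 x) := this.1
    exact (h2.const_mul ((-1:ℝ)^k)).div_const _
  have hFval : ∀ k : ℕ, (∫ u in Set.Ioc 0 x, ‖F k u‖) = x ^ (s + k) / ((s + k) * k.factorial) := by
    intro k
    have hsk : (0:ℝ) < s + k := by positivity
    have h1 : (∫ u in Set.Ioc 0 x, ‖F k u‖) = ∫ u in Set.Ioc 0 x, u ^ (s + k - 1) / k.factorial := by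
      apply setIntegral_congr_fun measurableSet_Ioc
      intro u hu
      rw [hF]
      simp only [norm_div, norm_mul, norm_pow, norm_neg, norm_one, one_pow, one_mul,
        Real.norm_eq_abs]
      rw [abs_of_nonneg (Real.rpow_nonneg hu.1.le _), Nat.abs_cast]
    rw [h1, ← intervalIntegral.integral_of_le hx.le]
    rw [intervalIntegral.integral_div]
    rw [integral_rpow (Or.inl (by linarith))]
    rw [Real.zero_rpow (by linarith), sub_zero]
    have : s + (k:ℝ) - 1 + 1 = s + k := by ring
    rw [this]
    rw [div_div]
  have hsum : Summable (fun k : ℕ => ∫ u in Set.Ioc 0 x, ‖F k u‖) := by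
    rw [funext hFval]
    apply Summable.of_norm_bounded_eventually_nat (g := fun k => (x ^ s / s) * (x ^ k / k.factorial))
      ((Real.summable_pow_div_factorial x).mul_left _)
    filter_upwards [] with k
    have hsk : (0:ℝ) < s + k := by positivity
    have hxk : x ^ (s + (k : ℝ)) = x ^ s * x ^ k := by
      rw [Real.rpow_add hx, Real.rpow_natCast]
    rw [Real.norm_eq_abs, abs_of_nonneg (by positivity), hxk]
    rw [div_le_iff₀ (by positivity)]
    have h2 : x ^ s * x ^ k * 1 ≤ x ^ s * x ^ k * ((s + k) / s) := by
      apply mul_le_mul_of_nonneg_left _ (by positivity)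
      rw [le_div_iff₀ hs]; linarith [Nat.cast_nonneg (α := ℝ) k]
    calc x ^ s * x ^ k = x ^ s * x ^ k * 1 := by ring
      _ ≤ x ^ s * x ^ k * ((s + k) / s) := h2
      _ = x ^ s / s * (x ^ k / ↑k.factorial) * ((s + ↑k) * ↑k.factorial) := by
          field_simp
  have hinter := MeasureTheory.integral_tsum_of_summable_integral_norm hFint hsum
  have hpt : ∀ u ∈ Set.Ioc 0 x, (∑' k, F k u) = Real.exp (-u) * u ^ (s - 1) := by
    intro u hu
    have hu0 : 0 < u := hu.1
    have h1 : HasSum (fun k : ℕ => F k u) (u ^ (s - 1) * Real.exp (-u)) := by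
      have := (hasSum_exp_neg u).mul_left (u ^ (s - 1))
      refine this.congr_fun fun k => ?_
      have h2 : u ^ (s + (k:ℝ) - 1) = u ^ (s - 1) * u ^ k := by
        rw [← Real.rpow_natCast u k, ← Real.rpow_add hu0]; ring_nf
      show (-1:ℝ) ^ k * u ^ (s + (k:ℝ) - 1) / k.factorial = _
      rw [h2]; ring
    rw [h1.tsum_eq]; ring
  have h5 : (∫ u in Set.Ioc 0 x, (∑' k, F k u)) = ∫ u in Set.Ioc 0 x, Real.exp (-u) * u ^ (s - 1) :=
    setIntegral_congr_fun measurableSet_Ioc hpt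
  rw [← h5, ← hinter, Gs]
  apply tsum_congr
  intro k
  have hsk : (0:ℝ) < s + k := by positivity
  have h6 : (∫ u in Set.Ioc 0 x, F k u) =
      ((-1:ℝ)^k / k.factorial) * ∫ u in Set.Ioc 0 x, u ^ (s + k - 1) := by
    rw [← MeasureTheory.integral_const_mul]
    apply setIntegral_congr_fun measurableSet_Ioc
    intro u hu
    rw [hF]; ring
  rw [h6, ← intervalIntegral.integral_of_le hx.le, integral_rpow (Or.inl (by linarith)),
    Real.zero_rpow (by linarith), sub_zero]
  have : s + (k:ℝ) - 1 + 1 = s + k := by ring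
  rw [this]
  field_simp

lemma phi_base (s : ℝ) (hs : 0 < s) {x : ℝ} (hx : 0 < x) :
    Phi s x = Real.Gamma s - Gs s x := by
  have hsplit : Real.Gamma s = (∫ u in Set.Ioc 0 x, Real.exp (-u) * u ^ (s - 1)) + Phi s x := by
    rw [Real.Gamma_eq_integral hs, ← Set.Ioc_union_Ioi_eq_Ioi hx.le]
    exact setIntegral_union (Set.Ioc_disjoint_Ioi le_rfl) measurableSet_Ioi
      ((Real.GammaIntegral_convergent hs).mono_set (fun u hu => hu.1))
      ((Real.GammaIntegral_convergent hs).mono_set (Set.Ioi_subset_Ioi hx.le))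
  rw [lower_integral_eq s hs hx] at hsplit
  linarith

lemma phi_eq (n : ℕ) : ∀ s : ℝ, (∀ k : ℕ, s + k ≠ 0) → -(n : ℝ) < s → ∀ x : ℝ, 0 < x →
    Phi s x = Real.Gamma s - Gs s x := by
  induction n with
  | zero =>
    intro s hs hn x hx
    exact phi_base s (by simpa using hn) hx
  | succ n ih =>
    intro s hs hn x hx
    by_cases hpos : 0 < s
    · exact phi_base s hpos hx
    · have hs0 : s ≠ 0 := by simpa using hs 0
      have hs1 : ∀ k : ℕ, s + 1 + (k : ℝ) ≠ 0 := by
        intro k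
        have := hs (k + 1); push_cast at this; intro h; exact this (by linarith)
      have hn1 : -(n : ℝ) < s + 1 := by push_cast at hn; linarith
      have hIH := ih (s + 1) hs1 hn1 x hx
      have hrec := phi_rec s hx
      have hGrec := Gs_rec s hx hs
      have hGamma : Real.Gamma (s + 1) = s * Real.Gamma s := Real.Gamma_add_one hs0
      have : s * Phi s x = s * Real.Gamma s - s * Gs s x := by
        rw [hrec, hIH, hGamma, hGrec]; ring
      have := mul_left_cancel₀ hs0 (by linarith : s * Phi s x = s * (Real.Gamma s - Gs s x))
      exact this

lemma inner_integral (p : ℝ) {c x : ℝ} (hc : 0 < c) (hx : 0 < x) :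
    (∫ t in Set.Ioi c, Real.exp (-(x * t)) * t ^ (-1 - p)) = x ^ p * Phi (-p) (x * c) := by
  have h1 : (∫ t in Set.Ioi c, Real.exp (-(x * t)) * t ^ (-1 - p))
      = ∫ t in Set.Ioi c, x ^ (1 + p) * (Real.exp (-(x * t)) * (x * t) ^ (-1 - p)) := by
    apply setIntegral_congr_fun measurableSet_Ioi
    intro t ht
    have ht0 : 0 < t := hc.trans ht
    show Real.exp (-(x * t)) * t ^ (-1 - p)
        = x ^ (1 + p) * (Real.exp (-(x * t)) * (x * t) ^ (-1 - p))
    rw [Real.mul_rpow hx.le ht0.le]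
    have : x ^ (1 + p) * x ^ (-1 - p) = 1 := by
      rw [← Real.rpow_add hx]; norm_num
    calc Real.exp (-(x * t)) * t ^ (-1 - p)
        = (x ^ (1 + p) * x ^ (-1 - p)) * (Real.exp (-(x * t)) * t ^ (-1 - p)) := by
          rw [this]; ring
      _ = x ^ (1 + p) * (Real.exp (-(x * t)) * (x ^ (-1 - p) * t ^ (-1 - p))) := by ring
  rw [h1, MeasureTheory.integral_const_mul]
  have h2 : (∫ t in Set.Ioi c, Real.exp (-(x * t)) * (x * t) ^ (-1 - p))
      = x⁻¹ * ∫ u in Set.Ioi (x * c), Real.exp (-u) * u ^ (-p - 1) := by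
    have := integral_comp_mul_left_Ioi (fun u : ℝ => Real.exp (-u) * u ^ (-p - 1)) c hx
    simp only [smul_eq_mul] at this
    rw [← this]
    apply setIntegral_congr_fun measurableSet_Ioi
    intro t ht
    show Real.exp (-(x * t)) * (x * t) ^ (-1 - p) = Real.exp (-(x * t)) * (x * t) ^ (-p - 1)
    have : -p - 1 = -1 - p := by ring
    rw [this]
  rw [h2, Phi]
  rw [← mul_assoc]
  congr 1
  rw [Real.rpow_add hx, Real.rpow_one]
  field_simp

lemma H_eq (σ ν : ℝ) (hν : 0 < ν) (hσν : σ ≠ ν) {A : ℝ} (hA : 0 < A) :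
    (∫ u in Set.Ioi A, u ^ (ν - σ - 1) * Phi (-ν) u)
      = (A ^ (ν - σ) * Phi (-ν) A - Phi (-σ) A) / (σ - ν) := by
  set c : ℝ := ν - σ with hc
  have hc0 : c ≠ 0 := sub_ne_zero.mpr (Ne.symm hσν)
  have hfd : ∀ u : ℝ, 0 < u → HasDerivAt (fun u : ℝ => u ^ c / c * Phi (-ν) u)
      (u ^ (c - 1) * Phi (-ν) u - u ^ c / c * (Real.exp (-u) * u ^ (-ν - 1))) u := by
    intro u hu
    have h1 : HasDerivAt (fun u : ℝ => u ^ c / c) (u ^ (c - 1)) u := by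
      have := (Real.hasDerivAt_rpow_const (p := c) (Or.inl hu.ne')).div_const c
      simpa [mul_div_assoc, mul_div_cancel_left₀ _ hc0] using this
    have h2 : HasDerivAt (Phi (-ν)) (-(Real.exp (-u) * u ^ (-ν - 1))) u := by
      have h2' := hasDerivAt_phi (-ν) hu
      have he : -ν - 1 = -ν - (1:ℝ) := rfl
      simpa using h2'
    have := h1.mul h2
    refine this.congr_deriv ?_
    ring
  have hg2 : IntegrableOn (fun u : ℝ => u ^ c / c * (Real.exp (-u) * u ^ (-ν - 1)))
      (Set.Ioi A) := by
    apply MeasureTheory.IntegrableOn.congr_fun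
      ((integrableOn_phi (-σ) hA).const_mul (1/c)) _ measurableSet_Ioi
    intro u hu
    have hu0 : 0 < u := hA.trans hu
    have h4 : u ^ c * u ^ (-ν - 1) = u ^ (-σ - 1) := by
      rw [← Real.rpow_add hu0]; congr 1; rw [hc]; ring
    show (1/c) * (Real.exp (-u) * u ^ (-σ - 1)) = u ^ c / c * (Real.exp (-u) * u ^ (-ν - 1))
    rw [← h4]; ring
  have hg1 : IntegrableOn (fun u : ℝ => u ^ (c - 1) * Phi (-ν) u) (Set.Ioi A) := by
    have hmeas : AEStronglyMeasurable (fun u : ℝ => u ^ (c - 1) * Phi (-ν) u)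
        (volume.restrict (Set.Ioi A)) := by
      apply ContinuousOn.aestronglyMeasurable _ measurableSet_Ioi
      intro u hu
      have hu0 : 0 < u := hA.trans hu
      exact ((Real.continuousAt_rpow_const u _ (Or.inl hu0.ne')).mul
        (hasDerivAt_phi (-ν) hu0).continuousAt).continuousWithinAt
    apply ((integrableOn_phi (-σ - 1) hA).integrable.mono' hmeas)
    filter_upwards [ae_restrict_mem measurableSet_Ioi] with u hu
    have hu0 : 0 < u := hA.trans hu
    rw [Real.norm_eq_abs, abs_mul, abs_of_nonneg (Real.rpow_nonneg hu0.le _),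
      abs_of_nonneg (phi_nonneg _ hu0)]
    have h5 : u ^ (c - 1) * u ^ (-ν - 1) = u ^ (-σ - 1 - 1) := by
      rw [← Real.rpow_add hu0]; congr 1; rw [hc]; ring
    calc u ^ (c - 1) * Phi (-ν) u ≤ u ^ (c - 1) * (u ^ (-ν - 1) * Real.exp (-u)) := by
          apply mul_le_mul_of_nonneg_left _ (Real.rpow_nonneg hu0.le _)
          exact phi_le (-ν) (by linarith) hu0
      _ = (u ^ (c - 1) * u ^ (-ν - 1)) * Real.exp (-u) := by ring
      _ = Real.exp (-u) * u ^ (-σ - 1 - 1) := by rw [h5]; ring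
  have hint : IntegrableOn (fun u : ℝ =>
      u ^ (c - 1) * Phi (-ν) u - u ^ c / c * (Real.exp (-u) * u ^ (-ν - 1))) (Set.Ioi A) :=
    hg1.sub hg2
  have htend : Tendsto (fun u : ℝ => u ^ c / c * Phi (-ν) u) atTop (nhds 0) := by
    have hbd : ∀ᶠ u : ℝ in atTop, ‖u ^ c / c * Phi (-ν) u‖
        ≤ |1/c| * (u ^ (-σ - 1) * Real.exp (-u)) := by
      filter_upwards [eventually_gt_atTop 0] with u hu0
      have h6 : u ^ c * u ^ (-ν - 1) = u ^ (-σ - 1) := by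
        rw [← Real.rpow_add hu0]; congr 1; rw [hc]; ring
      rw [Real.norm_eq_abs, abs_mul, abs_of_nonneg (phi_nonneg _ hu0), abs_div,
        abs_of_nonneg (Real.rpow_nonneg hu0.le _)]
      calc u ^ c / |c| * Phi (-ν) u ≤ u ^ c / |c| * (u ^ (-ν - 1) * Real.exp (-u)) := by
            apply mul_le_mul_of_nonneg_left (phi_le (-ν) (by linarith) hu0) (by positivity)
        _ = |1/c| * ((u ^ c * u ^ (-ν - 1)) * Real.exp (-u)) := by
            rw [abs_div, abs_one]; ring
        _ = |1/c| * (u ^ (-σ - 1) * Real.exp (-u)) := by rw [h6]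
    have hgt : Tendsto (fun u : ℝ => |1/c| * (u ^ (-σ - 1) * Real.exp (-u))) atTop (nhds 0) := by
      have := (tendsto_rpow_mul_exp_neg_mul_atTop_nhds_zero (-σ - 1) 1 one_pos).const_mul (|1/c|)
      rw [mul_zero] at this
      apply this.congr
      intro u
      rw [neg_one_mul]
    exact squeeze_zero_norm' hbd hgt
  have hcont : ContinuousWithinAt (fun u : ℝ => u ^ c / c * Phi (-ν) u) (Set.Ici A) A :=
    (hfd A hA).continuousAt.continuousWithinAt
  have hFTC := integral_Ioi_of_hasDerivAt_of_tendsto hcont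
    (fun u hu => hfd u (hA.trans hu)) hint htend
  rw [integral_sub hg1 hg2] at hFTC
  have hg2val : (∫ u in Set.Ioi A, u ^ c / c * (Real.exp (-u) * u ^ (-ν - 1)))
      = Phi (-σ) A / c := by
    have : (∫ u in Set.Ioi A, u ^ c / c * (Real.exp (-u) * u ^ (-ν - 1)))
        = ∫ u in Set.Ioi A, (1/c) * (Real.exp (-u) * u ^ (-σ - 1)) := by
      apply setIntegral_congr_fun measurableSet_Ioi
      intro u hu
      have hu0 : 0 < u := hA.trans hu
      show u ^ c / c * (Real.exp (-u) * u ^ (-ν - 1)) = (1/c) * (Real.exp (-u) * u ^ (-σ - 1))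
      have h4 : u ^ c * u ^ (-ν - 1) = u ^ (-σ - 1) := by
        rw [← Real.rpow_add hu0]; congr 1; rw [hc]; ring
      rw [← h4]; ring
    rw [this, MeasureTheory.integral_const_mul]
    have hPhi : Phi (-σ) A = ∫ u in Set.Ioi A, Real.exp (-u) * u ^ (-σ - 1) := rfl
    rw [← hPhi]; ring
  rw [hg2val] at hFTC
  have hmain : (∫ u in Set.Ioi A, u ^ (c - 1) * Phi (-ν) u)
      = Phi (-σ) A / c - A ^ c / c * Phi (-ν) A := by linarith
  have : ν - σ - 1 = c - 1 := by rw [hc]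
  rw [this, hmain, hc]
  have hsν : σ - ν ≠ 0 := sub_ne_zero.mpr hσν
  field_simp
  ring

lemma summable_T (σ ν : ℝ) {A : ℝ} (hA : 0 < A) :
    Summable (fun k : ℕ =>
      |(-1 : ℝ) ^ k * A ^ k / ((k.factorial : ℝ) * ((k : ℝ) - σ) * ((k : ℝ) - ν))|) := by
  apply Summable.of_norm_bounded_eventually_nat (g := fun k => A ^ k / k.factorial)
    (Real.summable_pow_div_factorial A)
  filter_upwards [eventually_ge_atTop (Nat.ceil (|σ| + |ν| + 1))] with k hk
  have hthis : (|σ| + |ν| + 1 : ℝ) ≤ k := Nat.ceil_le.mp hk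
  have h1 : 1 ≤ |(k : ℝ) - σ| := by
    rw [le_abs]; left; have := le_abs_self σ; linarith [abs_nonneg ν]
  have h2 : 1 ≤ |(k : ℝ) - ν| := by
    rw [le_abs]; left; have := le_abs_self ν; linarith [abs_nonneg σ]
  have hfac : (0:ℝ) < k.factorial := by positivity
  rw [norm_abs_eq_norm, Real.norm_eq_abs, abs_div, abs_mul, abs_pow, abs_neg, abs_one,
    one_pow, one_mul, abs_pow, abs_of_nonneg hA.le, abs_mul, abs_mul, Nat.abs_cast]
  apply div_le_div_of_nonneg_left (by positivity) hfac
  calc (k.factorial : ℝ) = k.factorial * 1 * 1 := by ring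
    _ ≤ k.factorial * |(k:ℝ) - σ| * |(k:ℝ) - ν| := by
        apply mul_le_mul (mul_le_mul le_rfl h1 zero_le_one hfac.le) h2 zero_le_one
        positivity


/-- Step 2 of Appendix B: for `ε, σ, ν, a, b > 0` with `σ ≠ ν` and neither `σ`
nor `ν` a positive integer,
`∫_a^∞ ∫_b^∞ e^{−εt₁t₂} t₁^{−1−σ} t₂^{−1−ν} dt₁ dt₂
  = (1/(σ−ν))(a^{−σ+ν} Γ(−ν) ε^ν − b^{σ−ν} Γ(−σ) ε^σ)
    + a^{−σ} b^{−ν} ∑_{k=0}^∞ (−1)^k (abε)^k / (k!(k−σ)(k−ν))`,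
the series being absolutely convergent. -/
theorem double_power_integral (ε σ ν a b : ℝ) (hε : 0 < ε) (hσ : 0 < σ) (hν : 0 < ν)
    (ha : 0 < a) (hb : 0 < b) (hσν : σ ≠ ν)
    (hσint : ∀ n : ℕ, σ ≠ (n : ℝ) + 1) (hνint : ∀ n : ℕ, ν ≠ (n : ℝ) + 1) :
    Summable (fun k : ℕ =>
      |(-1 : ℝ) ^ k * (a * b * ε) ^ k /
        ((k.factorial : ℝ) * ((k : ℝ) - σ) * ((k : ℝ) - ν))|) ∧
    (∫ t₁ in Set.Ioi a, ∫ t₂ in Set.Ioi b,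
        Real.exp (-(ε * t₁ * t₂)) * t₁ ^ (-1 - σ) * t₂ ^ (-1 - ν))
      = (1 / (σ - ν)) * (a ^ (-σ + ν) * Real.Gamma (-ν) * ε ^ ν
          - b ^ (σ - ν) * Real.Gamma (-σ) * ε ^ σ)
        + a ^ (-σ) * b ^ (-ν) *
            ∑' k : ℕ, (-1 : ℝ) ^ k * (a * b * ε) ^ k /
              ((k.factorial : ℝ) * ((k : ℝ) - σ) * ((k : ℝ) - ν)) := by
  have hab : 0 < a * b * ε := by positivity
  constructor
  · exact summable_T σ ν hab
  set A : ℝ := ε * b * a with hAdef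
  have hA : 0 < A := by positivity
  have hc : 0 < ε * b := by positivity
  -- nonvanishing of k - σ, k - ν
  have hkσ : ∀ k : ℕ, (k : ℝ) - σ ≠ 0 := by
    intro k
    cases k with
    | zero => simpa using hσ.ne'
    | succ n =>
      have := hσint n
      push_cast
      intro h; exact this (by linarith)
  have hkν : ∀ k : ℕ, (k : ℝ) - ν ≠ 0 := by
    intro k
    cases k with
    | zero => simpa using hν.ne'
    | succ n =>
      have := hνint n
      push_cast
      intro h; exact this (by linarith)
  have hsν : σ - ν ≠ 0 := sub_ne_zero.mpr hσν
  -- Phi closed forms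
  have hphiν : Phi (-ν) A = Real.Gamma (-ν) - Gs (-ν) A := by
    obtain ⟨n, hn⟩ := exists_nat_gt ν
    exact phi_eq n (-ν) (fun k => by have := hkν k; intro h; exact this (by linarith))
      (by linarith) A hA
  have hphiσ : Phi (-σ) A = Real.Gamma (-σ) - Gs (-σ) A := by
    obtain ⟨n, hn⟩ := exists_nat_gt σ
    exact phi_eq n (-σ) (fun k => by have := hkσ k; intro h; exact this (by linarith))
      (by linarith) A hA
  -- the double integral
  have hinner : ∀ t₁ ∈ Set.Ioi a,
      (∫ t₂ in Set.Ioi b, Real.exp (-(ε * t₁ * t₂)) * t₁ ^ (-1 - σ) * t₂ ^ (-1 - ν))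
        = (ε ^ ν * (ε * b) ^ (σ + 1 - ν)) *
            ((ε * b * t₁) ^ (ν - σ - 1) * Phi (-ν) (ε * b * t₁)) := by
    intro t₁ ht₁
    have ht0 : 0 < t₁ := ha.trans ht₁
    have hx : 0 < ε * t₁ := by positivity
    have h1 : (∫ t₂ in Set.Ioi b, Real.exp (-(ε * t₁ * t₂)) * t₁ ^ (-1 - σ) * t₂ ^ (-1 - ν))
        = t₁ ^ (-1 - σ) * ∫ t₂ in Set.Ioi b, Real.exp (-(ε * t₁ * t₂)) * t₂ ^ (-1 - ν) := by
      rw [← MeasureTheory.integral_const_mul]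
      apply setIntegral_congr_fun measurableSet_Ioi
      intro t₂ _
      show Real.exp (-(ε * t₁ * t₂)) * t₁ ^ (-1 - σ) * t₂ ^ (-1 - ν)
          = t₁ ^ (-1 - σ) * (Real.exp (-(ε * t₁ * t₂)) * t₂ ^ (-1 - ν))
      ring
    rw [h1, inner_integral ν hb hx]
    have harg : ε * t₁ * b = ε * b * t₁ := by ring
    rw [harg]
    have h2 : (ε * t₁) ^ ν = ε ^ ν * t₁ ^ ν := Real.mul_rpow hε.le ht0.le
    have h3 : (ε * b * t₁) ^ (ν - σ - 1) = (ε * b) ^ (ν - σ - 1) * t₁ ^ (ν - σ - 1) :=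
      Real.mul_rpow hc.le ht0.le
    have h4 : (ε * b) ^ (σ + 1 - ν) * (ε * b) ^ (ν - σ - 1) = 1 := by
      rw [← Real.rpow_add hc, show σ + 1 - ν + (ν - σ - 1) = 0 by ring, Real.rpow_zero]
    have h5 : t₁ ^ (-1 - σ) * t₁ ^ ν = t₁ ^ (ν - σ - 1) := by
      rw [← Real.rpow_add ht0]; congr 1; ring
    rw [h3]
    calc t₁ ^ (-1 - σ) * ((ε * t₁) ^ ν * Phi (-ν) (ε * b * t₁))
        = ε ^ ν * ((t₁ ^ (-1 - σ) * t₁ ^ ν) * Phi (-ν) (ε * b * t₁)) := by rw [h2]; ring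
      _ = ε ^ ν * (t₁ ^ (ν - σ - 1) * Phi (-ν) (ε * b * t₁)) := by rw [h5]
      _ = (ε ^ ν * ((ε * b) ^ (σ + 1 - ν) * (ε * b) ^ (ν - σ - 1))) *
            (t₁ ^ (ν - σ - 1) * Phi (-ν) (ε * b * t₁)) := by rw [h4]; ring
      _ = (ε ^ ν * (ε * b) ^ (σ + 1 - ν)) *
            ((ε * b) ^ (ν - σ - 1) * t₁ ^ (ν - σ - 1) * Phi (-ν) (ε * b * t₁)) := by ring
  rw [setIntegral_congr_fun measurableSet_Ioi hinner, MeasureTheory.integral_const_mul]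
  have hsub : (∫ t in Set.Ioi a, (ε * b * t) ^ (ν - σ - 1) * Phi (-ν) (ε * b * t))
      = (ε * b)⁻¹ * ∫ u in Set.Ioi A, u ^ (ν - σ - 1) * Phi (-ν) u := by
    have := integral_comp_mul_left_Ioi (fun u : ℝ => u ^ (ν - σ - 1) * Phi (-ν) u) a hc
    simpa [hAdef] using this
  rw [hsub, H_eq σ ν hν hσν hA, hphiν, hphiσ]
  -- tsum conversions
  set Tσ : ℝ := ∑' k : ℕ, (-1 : ℝ) ^ k * A ^ k / (k.factorial * ((k : ℝ) - σ)) with hTσdef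
  set Tν : ℝ := ∑' k : ℕ, (-1 : ℝ) ^ k * A ^ k / (k.factorial * ((k : ℝ) - ν)) with hTνdef
  have hsumν : Summable (fun k : ℕ => (-1 : ℝ) ^ k * A ^ k / (k.factorial * ((k : ℝ) - ν))) := by
    have := (summable_gterm (-ν) hA).mul_left (A ^ ν)
    refine this.congr fun k => ?_
    have : A ^ (-ν + (k : ℝ)) = A ^ (-ν) * A ^ (k : ℕ) := by
      rw [Real.rpow_add hA, Real.rpow_natCast]
    rw [this]
    have hAν : A ^ ν * A ^ (-ν) = 1 := by
      rw [← Real.rpow_add hA]; norm_num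
    have harg : -ν + (k : ℝ) = (k : ℝ) - ν := by ring
    rw [harg]  -- adjust denominator
    calc A ^ ν * ((-1:ℝ) ^ k * (A ^ (-ν) * A ^ (k:ℕ)) / (k.factorial * ((k:ℝ) - ν)))
        = (A ^ ν * A ^ (-ν)) * ((-1:ℝ) ^ k * A ^ (k:ℕ) / (k.factorial * ((k:ℝ) - ν))) := by ring
      _ = (-1:ℝ) ^ k * A ^ (k:ℕ) / (k.factorial * ((k:ℝ) - ν)) := by rw [hAν]; ring
  have hsumσ : Summable (fun k : ℕ => (-1 : ℝ) ^ k * A ^ k / (k.factorial * ((k : ℝ) - σ))) := by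
    have := (summable_gterm (-σ) hA).mul_left (A ^ σ)
    refine this.congr fun k => ?_
    have : A ^ (-σ + (k : ℝ)) = A ^ (-σ) * A ^ (k : ℕ) := by
      rw [Real.rpow_add hA, Real.rpow_natCast]
    rw [this]
    have hAσ : A ^ σ * A ^ (-σ) = 1 := by
      rw [← Real.rpow_add hA]; norm_num
    have harg : -σ + (k : ℝ) = (k : ℝ) - σ := by ring
    rw [harg]
    calc A ^ σ * ((-1:ℝ) ^ k * (A ^ (-σ) * A ^ (k:ℕ)) / (k.factorial * ((k:ℝ) - σ)))
        = (A ^ σ * A ^ (-σ)) * ((-1:ℝ) ^ k * A ^ (k:ℕ) / (k.factorial * ((k:ℝ) - σ))) := by ring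
      _ = (-1:ℝ) ^ k * A ^ (k:ℕ) / (k.factorial * ((k:ℝ) - σ)) := by rw [hAσ]; ring
  have hGν : Gs (-ν) A = A ^ (-ν) * Tν := by
    rw [Gs, hTνdef, ← tsum_mul_left]
    apply tsum_congr
    intro k
    have h6 : A ^ (-ν + (k : ℝ)) = A ^ (-ν) * A ^ (k : ℕ) := by
      rw [Real.rpow_add hA, Real.rpow_natCast]
    have h7 : -ν + (k : ℝ) = (k : ℝ) - ν := by ring
    rw [h6, h7]
    ring
  have hGσ : Gs (-σ) A = A ^ (-σ) * Tσ := by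
    rw [Gs, hTσdef, ← tsum_mul_left]
    apply tsum_congr
    intro k
    have h6 : A ^ (-σ + (k : ℝ)) = A ^ (-σ) * A ^ (k : ℕ) := by
      rw [Real.rpow_add hA, Real.rpow_natCast]
    have h7 : -σ + (k : ℝ) = (k : ℝ) - σ := by ring
    rw [h6, h7]
    ring
  set T : ℝ := ∑' k : ℕ, (-1 : ℝ) ^ k * (a * b * ε) ^ k /
      ((k.factorial : ℝ) * ((k : ℝ) - σ) * ((k : ℝ) - ν)) with hTdef
  have hT : T = (Tσ - Tν) / (σ - ν) := by
    have hdiff : HasSum (fun k : ℕ =>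
        (-1 : ℝ) ^ k * A ^ k / (k.factorial * ((k : ℝ) - σ))
          - (-1 : ℝ) ^ k * A ^ k / (k.factorial * ((k : ℝ) - ν))) (Tσ - Tν) :=
      hsumσ.hasSum.sub hsumν.hasSum
    have hT' : HasSum (fun k : ℕ => (σ - ν) * ((-1 : ℝ) ^ k * (a * b * ε) ^ k /
        ((k.factorial : ℝ) * ((k : ℝ) - σ) * ((k : ℝ) - ν)))) (Tσ - Tν) := by
      refine hdiff.congr_fun fun k => ?_
      have hfk : (k.factorial : ℝ) ≠ 0 := by positivity
      have hA' : (a * b * ε) ^ k = A ^ k := by rw [hAdef]; ring_nf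
      rw [hA']
      field_simp [hfk, hkσ k, hkν k]
      ring
    have hTsum : Summable (fun k : ℕ => (-1 : ℝ) ^ k * (a * b * ε) ^ k /
        ((k.factorial : ℝ) * ((k : ℝ) - σ) * ((k : ℝ) - ν))) :=
      summable_abs_iff.mp (summable_T σ ν hab)
    have := (hTsum.hasSum.mul_left (σ - ν)).unique hT'
    rw [hTdef, eq_div_iff hsν]
    rw [← this]
    ring
  -- final algebra
  have e1 : ε ^ σ * b ^ (σ - ν) * A ^ (ν - σ) = a ^ (-σ + ν) * ε ^ ν := by
    rw [hAdef, Real.mul_rpow (by positivity) ha.le, Real.mul_rpow hε.le hb.le]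
    calc ε ^ σ * b ^ (σ - ν) * (ε ^ (ν - σ) * b ^ (ν - σ) * a ^ (ν - σ))
        = (ε ^ σ * ε ^ (ν - σ)) * (b ^ (σ - ν) * b ^ (ν - σ)) * a ^ (ν - σ) := by ring
      _ = ε ^ (σ + (ν - σ)) * b ^ ((σ - ν) + (ν - σ)) * a ^ (ν - σ) := by
          rw [← Real.rpow_add hε, ← Real.rpow_add hb]
      _ = a ^ (-σ + ν) * ε ^ ν := by
          rw [show σ + (ν - σ) = ν by ring, show (σ - ν) + (ν - σ) = 0 by ring,
            Real.rpow_zero, show ν - σ = -σ + ν by ring]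
          ring
  have e3 : ε ^ σ * b ^ (σ - ν) * A ^ (-σ) = a ^ (-σ) * b ^ (-ν) := by
    rw [hAdef, Real.mul_rpow (by positivity) ha.le, Real.mul_rpow hε.le hb.le]
    calc ε ^ σ * b ^ (σ - ν) * (ε ^ (-σ) * b ^ (-σ) * a ^ (-σ))
        = (ε ^ σ * ε ^ (-σ)) * (b ^ (σ - ν) * b ^ (-σ)) * a ^ (-σ) := by ring
      _ = ε ^ (σ + -σ) * b ^ ((σ - ν) + -σ) * a ^ (-σ) := by
          rw [← Real.rpow_add hε, ← Real.rpow_add hb]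
      _ = a ^ (-σ) * b ^ (-ν) := by
          rw [show σ + -σ = 0 by ring, Real.rpow_zero, show (σ - ν) + -σ = -ν by ring]
          ring
  have e2 : ε ^ σ * b ^ (σ - ν) * (A ^ (ν - σ) * A ^ (-ν)) = a ^ (-σ) * b ^ (-ν) := by
    rw [← Real.rpow_add hA, show ν - σ + -ν = -σ by ring]
    exact e3
  have e0 : ε ^ ν * (ε * b) ^ (σ + 1 - ν) * (ε * b)⁻¹ = ε ^ σ * b ^ (σ - ν) := by
    rw [Real.mul_rpow hε.le hb.le]
    have h1 : ε ^ ν * ε ^ (σ + 1 - ν) = ε ^ σ * ε := by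
      rw [← Real.rpow_add hε, show ν + (σ + 1 - ν) = σ + 1 by ring, Real.rpow_add hε,
        Real.rpow_one]
    have h2 : b ^ (σ + 1 - ν) = b ^ (σ - ν) * b := by
      rw [show σ + 1 - ν = (σ - ν) + 1 by ring, Real.rpow_add hb, Real.rpow_one]
    calc ε ^ ν * (ε ^ (σ + 1 - ν) * b ^ (σ + 1 - ν)) * (ε * b)⁻¹
        = (ε ^ ν * ε ^ (σ + 1 - ν)) * b ^ (σ + 1 - ν) * (ε * b)⁻¹ := by ring
      _ = (ε ^ σ * ε) * (b ^ (σ - ν) * b) * (ε * b)⁻¹ := by rw [h1, h2]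
      _ = ε ^ σ * b ^ (σ - ν) * ((ε * b) * (ε * b)⁻¹) := by ring
      _ = ε ^ σ * b ^ (σ - ν) := by
          rw [mul_inv_cancel₀ hc.ne', mul_one]
  rw [hGν, hGσ, hT]
  linear_combination ((A ^ (ν - σ) * (Real.Gamma (-ν) - A ^ (-ν) * Tν)
      - (Real.Gamma (-σ) - A ^ (-σ) * Tσ)) / (σ - ν)) * e0
    + ((Real.Gamma (-ν)) / (σ - ν)) * e1 + (Tσ / (σ - ν)) * e3
    - (Tν / (σ - ν)) * e2
end

section
/- Let 0 < γ < 1, σ > 2, a, b > 0, and let F : [b,∞) → ℂ be measurable, locally integrable, and satisfy F(t) = O(t^{−σ}) as t → +∞ (i.e. |F(t)| ≤ C t^{−σ} for some constant C and all sufficiently large t). Then, as ε → 0+, ∫_{a}^{∞}∫_{b}^{∞} e^{−ε t₁ t₂} F(t₂) t₁^{−1−γ} dt₁ dt₂ = (a^{−γ}/γ) ∫_{b}^{∞} F(t) dt + Γ(−γ) ( ∫_{b}^{∞} F(t) t^{γ} dt ) ε^{γ} + O(ε). -/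
open Set MeasureTheory

lemma aux_exp_bound {u : ℝ} (hu : 0 ≤ u) : |Real.exp (-u) - 1| ≤ min u 1 := by
  have h1 : Real.exp (-u) ≤ 1 :=
    (Real.exp_le_exp.mpr (by linarith)).trans_eq Real.exp_zero
  have h2 : -u + 1 ≤ Real.exp (-u) := Real.add_one_le_exp (-u)
  have h3 : 0 < Real.exp (-u) := Real.exp_pos _
  rw [abs_sub_comm, abs_of_nonneg (by linarith)]
  exact le_min (by linarith) (by linarith)

lemma aux_intA {γ : ℝ} (hγ0 : 0 < γ) (hγ1 : γ < 1) {x : ℝ} (hx : 0 ≤ x) :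
    IntegrableOn (fun t : ℝ => (Real.exp (-(x * t)) - 1) * t ^ (-1 - γ)) (Ioi 0) := by
  have hmeas : Measurable fun t : ℝ => (Real.exp (-(x * t)) - 1) * t ^ (-1 - γ) := by fun_prop
  have h1 : IntegrableOn (fun t : ℝ => (Real.exp (-(x * t)) - 1) * t ^ (-1 - γ)) (Ioc 0 1) := by
    have hg : IntegrableOn (fun t : ℝ => x * t ^ (-γ)) (Ioc 0 1) := by
      have := intervalIntegral.intervalIntegrable_rpow' (a := 0) (b := 1)
        (r := -γ) (by linarith)
      rw [intervalIntegrable_iff_integrableOn_Ioc_of_le (by norm_num)] at this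
      exact this.const_mul x
    refine Integrable.mono' hg hmeas.aestronglyMeasurable ?_
    filter_upwards [ae_restrict_mem measurableSet_Ioc] with t ht
    have ht0 : 0 < t := ht.1
    have hb := aux_exp_bound (u := x * t) (by positivity)
    have hp : (0:ℝ) ≤ t ^ (-1 - γ) := Real.rpow_nonneg ht0.le _
    calc ‖(Real.exp (-(x * t)) - 1) * t ^ (-1 - γ)‖
        = |Real.exp (-(x * t)) - 1| * t ^ (-1 - γ) := by
          rw [norm_mul, Real.norm_eq_abs, Real.norm_eq_abs, abs_of_nonneg hp]
      _ ≤ (x * t) * t ^ (-1 - γ) := by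
          exact mul_le_mul_of_nonneg_right ((hb.trans (min_le_left _ _))) hp
      _ = x * t ^ (-γ) := by
          rw [mul_assoc]
          congr 1
          rw [show t * t ^ (-1 - γ) = t ^ (1:ℝ) * t ^ (-1 - γ) by rw [Real.rpow_one],
            ← Real.rpow_add ht0]
          norm_num
          congr 1
          ring
  have h2 : IntegrableOn (fun t : ℝ => (Real.exp (-(x * t)) - 1) * t ^ (-1 - γ)) (Ioi 1) := by
    have hg : IntegrableOn (fun t : ℝ => t ^ (-1 - γ)) (Ioi 1) :=
      integrableOn_Ioi_rpow_of_lt (by linarith) one_pos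
    refine Integrable.mono' hg hmeas.aestronglyMeasurable ?_
    filter_upwards [ae_restrict_mem measurableSet_Ioi] with t ht
    have ht0 : (0:ℝ) < t := lt_trans one_pos ht
    have hb := aux_exp_bound (u := x * t) (by positivity)
    have hp : (0:ℝ) ≤ t ^ (-1 - γ) := Real.rpow_nonneg ht0.le _
    calc ‖(Real.exp (-(x * t)) - 1) * t ^ (-1 - γ)‖
        = |Real.exp (-(x * t)) - 1| * t ^ (-1 - γ) := by
          rw [norm_mul, Real.norm_eq_abs, Real.norm_eq_abs, abs_of_nonneg hp]
      _ ≤ 1 * t ^ (-1 - γ) :=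
          mul_le_mul_of_nonneg_right (hb.trans (min_le_right _ _)) hp
      _ = t ^ (-1 - γ) := one_mul _
  have := h1.union h2
  rwa [Ioc_union_Ioi_eq_Ioi (by norm_num : (0:ℝ) ≤ 1)] at this

lemma aux_int_exp_rpow {γ : ℝ} (hγ0 : 0 < γ) (hγ1 : γ < 1) {x : ℝ} (hx : 0 < x) :
    IntegrableOn (fun t : ℝ => Real.exp (-(x * t)) * t ^ (-γ)) (Ioi 0) := by
  have h := integrableOn_rpow_mul_exp_neg_mul_rpow (s := -γ) (p := 1) (b := x)
    (by linarith) zero_lt_one hx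
  refine h.congr_fun (fun t ht => ?_) measurableSet_Ioi
  beta_reduce
  rw [Real.rpow_one]
  ring_nf

lemma aux_J_eq {γ : ℝ} (hγ0 : 0 < γ) (hγ1 : γ < 1) {x : ℝ} (hx : 0 < x) :
    ∫ t in Ioi (0:ℝ), (Real.exp (-(x * t)) - 1) * t ^ (-1 - γ)
      = Real.Gamma (-γ) * x ^ γ := by
  set φ : ℝ → ℝ := fun t => -(1 / γ) * ((Real.exp (-(x * t)) - 1) * t ^ (-γ)) with hφ
  set φ' : ℝ → ℝ := fun t =>
    (x / γ) * (Real.exp (-(x * t)) * t ^ (-γ)) + (Real.exp (-(x * t)) - 1) * t ^ (-1 - γ)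
    with hφ'
  -- derivative
  have hderiv : ∀ t ∈ Ioi (0:ℝ), HasDerivAt φ (φ' t) t := by
    intro t ht
    have h1 : HasDerivAt (fun t : ℝ => Real.exp (-(x * t)) - 1)
        (-x * Real.exp (-(x * t))) t := by
      have hinner : HasDerivAt (fun t : ℝ => -(x * t)) (-x) t := by
        simpa using ((hasDerivAt_id t).const_mul (-x))
      simpa [mul_comm] using (hinner.exp.sub_const 1)
    have h2 : HasDerivAt (fun t : ℝ => t ^ (-γ)) (-γ * t ^ (-γ - 1)) t :=
      Real.hasDerivAt_rpow_const (Or.inl (ne_of_gt ht))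
    have := ((h1.mul h2).const_mul (-(1 / γ)))
    refine this.congr_deriv ?_
    rw [hφ']
    have hexp : t ^ (-γ - 1) = t ^ (-1 - γ) := by congr 1; ring
    rw [hexp]
    field_simp
    ring
  -- continuity at 0
  have hcont : ContinuousWithinAt φ (Ici (0:ℝ)) 0 := by
    have hφ0 : φ 0 = 0 := by simp [hφ]
    rw [ContinuousWithinAt, hφ0]
    apply squeeze_zero_norm' (a := fun t => (x / γ) * t ^ (1 - γ))
    · filter_upwards [self_mem_nhdsWithin] with t ht
      have ht0 : (0:ℝ) ≤ t := ht
      rcases eq_or_lt_of_le ht0 with h | h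
      · simp [hφ, ← h, Real.zero_rpow (by linarith : 1 - γ ≠ 0)]
      · have hb := (aux_exp_bound (u := x * t) (by positivity)).trans (min_le_left _ _)
        have hp : (0:ℝ) ≤ t ^ (-γ) := Real.rpow_nonneg ht0 _
        have : ‖φ t‖ = (1 / γ) * (|Real.exp (-(x * t)) - 1| * t ^ (-γ)) := by
          rw [hφ]
          rw [norm_mul, norm_mul, Real.norm_eq_abs, Real.norm_eq_abs, Real.norm_eq_abs,
            abs_of_nonneg hp, abs_neg, abs_of_nonneg (by positivity : (0:ℝ) ≤ 1/γ)]
        rw [this]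
        calc (1 / γ) * (|Real.exp (-(x * t)) - 1| * t ^ (-γ))
            ≤ (1 / γ) * ((x * t) * t ^ (-γ)) := by
              apply mul_le_mul_of_nonneg_left (mul_le_mul_of_nonneg_right hb hp)
              positivity
          _ = (x / γ) * t ^ (1 - γ) := by
              have : t ^ (1 - γ) = t * t ^ (-γ) := by
                rw [show t * t ^ (-γ) = t ^ (1:ℝ) * t ^ (-γ) by rw [Real.rpow_one],
                  ← Real.rpow_add h, show (1:ℝ) + -γ = 1 - γ by ring]
              rw [this]
              ring
    · have h0 : Continuous fun t : ℝ => t ^ (1 - γ) :=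
        Real.continuous_rpow_const (by linarith)
      have := (h0.tendsto 0).const_mul (x / γ)
      rw [Real.zero_rpow (by linarith : 1 - γ ≠ 0), mul_zero] at this
      exact this.mono_left nhdsWithin_le_nhds
  -- tendsto at top
  have htop : Filter.Tendsto φ Filter.atTop (nhds 0) := by
    have h1 : Filter.Tendsto (fun t : ℝ => (Real.exp (-(x * t)) - 1) * t ^ (-γ))
        Filter.atTop (nhds 0) := by
      apply squeeze_zero_norm' (a := fun t : ℝ => t ^ (-γ))
      · filter_upwards [Filter.eventually_ge_atTop (0:ℝ)] with t ht
        have hp : (0:ℝ) ≤ t ^ (-γ) := Real.rpow_nonneg ht _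
        have hb := (aux_exp_bound (u := x * t) (by positivity)).trans (min_le_right _ _)
        rw [norm_mul, Real.norm_eq_abs, Real.norm_eq_abs, abs_of_nonneg hp]
        nlinarith
      · exact tendsto_rpow_neg_atTop hγ0
    have h2 := h1.const_mul (-(1 / γ))
    rw [mul_zero] at h2
    exact h2
  -- integrability of φ'
  have hint1 : IntegrableOn (fun t : ℝ => (x / γ) * (Real.exp (-(x * t)) * t ^ (-γ)))
      (Ioi 0) := (aux_int_exp_rpow hγ0 hγ1 hx).const_mul _
  have hint2 := aux_intA hγ0 hγ1 hx.le
  have hint : IntegrableOn φ' (Ioi 0) := hint1.add hint2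
  have key := integral_Ioi_of_hasDerivAt_of_tendsto hcont hderiv hint htop
  have hφ0 : φ 0 = 0 := by simp [hφ]
  rw [hφ0, sub_zero] at key
  have hsplit : ∫ t in Ioi (0:ℝ), φ' t
      = ((x / γ) * ∫ t in Ioi (0:ℝ), Real.exp (-(x * t)) * t ^ (-γ))
        + ∫ t in Ioi (0:ℝ), (Real.exp (-(x * t)) - 1) * t ^ (-1 - γ) := by
    rw [hφ']
    rw [integral_add hint1 hint2, integral_const_mul]
  rw [hsplit] at key
  have hgamma : ∫ t in Ioi (0:ℝ), Real.exp (-(x * t)) * t ^ (-γ)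
      = (1 / x) ^ (1 - γ) * Real.Gamma (1 - γ) := by
    rw [← Real.integral_rpow_mul_exp_neg_mul_Ioi (by linarith : (0:ℝ) < 1 - γ) hx]
    refine setIntegral_congr_fun measurableSet_Ioi (fun t ht => ?_)
    rw [show (1 - γ) - 1 = -γ by ring, mul_comm]
  rw [hgamma] at key
  have hG : Real.Gamma (1 - γ) = -γ * Real.Gamma (-γ) := by
    have := Real.Gamma_add_one (s := -γ) (by linarith)
    rw [show -γ + 1 = 1 - γ by ring] at this
    exact this
  have hone : (1 / x) ^ (1 - γ) = x ^ (γ - 1) := by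
    rw [one_div, ← Real.rpow_neg_one x, ← Real.rpow_mul hx.le]
    congr 1
    ring
  have hxx : x * x ^ (γ - 1) = x ^ γ := by
    rw [show x * x ^ (γ - 1) = x ^ (1:ℝ) * x ^ (γ - 1) by rw [Real.rpow_one],
      ← Real.rpow_add hx]
    congr 1
    ring
  have e1 : (x / γ) * ((1 / x) ^ (1 - γ) * Real.Gamma (1 - γ))
      = -(Real.Gamma (-γ) * x ^ γ) := by
    rw [hone, hG, ← hxx]
    field_simp
  rw [e1] at key
  linarith

lemma aux_int_pow {γ a : ℝ} (hγ0 : 0 < γ) (ha : 0 < a) :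
    ∫ t in Ioi a, t ^ (-1 - γ) = a ^ (-γ) / γ := by
  rw [integral_Ioi_rpow_of_lt (by linarith) ha, show (-1 - γ) + 1 = -γ by ring]
  rw [div_eq_div_iff (by linarith) (ne_of_gt hγ0)]
  ring

lemma aux_g_est {γ a : ℝ} (hγ0 : 0 < γ) (hγ1 : γ < 1) (ha : 0 < a) {x : ℝ} (hx : 0 < x) :
    |(∫ t in Ioi a, Real.exp (-(x * t)) * t ^ (-1 - γ))
        - (a ^ (-γ) / γ + Real.Gamma (-γ) * x ^ γ)|
      ≤ (a ^ (1 - γ) / (1 - γ)) * x := by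
  have hIpow : IntegrableOn (fun t : ℝ => t ^ (-1 - γ)) (Ioi a) :=
    integrableOn_Ioi_rpow_of_lt (by linarith) ha
  have hIA0 := aux_intA hγ0 hγ1 hx.le
  have hIAa : IntegrableOn (fun t : ℝ => (Real.exp (-(x * t)) - 1) * t ^ (-1 - γ)) (Ioi a) :=
    hIA0.mono_set (Ioi_subset_Ioi ha.le)
  have hIAc : IntegrableOn (fun t : ℝ => (Real.exp (-(x * t)) - 1) * t ^ (-1 - γ)) (Ioc 0 a) :=
    hIA0.mono_set Ioc_subset_Ioi_self
  -- split the exp integral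
  have hsplit1 : ∫ t in Ioi a, Real.exp (-(x * t)) * t ^ (-1 - γ)
      = (∫ t in Ioi a, (Real.exp (-(x * t)) - 1) * t ^ (-1 - γ)) + a ^ (-γ) / γ := by
    rw [← aux_int_pow hγ0 ha, ← integral_add hIAa hIpow]
    refine setIntegral_congr_fun measurableSet_Ioi (fun t ht => ?_)
    ring
  -- split Ioi 0 into Ioc 0 a and Ioi a
  have hsplit2 : (∫ t in Ioi (0:ℝ), (Real.exp (-(x * t)) - 1) * t ^ (-1 - γ))
      = (∫ t in Ioc 0 a, (Real.exp (-(x * t)) - 1) * t ^ (-1 - γ))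
        + ∫ t in Ioi a, (Real.exp (-(x * t)) - 1) * t ^ (-1 - γ) := by
    rw [← setIntegral_union (Ioc_disjoint_Ioi le_rfl) measurableSet_Ioi hIAc hIAa,
      Ioc_union_Ioi_eq_Ioi ha.le]
  rw [aux_J_eq hγ0 hγ1 hx] at hsplit2
  have hkey : (∫ t in Ioi a, Real.exp (-(x * t)) * t ^ (-1 - γ))
      - (a ^ (-γ) / γ + Real.Gamma (-γ) * x ^ γ)
      = -(∫ t in Ioc 0 a, (Real.exp (-(x * t)) - 1) * t ^ (-1 - γ)) := by
    rw [hsplit1]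
    linarith
  rw [hkey, abs_neg]
  -- bound the remainder
  have hbd : IntegrableOn (fun t : ℝ => x * t ^ (-γ)) (Ioc 0 a) := by
    have := intervalIntegral.intervalIntegrable_rpow' (a := 0) (b := a)
      (r := -γ) (by linarith)
    rw [intervalIntegrable_iff_integrableOn_Ioc_of_le ha.le] at this
    exact this.const_mul x
  have habs : |∫ t in Ioc 0 a, (Real.exp (-(x * t)) - 1) * t ^ (-1 - γ)|
      ≤ ∫ t in Ioc 0 a, x * t ^ (-γ) := by
    rw [← Real.norm_eq_abs]
    refine norm_integral_le_of_norm_le hbd ?_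
    filter_upwards [ae_restrict_mem measurableSet_Ioc] with t ht
    have ht0 : 0 < t := ht.1
    have hb := (aux_exp_bound (u := x * t) (by positivity)).trans (min_le_left _ _)
    have hp : (0:ℝ) ≤ t ^ (-1 - γ) := Real.rpow_nonneg ht0.le _
    calc ‖(Real.exp (-(x * t)) - 1) * t ^ (-1 - γ)‖
        = |Real.exp (-(x * t)) - 1| * t ^ (-1 - γ) := by
          rw [norm_mul, Real.norm_eq_abs, Real.norm_eq_abs, abs_of_nonneg hp]
      _ ≤ (x * t) * t ^ (-1 - γ) := mul_le_mul_of_nonneg_right hb hp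
      _ = x * t ^ (-γ) := by
          rw [mul_assoc]
          congr 1
          rw [show t * t ^ (-1 - γ) = t ^ (1:ℝ) * t ^ (-1 - γ) by rw [Real.rpow_one],
            ← Real.rpow_add ht0, show (1:ℝ) + (-1 - γ) = -γ by ring]
  have hval : ∫ t in Ioc 0 a, x * t ^ (-γ) = (a ^ (1 - γ) / (1 - γ)) * x := by
    rw [integral_const_mul]
    have : ∫ t in Ioc 0 a, t ^ (-γ) = ∫ t in (0:ℝ)..a, t ^ (-γ) :=
      (intervalIntegral.integral_of_le ha.le).symm
    rw [this, integral_rpow (Or.inl (by linarith))]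
    rw [Real.zero_rpow (by linarith : -γ + 1 ≠ 0), show -γ + 1 = 1 - γ by ring]
    ring
  rw [hval] at habs
  exact habs

lemma aux_Fint {σ b C₁ t₀ : ℝ} (hσ : 2 < σ) (hb : 0 < b) {F : ℝ → ℂ}
    (hFmeas : Measurable F) (hFloc : LocallyIntegrableOn F (Ici b))
    (hF : ∀ t : ℝ, t₀ ≤ t → ‖F t‖ ≤ C₁ * t ^ (-σ))
    {p : ℝ} (hp0 : 0 ≤ p) (hp1 : p ≤ 1) :
    IntegrableOn (fun t : ℝ => F t * ((t ^ p : ℝ) : ℂ)) (Ioi b) := by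
  set T : ℝ := max b (max t₀ 1) with hT
  have hbT : b ≤ T := le_max_left _ _
  have ht₀T : t₀ ≤ T := le_trans (le_max_left _ _) (le_max_right _ _)
  have h1T : (1:ℝ) ≤ T := le_trans (le_max_right _ _) (le_max_right _ _)
  have hT0 : (0:ℝ) < T := lt_of_lt_of_le one_pos h1T
  have hmeas : Measurable fun t : ℝ => F t * ((t ^ p : ℝ) : ℂ) := by fun_prop
  have h1 : IntegrableOn (fun t : ℝ => F t * ((t ^ p : ℝ) : ℂ)) (Ioc b T) := by
    have hFI : IntegrableOn F (Icc b T) :=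
      hFloc.integrableOn_compact_subset Icc_subset_Ici_self isCompact_Icc
    have hg : IntegrableOn (fun t => T ^ p * ‖F t‖) (Ioc b T) :=
      ((hFI.mono_set Ioc_subset_Icc_self).norm.const_mul _)
    refine Integrable.mono' hg hmeas.aestronglyMeasurable ?_
    filter_upwards [ae_restrict_mem measurableSet_Ioc] with t ht
    have ht0 : 0 < t := lt_of_le_of_lt hb.le ht.1
    rw [norm_mul, Complex.norm_real, Real.norm_eq_abs,
      abs_of_nonneg (Real.rpow_nonneg ht0.le _)]
    rw [mul_comm (T ^ p)]
    exact mul_le_mul_of_nonneg_left (Real.rpow_le_rpow ht0.le ht.2 hp0) (norm_nonneg _)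
  have h2 : IntegrableOn (fun t : ℝ => F t * ((t ^ p : ℝ) : ℂ)) (Ioi T) := by
    have hg : IntegrableOn (fun t : ℝ => C₁ * t ^ (p - σ)) (Ioi T) :=
      (integrableOn_Ioi_rpow_of_lt (by linarith) hT0).const_mul _
    refine Integrable.mono' hg hmeas.aestronglyMeasurable ?_
    filter_upwards [ae_restrict_mem measurableSet_Ioi] with t ht
    have ht0 : 0 < t := lt_of_lt_of_le hT0 ht.le
    have hFb := hF t (le_trans ht₀T ht.le)
    rw [norm_mul, Complex.norm_real, Real.norm_eq_abs,
      abs_of_nonneg (Real.rpow_nonneg ht0.le _)]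
    calc ‖F t‖ * t ^ p ≤ (C₁ * t ^ (-σ)) * t ^ p :=
          mul_le_mul_of_nonneg_right hFb (Real.rpow_nonneg ht0.le _)
      _ = C₁ * t ^ (p - σ) := by
          rw [mul_assoc, ← Real.rpow_add ht0, show -σ + p = p - σ by ring]
  have := h1.union h2
  rwa [Ioc_union_Ioi_eq_Ioi hbT] at this

/-- Step 4 of Appendix B: for `0 < γ < 1`, `σ > 2`, `a, b > 0` and `F`
measurable, locally integrable with `F(t) = O(t^{−σ})` as `t → +∞`, as `ε → 0+`,
`∫_a^∞∫_b^∞ e^{−εt₁t₂} F(t₂) t₁^{−1−γ} dt₁ dt₂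
  = (a^{−γ}/γ) ∫_b^∞ F + Γ(−γ)(∫_b^∞ F(t) t^γ dt) ε^γ + O(ε)`. -/
theorem asympt_power_weight (γ σ a b : ℝ) (hγ0 : 0 < γ) (hγ1 : γ < 1) (hσ : 2 < σ)
    (ha : 0 < a) (hb : 0 < b) (F : ℝ → ℂ) (hFmeas : Measurable F)
    (hFloc : MeasureTheory.LocallyIntegrableOn F (Set.Ici b))
    (C₁ t₀ : ℝ) (hF : ∀ t : ℝ, t₀ ≤ t → ‖F t‖ ≤ C₁ * t ^ (-σ)) :
    ∃ C ε₀ : ℝ, 0 < ε₀ ∧ ∀ ε : ℝ, 0 < ε → ε ≤ ε₀ →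
      ‖(∫ t₁ in Set.Ioi a, ∫ t₂ in Set.Ioi b,
            (Real.exp (-(ε * t₁ * t₂)) : ℂ) * F t₂ * ((t₁ ^ (-1 - γ) : ℝ) : ℂ))
          - ((a ^ (-γ) / γ : ℝ) : ℂ) * (∫ t in Set.Ioi b, F t)
          - ((Real.Gamma (-γ) : ℝ) : ℂ) *
              (∫ t in Set.Ioi b, F t * ((t ^ γ : ℝ) : ℂ)) * ((ε ^ γ : ℝ) : ℂ)‖
        ≤ C * ε := by
  have hIF : IntegrableOn F (Ioi b) := by
    have := aux_Fint hσ hb hFmeas hFloc hF (p := 0) le_rfl zero_le_one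
    refine this.congr_fun (fun t _ => ?_) measurableSet_Ioi
    simp [Real.rpow_zero]
  have hIFγ : IntegrableOn (fun t : ℝ => F t * ((t ^ γ : ℝ) : ℂ)) (Ioi b) :=
    aux_Fint hσ hb hFmeas hFloc hF hγ0.le hγ1.le
  have hIFt : IntegrableOn (fun t : ℝ => ‖F t‖ * t) (Ioi b) := by
    have : IntegrableOn (fun t : ℝ => ‖F t * ((t ^ (1:ℝ) : ℝ) : ℂ)‖) (Ioi b) :=
      (aux_Fint hσ hb hFmeas hFloc hF (p := 1) zero_le_one le_rfl).norm
    refine this.congr_fun (fun t ht => ?_) measurableSet_Ioi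
    have ht0 : 0 < t := lt_trans hb ht
    beta_reduce
    rw [norm_mul, Complex.norm_real, Real.rpow_one, Real.norm_eq_abs, abs_of_nonneg ht0.le]
  set K : ℝ := a ^ (1 - γ) / (1 - γ) with hK
  refine ⟨K * ∫ t in Ioi b, ‖F t‖ * t, 1, one_pos, fun ε hε _ => ?_⟩
  set g : ℝ → ℝ := fun x => ∫ t in Ioi a, Real.exp (-(x * t)) * t ^ (-1 - γ) with hg
  -- product integrability
  have hprpow : IntegrableOn (fun t : ℝ => t ^ (-1 - γ)) (Ioi a) :=
    integrableOn_Ioi_rpow_of_lt (by linarith) ha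
  have hGint : Integrable
      (Function.uncurry fun t₁ t₂ : ℝ =>
        ((Real.exp (-(ε * t₁ * t₂)) : ℝ) : ℂ) * F t₂ * ((t₁ ^ (-1 - γ) : ℝ) : ℂ))
      ((volume.restrict (Ioi a)).prod (volume.restrict (Ioi b))) := by
    have hbound : Integrable (fun z : ℝ × ℝ => z.1 ^ (-1 - γ) * ‖F z.2‖)
        ((volume.restrict (Ioi a)).prod (volume.restrict (Ioi b))) :=
      Integrable.mul_prod hprpow hIF.norm
    have hmeas : Measurable (Function.uncurry fun t₁ t₂ : ℝ =>
        ((Real.exp (-(ε * t₁ * t₂)) : ℝ) : ℂ) * F t₂ * ((t₁ ^ (-1 - γ) : ℝ) : ℂ)) := by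
      apply Measurable.mul
      apply Measurable.mul
      · fun_prop
      · fun_prop
      · fun_prop
    refine Integrable.mono' hbound hmeas.aestronglyMeasurable ?_
    rw [Measure.prod_restrict]
    filter_upwards [ae_restrict_mem (measurableSet_Ioi.prod measurableSet_Ioi)] with z hz
    have hz1 : 0 < z.1 := lt_trans ha hz.1
    have hz2 : 0 < z.2 := lt_trans hb hz.2
    have hexp : Real.exp (-(ε * z.1 * z.2)) ≤ 1 := by
      rw [Real.exp_le_one_iff]
      nlinarith [mul_pos (mul_pos hε hz1) hz2]
    have hp : (0:ℝ) ≤ z.1 ^ (-1 - γ) := Real.rpow_nonneg hz1.le _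
    calc ‖Function.uncurry (fun t₁ t₂ : ℝ =>
            ((Real.exp (-(ε * t₁ * t₂)) : ℝ) : ℂ) * F t₂ * ((t₁ ^ (-1 - γ) : ℝ) : ℂ)) z‖
        = Real.exp (-(ε * z.1 * z.2)) * ‖F z.2‖ * z.1 ^ (-1 - γ) := by
          rw [Function.uncurry]
          rw [norm_mul, norm_mul, Complex.norm_real, Complex.norm_real, Real.norm_eq_abs,
            Real.norm_eq_abs, abs_of_nonneg (Real.exp_pos _).le, abs_of_nonneg hp]
      _ ≤ 1 * ‖F z.2‖ * z.1 ^ (-1 - γ) := by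
          apply mul_le_mul_of_nonneg_right (mul_le_mul_of_nonneg_right hexp (norm_nonneg _)) hp
      _ = z.1 ^ (-1 - γ) * ‖F z.2‖ := by ring
  -- inner integral identity
  have step2 : ∀ t₂ : ℝ,
      (∫ t₁ in Ioi a, ((Real.exp (-(ε * t₁ * t₂)) : ℝ) : ℂ) * F t₂ * ((t₁ ^ (-1 - γ) : ℝ) : ℂ))
        = F t₂ * ((g (ε * t₂) : ℝ) : ℂ) := by
    intro t₂
    have h1 : ∀ t₁ : ℝ,
        ((Real.exp (-(ε * t₁ * t₂)) : ℝ) : ℂ) * F t₂ * ((t₁ ^ (-1 - γ) : ℝ) : ℂ)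
          = F t₂ * ((Real.exp (-(ε * t₂ * t₁)) * t₁ ^ (-1 - γ) : ℝ) : ℂ) := by
      intro t₁
      rw [show ε * t₁ * t₂ = ε * t₂ * t₁ by ring]
      push_cast
      ring
    simp_rw [h1]
    rw [integral_const_mul]
    simp only [hg]
    congr 1
    exact integral_ofReal
  set inner : ℝ → ℂ := fun t₂ => F t₂ * ((g (ε * t₂) : ℝ) : ℂ) with hinner
  have hswap : (∫ t₁ in Ioi a, ∫ t₂ in Ioi b,
        ((Real.exp (-(ε * t₁ * t₂)) : ℝ) : ℂ) * F t₂ * ((t₁ ^ (-1 - γ) : ℝ) : ℂ))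
      = ∫ t₂ in Ioi b, inner t₂ := by
    rw [integral_integral_swap hGint]
    exact setIntegral_congr_fun measurableSet_Ioi fun t₂ _ => step2 t₂
  have hInn : Integrable inner (volume.restrict (Ioi b)) := by
    have h := hGint.integral_prod_right
    refine h.congr (Filter.Eventually.of_forall fun t₂ => ?_)
    simpa [Function.uncurry] using step2 t₂
  set k : ℝ → ℂ := fun t₂ => ((a ^ (-γ) / γ : ℝ) : ℂ) * F t₂
      + ((Real.Gamma (-γ) : ℝ) : ℂ) * (F t₂ * ((t₂ ^ γ : ℝ) : ℂ)) * ((ε ^ γ : ℝ) : ℂ)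
      with hk
  have hk1 : Integrable (fun t₂ : ℝ => ((a ^ (-γ) / γ : ℝ) : ℂ) * F t₂)
      (volume.restrict (Ioi b)) := hIF.const_mul _
  have hk2 : Integrable (fun t₂ : ℝ =>
      ((Real.Gamma (-γ) : ℝ) : ℂ) * (F t₂ * ((t₂ ^ γ : ℝ) : ℂ)) * ((ε ^ γ : ℝ) : ℂ))
      (volume.restrict (Ioi b)) := (hIFγ.const_mul _).mul_const _
  have hkint : Integrable k (volume.restrict (Ioi b)) := hk1.add hk2
  have hks : ∫ t₂ in Ioi b, k t₂
      = ((a ^ (-γ) / γ : ℝ) : ℂ) * (∫ t in Ioi b, F t)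
        + ((Real.Gamma (-γ) : ℝ) : ℂ) *
            (∫ t in Ioi b, F t * ((t ^ γ : ℝ) : ℂ)) * ((ε ^ γ : ℝ) : ℂ) := by
    rw [hk, integral_add hk1 hk2, integral_const_mul, integral_mul_const, integral_const_mul]
  have hD : (∫ t₁ in Ioi a, ∫ t₂ in Ioi b,
        ((Real.exp (-(ε * t₁ * t₂)) : ℝ) : ℂ) * F t₂ * ((t₁ ^ (-1 - γ) : ℝ) : ℂ))
      - ((a ^ (-γ) / γ : ℝ) : ℂ) * (∫ t in Ioi b, F t)
      - ((Real.Gamma (-γ) : ℝ) : ℂ) *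
          (∫ t in Ioi b, F t * ((t ^ γ : ℝ) : ℂ)) * ((ε ^ γ : ℝ) : ℂ)
      = ∫ t₂ in Ioi b, (inner t₂ - k t₂) := by
    rw [hswap, integral_sub hInn hkint, hks]
    ring
  rw [hD]
  have hbd : Integrable (fun t : ℝ => K * ε * (‖F t‖ * t)) (volume.restrict (Ioi b)) :=
    hIFt.const_mul _
  have hnorm : ‖∫ t₂ in Ioi b, (inner t₂ - k t₂)‖ ≤ ∫ t in Ioi b, K * ε * (‖F t‖ * t) := by
    refine norm_integral_le_of_norm_le hbd ?_
    filter_upwards [ae_restrict_mem measurableSet_Ioi] with t ht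
    have ht0 : 0 < t := lt_trans hb ht
    have hx : 0 < ε * t := by positivity
    have hkt : k t = F t * ((a ^ (-γ) / γ + Real.Gamma (-γ) * (ε * t) ^ γ : ℝ) : ℂ) := by
      rw [hk, Real.mul_rpow hε.le ht0.le]
      push_cast
      ring
    have hdiff : inner t - k t
        = F t * ((g (ε * t) - (a ^ (-γ) / γ + Real.Gamma (-γ) * (ε * t) ^ γ) : ℝ) : ℂ) := by
      rw [hinner, hkt]
      push_cast
      ring
    rw [hdiff, norm_mul, Complex.norm_real, Real.norm_eq_abs]
    have hest := aux_g_est hγ0 hγ1 ha hx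
    calc ‖F t‖ * |g (ε * t) - (a ^ (-γ) / γ + Real.Gamma (-γ) * (ε * t) ^ γ)|
        ≤ ‖F t‖ * (K * (ε * t)) := mul_le_mul_of_nonneg_left hest (norm_nonneg _)
      _ = K * ε * (‖F t‖ * t) := by ring
  rw [integral_const_mul] at hnorm
  calc ‖∫ t₂ in Ioi b, (inner t₂ - k t₂)‖ ≤ K * ε * ∫ t in Ioi b, ‖F t‖ * t := hnorm
    _ = (K * ∫ t in Ioi b, ‖F t‖ * t) * ε := by ring
end
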